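/- arXiv:1304.0874 — 10 statements merged into one kernel-verified Lean document; each statement's English description precedes it below -/
import Mathlib

section
/- Let f(X) = a_0 + a_1 X + ... + a_n X^n be a polynomial with integer coefficients and p a prime. If ν_p(a_i)/i > ν_p(a_n)/n for all i = 1, ..., n-1, ν_p(a_0) = 0, and gcd(ν_p(a_n), n) = 1, then f is irreducible over the rationals. -/
open Polynomial Finset

private def wgt (p n μ : ℕ) (G : Polynomial ℤ) (i : ℕ) : ℤ :=
  (n : ℤ) * padicValInt p (G.coeff i) - (μ : ℤ) * i

private lemma exists_min_wgt (p n μ : ℕ) {G : Polynomial ℤ} (hG : G ≠ 0) :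
    ∃ j0 ∈ G.support, (∀ j ∈ G.support, wgt p n μ G j0 ≤ wgt p n μ G j) ∧
      ∀ j ∈ G.support, j < j0 → wgt p n μ G j0 < wgt p n μ G j := by
  classical
  have hs : G.support.Nonempty := Polynomial.nonempty_support_iff.mpr hG
  set W := (G.support.image (wgt p n μ G)).min' (hs.image _) with hW
  have hmem : W ∈ G.support.image (wgt p n μ G) := Finset.min'_mem _ _
  obtain ⟨j1, hj1, hj1W⟩ := Finset.mem_image.mp hmem
  set T := G.support.filter (fun j => wgt p n μ G j = W) with hT
  have hTne : T.Nonempty := ⟨j1, Finset.mem_filter.mpr ⟨hj1, hj1W⟩⟩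
  have hmemT := Finset.mem_filter.mp (Finset.min'_mem T hTne)
  refine ⟨T.min' hTne, hmemT.1, ?_, ?_⟩
  · intro j hj
    rw [hmemT.2]
    exact Finset.min'_le _ _ (Finset.mem_image_of_mem _ hj)
  · intro j hj hlt
    have hge : W ≤ wgt p n μ G j := Finset.min'_le _ _ (Finset.mem_image_of_mem _ hj)
    rcases eq_or_lt_of_le hge with heq | hlt2
    · exfalso
      have : T.min' hTne ≤ j := Finset.min'_le _ _ (Finset.mem_filter.mpr ⟨hj, heq.symm⟩)
      omega
    · rw [hmemT.2]; exact hlt2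

private lemma attained (p n μ : ℕ) [Fact p.Prime] (hn : 0 < n) {g h : Polynomial ℤ}
    {j0 k0 : ℕ} (hj0 : j0 ∈ g.support) (hk0 : k0 ∈ h.support)
    (hming : ∀ j ∈ g.support, wgt p n μ g j0 ≤ wgt p n μ g j)
    (hminh : ∀ k ∈ h.support, wgt p n μ h k0 ≤ wgt p n μ h k)
    (hsg : ∀ j ∈ g.support, j < j0 → wgt p n μ g j0 < wgt p n μ g j)
    (hsh : ∀ k ∈ h.support, k < k0 → wgt p n μ h k0 < wgt p n μ h k) :
    (g * h).coeff (j0 + k0) ≠ 0 ∧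
      wgt p n μ (g * h) (j0 + k0) = wgt p n μ g j0 + wgt p n μ h k0 := by
  classical
  have hb0 : g.coeff j0 ≠ 0 := Polynomial.mem_support_iff.mp hj0
  have hc0 : h.coeff k0 ≠ 0 := Polynomial.mem_support_iff.mp hk0
  set V : ℕ := padicValInt p (g.coeff j0) + padicValInt p (h.coeff k0) with hV
  -- every other term is divisible by p^(V+1)
  have claim1 : ∀ j k : ℕ, j + k = j0 + k0 → (j, k) ≠ (j0, k0) →
      (p : ℤ) ^ (V + 1) ∣ g.coeff j * h.coeff k := by
    intro j k hjk hne
    by_cases hbj : g.coeff j = 0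
    · simp [hbj]
    by_cases hck : h.coeff k = 0
    · simp [hck]
    have hjs : j ∈ g.support := Polynomial.mem_support_iff.mpr hbj
    have hks : k ∈ h.support := Polynomial.mem_support_iff.mpr hck
    have hjne : j ≠ j0 ∨ k ≠ k0 := by
      by_contra hcon
      push_neg at hcon
      exact hne (by rw [hcon.1, hcon.2])
    have hstrict : wgt p n μ g j0 + wgt p n μ h k0 < wgt p n μ g j + wgt p n μ h k := by
      rcases lt_trichotomy j j0 with hlt | heq | hgt
      · have h1 := hsg j hjs hlt
        have h2 := hminh k hks
        omega
      · subst heq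
        have hk' : k = k0 := by omega
        subst hk'
        rcases hjne with h' | h' <;> exact absurd rfl h'
      · have hklt : k < k0 := by omega
        have h1 := hming j hjs
        have h2 := hsh k hks hklt
        omega
    have hexp : (V : ℤ) + 1 ≤ (padicValInt p (g.coeff j) : ℤ) + padicValInt p (h.coeff k) := by
      unfold wgt at hstrict
      have hn' : (0 : ℤ) < n := by exact_mod_cast hn
      have hjkZ : (j : ℤ) + k = (j0 : ℤ) + k0 := by exact_mod_cast hjk
      have hμjk : (μ:ℤ) * j + (μ:ℤ) * k = (μ:ℤ) * j0 + (μ:ℤ) * k0 := by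
        have h' : (μ:ℤ) * ((j:ℤ) + k) = (μ:ℤ) * ((j0:ℤ) + k0) := by rw [hjkZ]
        linarith [mul_add (μ:ℤ) (j:ℤ) (k:ℤ), mul_add (μ:ℤ) (j0:ℤ) (k0:ℤ)]
      have hmul : (n:ℤ) * ((padicValInt p (g.coeff j0) : ℤ) + padicValInt p (h.coeff k0))
          < (n:ℤ) * ((padicValInt p (g.coeff j) : ℤ) + padicValInt p (h.coeff k)) := by
        linarith [mul_add (n:ℤ) ((padicValInt p (g.coeff j0)) : ℤ) ((padicValInt p (h.coeff k0)) : ℤ),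
          mul_add (n:ℤ) ((padicValInt p (g.coeff j)) : ℤ) ((padicValInt p (h.coeff k)) : ℤ)]
      have hfin := lt_of_mul_lt_mul_left hmul (le_of_lt hn')
      have hVZ : (V : ℤ) = (padicValInt p (g.coeff j0) : ℤ) + padicValInt p (h.coeff k0) := by
        rw [hV]; push_cast; ring
      omega
    have hexp' : V + 1 ≤ padicValInt p (g.coeff j) + padicValInt p (h.coeff k) := by
      exact_mod_cast hexp
    calc (p : ℤ) ^ (V + 1) ∣ (p : ℤ) ^ (padicValInt p (g.coeff j) + padicValInt p (h.coeff k)) :=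
          pow_dvd_pow _ hexp'
      _ ∣ g.coeff j * h.coeff k := by
          rw [pow_add]
          exact mul_dvd_mul (padicValInt_dvd _) (padicValInt_dvd _)
  -- the main term
  set M : ℤ := g.coeff j0 * h.coeff k0 with hM
  have hMne : M ≠ 0 := mul_ne_zero hb0 hc0
  have hvM : padicValInt p M = V := padicValInt.mul hb0 hc0
  have hMnd : ¬ (p : ℤ) ^ (V + 1) ∣ M := by
    intro hdvd
    have := ((padicValInt_dvd_iff (V + 1) M).mp hdvd).resolve_left hMne
    omega
  -- the rest of the sum
  have hsplit : (g * h).coeff (j0 + k0)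
      = M + ∑ x ∈ (antidiagonal (j0 + k0)).erase (j0, k0), g.coeff x.1 * h.coeff x.2 := by
    rw [coeff_mul]
    have hmem : ((j0, k0) : ℕ × ℕ) ∈ antidiagonal (j0 + k0) := Finset.HasAntidiagonal.mem_antidiagonal.mpr rfl
    rw [← Finset.add_sum_erase _ (fun x : ℕ × ℕ => g.coeff x.1 * h.coeff x.2) hmem]
  set R : ℤ := ∑ x ∈ (antidiagonal (j0 + k0)).erase (j0, k0), g.coeff x.1 * h.coeff x.2 with hR
  have hRdvd : (p : ℤ) ^ (V + 1) ∣ R := by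
    apply Finset.dvd_sum
    intro x hx
    have hxmem := Finset.mem_of_mem_erase hx
    have hxne := Finset.ne_of_mem_erase hx
    exact claim1 x.1 x.2 (Finset.HasAntidiagonal.mem_antidiagonal.mp hxmem) (by
      intro hcon
      exact hxne (by rw [← hcon]))
  have hsumne : M + R ≠ 0 := by
    intro hcon
    have : M = -R := by linarith
    exact hMnd (this ▸ hRdvd.neg_right)
  have hvsum : padicValInt p (M + R) = V := by
    have hge : V ≤ padicValInt p (M + R) := by
      refine ((padicValInt_dvd_iff V (M + R)).mp ?_).resolve_left hsumne
      exact dvd_add (hvM ▸ padicValInt_dvd M) ((pow_dvd_pow _ (Nat.le_succ V)).trans hRdvd)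
    have hle : padicValInt p (M + R) ≤ V := by
      by_contra hcon
      push_neg at hcon
      have hd : (p : ℤ) ^ (V + 1) ∣ M + R :=
        (pow_dvd_pow _ (by omega : V + 1 ≤ padicValInt p (M + R))).trans (padicValInt_dvd _)
      exact hMnd (by simpa using dvd_sub hd hRdvd)
    omega
  constructor
  · rw [hsplit]; exact hsumne
  · unfold wgt
    rw [hsplit, hvsum, hV]
    push_cast
    ring

theorem dumas_criterion (n : ℕ) (hn : 1 ≤ n) (a : ℕ → ℤ)
    (ha0 : a 0 ≠ 0) (han : a n ≠ 0)
    (p : ℕ) (hp : p.Prime)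
    (h1 : ∀ i, 1 ≤ i → i < n → n * padicValInt p (a i) > i * padicValInt p (a n))
    (h2 : padicValInt p (a 0) = 0)
    (h3 : Nat.gcd (padicValInt p (a n)) n = 1) :
    Irreducible ((∑ i ∈ range (n+1), C (a i) * X ^ i).map (Int.castRingHom ℚ)) := by
  classical
  haveI : Fact p.Prime := ⟨hp⟩
  set μ : ℕ := padicValInt p (a n) with hμ
  set f : Polynomial ℤ := ∑ i ∈ range (n+1), C (a i) * X ^ i with hfdef
  have hcoeff : ∀ k, f.coeff k = if k ≤ n then a k else 0 := by
    intro k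
    rw [hfdef, finset_sum_coeff]
    simp only [coeff_C_mul, coeff_X_pow, mul_ite, mul_one, mul_zero]
    rw [Finset.sum_ite_eq (range (n+1)) k a]
    simp [Nat.lt_succ_iff]
  have hfn : f.coeff n = a n := by simp [hcoeff]
  have hf0 : f.coeff 0 = a 0 := by simp [hcoeff]
  have hfne : f ≠ 0 := fun hcon => han (by rw [← hfn, hcon, coeff_zero])
  have hdeg : f.natDegree = n := by
    apply le_antisymm
    · rw [hfdef]
      apply natDegree_sum_le_of_forall_le
      intro i hi
      exact (natDegree_C_mul_X_pow_le (a i) i).trans (by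
        have := Finset.mem_range.mp hi; omega)
    · exact le_natDegree_of_ne_zero (hfn ▸ han)
  -- all weights of f are nonneg
  have hwf : ∀ i ∈ f.support, 0 ≤ wgt p n μ f i := by
    intro i hi
    have hile : i ≤ n := (le_natDegree_of_mem_supp i hi).trans hdeg.le
    have hine : f.coeff i ≠ 0 := Polynomial.mem_support_iff.mp hi
    unfold wgt
    rcases Nat.eq_zero_or_pos i with h0 | hpos
    · subst h0; rw [hf0, h2]; simp
    rcases eq_or_lt_of_le hile with heq | hlt
    · subst heq; rw [hfn, ← hμ]; ring_nf; omega
    · have := h1 i hpos hlt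
      rw [hcoeff i, if_pos hile]
      have : (i : ℤ) * μ < (n : ℤ) * padicValInt p (a i) := by exact_mod_cast this
      linarith
  -- main factorization lemma
  have main : ∀ g h : Polynomial ℤ, g ≠ 0 → h ≠ 0 → g * h = f →
      g.natDegree = 0 ∨ h.natDegree = 0 := by
    intro g h hg hh hgh
    obtain ⟨j0, hj0, hming, hsg⟩ := exists_min_wgt p n μ hg
    obtain ⟨k0, hk0, hminh, hsh⟩ := exists_min_wgt p n μ hh
    obtain ⟨hne, heq⟩ := attained p n μ (by omega) hj0 hk0 hming hminh hsg hsh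
    rw [hgh] at hne heq
    have hiw : 0 ≤ wgt p n μ f (j0 + k0) := hwf _ (Polynomial.mem_support_iff.mpr hne)
    -- coefficient 0 facts
    have hb0c0 : g.coeff 0 * h.coeff 0 = a 0 := by rw [← mul_coeff_zero, hgh, hf0]
    have hb0 : g.coeff 0 ≠ 0 := fun hc => ha0 (by rw [← hb0c0, hc, zero_mul])
    have hc0 : h.coeff 0 ≠ 0 := fun hc => ha0 (by rw [← hb0c0, hc, mul_zero])
    have hv0 : padicValInt p (g.coeff 0) + padicValInt p (h.coeff 0) = 0 := by
      rw [← padicValInt.mul hb0 hc0, hb0c0, h2]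
    have hwg0 : wgt p n μ g 0 = 0 := by
      unfold wgt; rw [(by omega : padicValInt p (g.coeff 0) = 0)]; simp
    have hwh0 : wgt p n μ h 0 = 0 := by
      unfold wgt; rw [(by omega : padicValInt p (h.coeff 0) = 0)]; simp
    have hWgle : wgt p n μ g j0 ≤ 0 := hwg0 ▸ hming 0 (Polynomial.mem_support_iff.mpr hb0)
    have hWhle : wgt p n μ h k0 ≤ 0 := hwh0 ▸ hminh 0 (Polynomial.mem_support_iff.mpr hc0)
    have hWg : wgt p n μ g j0 = 0 := by omega
    have hWh : wgt p n μ h k0 = 0 := by omega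
    -- top coefficients
    set d := g.natDegree with hd
    set e := h.natDegree with he
    have hde : d + e = n := by rw [hd, he, ← natDegree_mul hg hh, hgh, hdeg]
    have hbd : g.coeff d ≠ 0 := by
      rw [hd]; exact Polynomial.leadingCoeff_ne_zero.mpr hg
    have hce : h.coeff e ≠ 0 := by
      rw [he]; exact Polynomial.leadingCoeff_ne_zero.mpr hh
    have htop : g.coeff d * h.coeff e = a n := by
      have : (g * h).leadingCoeff = g.leadingCoeff * h.leadingCoeff := leadingCoeff_mul g h
      rw [hgh] at this
      rw [← hfn]
      rw [Polynomial.leadingCoeff, hdeg] at this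
      exact this.symm
    have hvtop : padicValInt p (g.coeff d) + padicValInt p (h.coeff e) = μ := by
      rw [← padicValInt.mul hbd hce, htop, hμ]
    have hwd : 0 ≤ wgt p n μ g d := hWg ▸ hming d (Polynomial.mem_support_iff.mpr hbd)
    have hwe : 0 ≤ wgt p n μ h e := hWh ▸ hminh e (Polynomial.mem_support_iff.mpr hce)
    unfold wgt at hwd hwe
    have hcast : (padicValInt p (g.coeff d) : ℤ) + padicValInt p (h.coeff e) = μ := by
      exact_mod_cast hvtop
    have hdecast : (d : ℤ) + e = n := by exact_mod_cast hde
    have heqd : (n : ℤ) * padicValInt p (g.coeff d) = μ * d := by nlinarith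
    have heqdnat : n * padicValInt p (g.coeff d) = μ * d := by exact_mod_cast heqd
    have hdvd : n ∣ μ * d := ⟨_, heqdnat.symm⟩
    have hdvd' : n ∣ d := (Nat.Coprime.symm h3).dvd_of_dvd_mul_left hdvd
    rcases Nat.eq_zero_or_pos d with h0 | hpos
    · exact Or.inl h0
    · right
      have := Nat.le_of_dvd hpos hdvd'
      omega
  -- transfer to primPart and ℚ
  have hcont : f.content ≠ 0 := fun hc => hfne (content_eq_zero_iff.mp hc)
  have hkey : Irreducible f.primPart := by
    constructor
    · intro hu
      have := natDegree_eq_zero_of_isUnit hu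
      rw [f.natDegree_primPart, hdeg] at this
      omega
    · intro u w huw
      have hu0 : u ≠ 0 := by
        intro hc; exact f.primPart_ne_zero (by rw [huw, hc, zero_mul])
      have hw0 : w ≠ 0 := by
        intro hc; exact f.primPart_ne_zero (by rw [huw, hc, mul_zero])
      have hceq : (C f.content * u) * w = f := by
        rw [mul_assoc, ← huw]
        exact f.eq_C_content_mul_primPart.symm
      have hCu : C f.content * u ≠ 0 := mul_ne_zero (by simpa using hcont) hu0
      rcases main (C f.content * u) w hCu hw0 hceq with hdu | hdw
      · left
        rw [natDegree_C_mul hcont] at hdu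
        have hueq : u = C (u.coeff 0) := eq_C_of_natDegree_eq_zero hdu
        have : C (u.coeff 0) ∣ f.primPart := ⟨w, by rw [← hueq]; exact huw⟩
        have := f.isPrimitive_primPart (u.coeff 0) this
        rw [hueq]
        exact isUnit_C.mpr this
      · right
        have hweq : w = C (w.coeff 0) := eq_C_of_natDegree_eq_zero hdw
        have : C (w.coeff 0) ∣ f.primPart := ⟨u, by rw [← hweq, mul_comm]; exact huw⟩
        have := f.isPrimitive_primPart (w.coeff 0) this
        rw [hweq]
        exact isUnit_C.mpr this
  have hirr : Irreducible (f.primPart.map (Int.castRingHom ℚ)) :=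
    (Polynomial.IsPrimitive.Int.irreducible_iff_irreducible_map_cast
      f.isPrimitive_primPart).mp hkey
  have hassoc : Associated (f.primPart.map (Int.castRingHom ℚ)) (f.map (Int.castRingHom ℚ)) := by
    have hcu : IsUnit (C ((f.content : ℚ))) := by
      apply isUnit_C.mpr
      simpa using isUnit_iff_ne_zero.mpr (by exact_mod_cast hcont : (f.content : ℚ) ≠ 0)
    refine ⟨hcu.unit, ?_⟩
    rw [IsUnit.unit_spec]
    conv_rhs => rw [f.eq_C_content_mul_primPart]
    rw [Polynomial.map_mul, map_C]
    simp [mul_comm]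
  exact hassoc.irreducible hirr
end

section
/- Let f(X) = a_0 + a_1 X + ... + a_n X^n ∈ Z[X] with a_0 a_n ≠ 0, let k ≥ 2, let p_1, ..., p_k be pairwise distinct primes, and let m_1, ..., m_k be positive integers. Assume for each j = 1, ..., k that either (i) p_j^{m_j} divides a_i for i = 1, ..., n, p_j^{m_j+1} does not divide a_n, and p_j does not divide a_0; or (ii) p_j^{m_j} divides a_i for i = 0, ..., n-1, p_j^{m_j+1} does not divide a_0, and p_j does not divide a_n. If gcd(gcd(m_1,n), ..., gcd(m_k,n)) = 1, then f is irreducible over Q. -/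
set_option maxHeartbeats 1000000

open Polynomial Finset

private lemma val_le_of_dvd' {p : ℕ} [Fact p.Prime] {z : ℤ} (hz : z ≠ 0) {k : ℕ}
    (h : (p:ℤ)^k ∣ z) : k ≤ padicValInt p z :=
  ((padicValInt_dvd_iff k z).mp h).resolve_left hz

private lemma not_dvd_of_val_lt {p : ℕ} [Fact p.Prime] {z : ℤ} (hz : z ≠ 0) {k : ℕ}
    (h : padicValInt p z < k) : ¬ (p:ℤ)^k ∣ z := fun hd => absurd (val_le_of_dvd' hz hd) (by omega)

/-- Core Newton polygon lemma, case (i): slope from (0,0) to (n,m). -/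
private lemma core (p : ℕ) (hp : p.Prime) (m n : ℕ) (hn : 1 ≤ n)
    (g h : Polynomial ℤ) (hgh : (g*h).natDegree = n)
    (H1 : ∀ i, 1 ≤ i → i ≤ n → (p:ℤ)^m ∣ (g*h).coeff i)
    (H2 : ¬ (p:ℤ)^(m+1) ∣ (g*h).coeff n)
    (H3 : ¬ (p:ℤ) ∣ (g*h).coeff 0) :
    n ∣ g.natDegree * m := by
  haveI : Fact p.Prime := ⟨hp⟩
  have h00 : g.coeff 0 * h.coeff 0 ≠ 0 := by
    rw [← mul_coeff_zero]; intro hz; exact H3 (hz ▸ dvd_zero _)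
  have hb0 : g.coeff 0 ≠ 0 := fun hz => h00 (by rw [hz, zero_mul])
  have hc0 : h.coeff 0 ≠ 0 := fun hz => h00 (by rw [hz, mul_zero])
  have hg0 : g ≠ 0 := fun hz => hb0 (by rw [hz, coeff_zero])
  have hh0 : h ≠ 0 := fun hz => hc0 (by rw [hz, coeff_zero])
  have hpb0 : ¬ (p:ℤ) ∣ g.coeff 0 := fun hd => H3 (by rw [mul_coeff_zero]; exact hd.mul_right _)
  have hpc0 : ¬ (p:ℤ) ∣ h.coeff 0 := fun hd => H3 (by rw [mul_coeff_zero]; exact hd.mul_left _)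
  set d := g.natDegree with hd
  set e := h.natDegree with he
  have hde : d + e = n := by rw [hd, he, ← natDegree_mul hg0 hh0, hgh]
  set v : ℤ → ℕ := fun z => padicValInt p z with hv
  set Fg : ℕ → ℤ := fun i => (n : ℤ) * v (g.coeff i) - i * m with hFg
  set Fh : ℕ → ℤ := fun i => (n : ℤ) * v (h.coeff i) - i * m with hFh
  -- minima
  have hTg : (g.support.image Fg).Nonempty := ⟨Fg 0, mem_image_of_mem _ (mem_support_iff.mpr hb0)⟩
  have hTh : (h.support.image Fh).Nonempty := ⟨Fh 0, mem_image_of_mem _ (mem_support_iff.mpr hc0)⟩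
  set t := (g.support.image Fg).min' hTg with ht
  set u := (h.support.image Fh).min' hTh with hu
  have htle : ∀ j ∈ g.support, t ≤ Fg j := fun j hj => min'_le _ _ (mem_image_of_mem _ hj)
  have hule : ∀ j ∈ h.support, u ≤ Fh j := fun j hj => min'_le _ _ (mem_image_of_mem _ hj)
  have hIg : (g.support.filter (fun i => Fg i = t)).Nonempty := by
    obtain ⟨i, hi, hFi⟩ := mem_image.mp ((g.support.image Fg).min'_mem hTg)
    exact ⟨i, mem_filter.mpr ⟨hi, hFi⟩⟩
  have hIh : (h.support.filter (fun i => Fh i = u)).Nonempty := by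
    obtain ⟨i, hi, hFi⟩ := mem_image.mp ((h.support.image Fh).min'_mem hTh)
    exact ⟨i, mem_filter.mpr ⟨hi, hFi⟩⟩
  set i0 := (g.support.filter (fun i => Fg i = t)).min' hIg with hi0
  set j0 := (h.support.filter (fun i => Fh i = u)).min' hIh with hj0
  obtain ⟨hi0s, hi0t⟩ := mem_filter.mp ((g.support.filter (fun i => Fg i = t)).min'_mem hIg)
  obtain ⟨hj0s, hj0u⟩ := mem_filter.mp ((h.support.filter (fun i => Fh i = u)).min'_mem hIh)
  rw [← hi0] at hi0s hi0t
  rw [← hj0] at hj0s hj0u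
  have hi0min : ∀ j ∈ g.support, Fg j = t → i0 ≤ j :=
    fun j hj hFj => min'_le _ _ (mem_filter.mpr ⟨hj, hFj⟩)
  have hj0min : ∀ j ∈ h.support, Fh j = u → j0 ≤ j :=
    fun j hj hFj => min'_le _ _ (mem_filter.mpr ⟨hj, hFj⟩)
  have hvb0 : v (g.coeff 0) = 0 := padicValInt.eq_zero_of_not_dvd hpb0
  have hvc0 : v (h.coeff 0) = 0 := padicValInt.eq_zero_of_not_dvd hpc0
  have ht0 : t ≤ 0 := by
    have := htle 0 (mem_support_iff.mpr hb0)
    simpa [hFg, hvb0] using this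
  have hu0 : u ≤ 0 := by
    have := hule 0 (mem_support_iff.mpr hc0)
    simpa [hFh, hvc0] using this
  have hbi0 : g.coeff i0 ≠ 0 := mem_support_iff.mp hi0s
  have hcj0 : h.coeff j0 ≠ 0 := mem_support_iff.mp hj0s
  set W := v (g.coeff i0) + v (h.coeff j0) with hW
  -- key claim: p^(W+1) does not divide coeff (i0+j0)
  have hkey : ¬ (p:ℤ)^(W+1) ∣ (g*h).coeff (i0 + j0) := by
    intro hdvd
    rw [coeff_mul] at hdvd
    have hmem : (i0, j0) ∈ antidiagonal (i0 + j0) := by simp [Finset.HasAntidiagonal.mem_antidiagonal]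
    have hrest : (p:ℤ)^(W+1) ∣
        ∑ x ∈ (antidiagonal (i0 + j0)).erase (i0, j0), g.coeff x.1 * h.coeff x.2 := by
      apply dvd_sum
      intro x hx
      have hxne : x ≠ (i0, j0) := (mem_erase.mp hx).1
      have hxs : x.1 + x.2 = i0 + j0 := mem_antidiagonal.mp (mem_erase.mp hx).2
      by_cases hbx : g.coeff x.1 = 0
      · rw [hbx, zero_mul]; exact dvd_zero _
      by_cases hcx : h.coeff x.2 = 0
      · rw [hcx, mul_zero]; exact dvd_zero _
      have hxg : x.1 ∈ g.support := mem_support_iff.mpr hbx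
      have hxh : x.2 ∈ h.support := mem_support_iff.mpr hcx
      have h1 : t ≤ Fg x.1 := htle _ hxg
      have h2 : u ≤ Fh x.2 := hule _ hxh
      have hstrict : t + u + 1 ≤ Fg x.1 + Fh x.2 := by
        rcases lt_trichotomy x.1 i0 with hlt | heq | hgt
        · have : Fg x.1 ≠ t := fun hc => absurd (hi0min _ hxg hc) (by omega)
          omega
        · exfalso; apply hxne; have : x.2 = j0 := by omega
          exact Prod.ext heq this
        · have hx2 : x.2 < j0 := by omega
          have : Fh x.2 ≠ u := fun hc => absurd (hj0min _ hxh hc) (by omega)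
          omega
      have hsum : (n:ℤ) * (v (g.coeff x.1) + v (h.coeff x.2)) ≥ (n:ℤ) * W + 1 := by
        have hcast : (x.1 : ℤ) + x.2 = (i0 : ℤ) + j0 := by exact_mod_cast hxs
        simp only [hFg, hFh] at hstrict hi0t hj0u
        push_cast [hW]
        push_cast at hstrict hi0t hj0u
        nlinarith [hstrict, hi0t, hj0u]
      have hWle : W + 1 ≤ v (g.coeff x.1) + v (h.coeff x.2) := by
        by_contra hc
        push_neg at hc
        have : v (g.coeff x.1) + v (h.coeff x.2) ≤ W := by omega
        have h3 : (n:ℤ) * (v (g.coeff x.1) + v (h.coeff x.2)) ≤ (n:ℤ) * W := by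
          apply mul_le_mul_of_nonneg_left _ (by positivity)
          exact_mod_cast this
        omega
      calc (p:ℤ)^(W+1) ∣ (p:ℤ)^(v (g.coeff x.1) + v (h.coeff x.2)) := pow_dvd_pow _ hWle
        _ = (p:ℤ)^(v (g.coeff x.1)) * (p:ℤ)^(v (h.coeff x.2)) := pow_add _ _ _
        _ ∣ g.coeff x.1 * h.coeff x.2 := mul_dvd_mul (padicValInt_dvd _) (padicValInt_dvd _)
    have hterm : (p:ℤ)^(W+1) ∣ g.coeff i0 * h.coeff j0 := by
      have hsplit : g.coeff i0 * h.coeff j0 =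
          (∑ x ∈ antidiagonal (i0 + j0), g.coeff x.1 * h.coeff x.2) -
          ∑ x ∈ (antidiagonal (i0 + j0)).erase (i0, j0), g.coeff x.1 * h.coeff x.2 := by
        rw [← Finset.add_sum_erase _ _ hmem]; ring
      rw [hsplit]
      exact dvd_sub hdvd hrest
    have : W + 1 ≤ v (g.coeff i0 * h.coeff j0) := val_le_of_dvd' (mul_ne_zero hbi0 hcj0) hterm
    rw [show v (g.coeff i0 * h.coeff j0) = v (g.coeff i0) + v (h.coeff j0) from
      padicValInt.mul hbi0 hcj0] at this
    omega
  -- t + u ≥ 0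
  have htu : 0 ≤ t + u := by
    rcases Nat.eq_zero_or_pos (i0 + j0) with hz | hpos
    · have hi0z : i0 = 0 := by omega
      have hj0z : j0 = 0 := by omega
      have : Fg 0 = 0 := by simp [hFg, hvb0]
      have h2 : Fh 0 = 0 := by simp [hFh, hvc0]
      rw [hi0z] at hi0t; rw [hj0z] at hj0u
      omega
    · by_contra hc
      push_neg at hc
      have hile : i0 + j0 ≤ n := by
        have h1 : i0 ≤ d := le_natDegree_of_mem_supp _ hi0s
        have h2 : j0 ≤ e := le_natDegree_of_mem_supp _ hj0s
        omega
      have hnW : (n:ℤ) * W < (i0 + j0 : ℕ) * m := by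
        have : (n:ℤ) * W = t + u + (i0 + j0 : ℕ) * m := by
          simp only [hFg, hFh] at hi0t hj0u
          push_cast [hW]
          push_cast at hi0t hj0u
          linarith
        push_cast at this ⊢
        omega
      have hWm : W < m := by
        by_contra hWm
        push_neg at hWm
        have h3 : (n:ℤ) * m ≤ (n:ℤ) * W := by
          apply mul_le_mul_of_nonneg_left _ (by positivity)
          exact_mod_cast hWm
        have h4 : ((i0 + j0 : ℕ) : ℤ) * m ≤ (n:ℤ) * m := by
          apply mul_le_mul_of_nonneg_right _ (by positivity)
          exact_mod_cast hile
        omega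
      exact hkey ((pow_dvd_pow _ (by omega : W + 1 ≤ m)).trans (H1 _ hpos hile))
  have ht' : t = 0 := by omega
  have hu' : u = 0 := by omega
  -- conclude
  have hds : d ∈ g.support := natDegree_mem_support_of_nonzero hg0
  have hes : e ∈ h.support := natDegree_mem_support_of_nonzero hh0
  have hFd : (d:ℤ) * m ≤ (n:ℤ) * v (g.coeff d) := by
    have := htle d hds; rw [ht'] at this; simp only [hFg] at this; linarith
  have hFe : (e:ℤ) * m ≤ (n:ℤ) * v (h.coeff e) := by
    have := hule e hes; rw [hu'] at this; simp only [hFh] at this; linarith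
  have hbd : g.coeff d ≠ 0 := mem_support_iff.mp hds
  have hce : h.coeff e ≠ 0 := mem_support_iff.mp hes
  have han : (g*h).coeff n = g.coeff d * h.coeff e := by
    rw [← hgh, ← leadingCoeff, leadingCoeff_mul]; rfl
  have hanne : (g*h).coeff n ≠ 0 := by rw [han]; exact mul_ne_zero hbd hce
  have hvan : v ((g*h).coeff n) = m := by
    have h1 : m ≤ v ((g*h).coeff n) := val_le_of_dvd' hanne (H1 n hn le_rfl)
    have h2 : ¬ (m + 1 ≤ v ((g*h).coeff n)) := by
      intro hle
      exact H2 ((pow_dvd_pow _ hle).trans (padicValInt_dvd _))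
    omega
  have hvsum : v (g.coeff d) + v (h.coeff e) = m := by
    rw [← hvan, han]; exact (padicValInt.mul hbd hce).symm
  have hfinal : (n:ℤ) * v (g.coeff d) = (d:ℤ) * m := by
    have h5 : (v (g.coeff d) : ℤ) + (v (h.coeff e) : ℤ) = (m:ℤ) := by exact_mod_cast hvsum
    have hde' : (d:ℤ) + e = n := by exact_mod_cast hde
    have h6 : (n:ℤ)*m = (d:ℤ)*m + (e:ℤ)*m := by rw [← hde']; ring
    have h7 : (n:ℤ) * (v (g.coeff d):ℤ) + (n:ℤ) * (v (h.coeff e):ℤ) = (n:ℤ)*m := by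
      rw [← mul_add, h5]
    linarith [hFd, hFe]
  have : d * m = n * v (g.coeff d) := by exact_mod_cast hfinal.symm
  exact ⟨_, this⟩

/-- Core lemma, case (ii), via reversal. -/
private lemma core' (p : ℕ) (hp : p.Prime) (m n : ℕ) (hn : 1 ≤ n)
    (g h : Polynomial ℤ) (hgh : (g*h).natDegree = n) (h0ne : (g*h).coeff 0 ≠ 0)
    (H1 : ∀ i < n, (p:ℤ)^m ∣ (g*h).coeff i)
    (H2 : ¬ (p:ℤ)^(m+1) ∣ (g*h).coeff 0)
    (H3 : ¬ (p:ℤ) ∣ (g*h).coeff n) :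
    n ∣ g.natDegree * m := by
  have hb0 : g.coeff 0 ≠ 0 := fun hz => h0ne (by rw [mul_coeff_zero, hz, zero_mul])
  have hg0 : g ≠ 0 := fun hz => hb0 (by rw [hz, coeff_zero])
  have hGH : g.reverse * h.reverse = (g*h).reverse := (reverse_mul_of_domain g h).symm
  have htr : (g*h).natTrailingDegree = 0 := natTrailingDegree_eq_zero.mpr (Or.inr h0ne)
  have hrd : (g*h).reverse.natDegree = n := by
    rw [reverse_natDegree, htr, hgh, Nat.sub_zero]
  have hcrev : ∀ i ≤ n, (g*h).reverse.coeff i = (g*h).coeff (n - i) := by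
    intro i hi
    rw [coeff_reverse, hgh, revAt_le hi]
  have hGd : g.reverse.natDegree = g.natDegree := by
    rw [reverse_natDegree, natTrailingDegree_eq_zero.mpr (Or.inr hb0), Nat.sub_zero]
  have := core p hp m n hn g.reverse h.reverse
    (by rw [hGH, hrd])
    (by intro i h1 h2
        rw [hGH, hcrev i h2]
        exact H1 _ (by omega))
    (by rw [hGH, hcrev n le_rfl, Nat.sub_self]; exact H2)
    (by rw [hGH, hcrev 0 (by omega), Nat.sub_zero]; exact H3)
  rwa [hGd] at this
theorem corollary_1_2 (n : ℕ) (hn : 1 ≤ n) (a : ℕ → ℤ)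
    (ha0 : a 0 ≠ 0) (han : a n ≠ 0)
    (k : ℕ) (hk : 2 ≤ k) (p : Fin k → ℕ) (hp : ∀ j, (p j).Prime)
    (hpp : Function.Injective p)
    (m : Fin k → ℕ) (hm : ∀ j, 0 < m j)
    (h : ∀ j, ((∀ i, 1 ≤ i → i ≤ n → ((p j : ℤ))^(m j) ∣ a i) ∧
              ¬ ((p j : ℤ))^(m j + 1) ∣ a n ∧ ¬ (p j : ℤ) ∣ a 0) ∨
             ((∀ i < n, ((p j : ℤ))^(m j) ∣ a i) ∧
              ¬ ((p j : ℤ))^(m j + 1) ∣ a 0 ∧ ¬ (p j : ℤ) ∣ a n))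
    (hgcd : Finset.univ.gcd (fun j => Nat.gcd (m j) n) = 1) :
    Irreducible ((∑ i ∈ range (n+1), C (a i) * X ^ i).map (Int.castRingHom ℚ)) := by
  classical
  set f : Polynomial ℤ := ∑ i ∈ range (n+1), C (a i) * X ^ i with hfdef
  have hcoeff : ∀ i ≤ n, f.coeff i = a i := by
    intro i hi
    rw [hfdef, finset_sum_coeff]
    simp only [coeff_C_mul, coeff_X_pow, mul_ite, mul_one, mul_zero]
    rw [Finset.sum_ite_eq (range (n+1)) i (fun j => a j)]
    simp [Nat.lt_succ_iff, hi]
  have hfn : f.natDegree = n := by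
    apply le_antisymm
    · apply natDegree_le_iff_coeff_eq_zero.mpr
      intro N hN
      rw [hfdef, finset_sum_coeff]
      apply Finset.sum_eq_zero
      intro j hj
      simp only [coeff_C_mul, coeff_X_pow, mul_ite, mul_one, mul_zero]
      rw [if_neg]
      intro hjN
      rw [mem_range] at hj
      omega
    · exact le_natDegree_of_ne_zero (by rw [hcoeff n le_rfl]; exact han)
  have hfne : f ≠ 0 := fun hz => ha0 (by rw [← hcoeff 0 (by omega), hz, coeff_zero])
  set c := f.content with hcdef
  have hc0 : c ≠ 0 := by
    rw [hcdef, Ne, content_eq_zero_iff]; exact hfne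
  set f0 := f.primPart with hf0def
  have hfactor : f = C c * f0 := f.eq_C_content_mul_primPart
  have hcd : ∀ i ≤ n, a i = c * f0.coeff i := by
    intro i hi
    rw [← hcoeff i hi]
    conv_lhs => rw [hfactor]
    rw [coeff_C_mul]
  have hpc : ∀ j, ¬ ((p j : ℕ) : ℤ) ∣ c := by
    intro j hdvd
    have hdc : ∀ i ≤ n, ((p j : ℕ) : ℤ) ∣ a i := by
      intro i hi
      rw [hcd i hi]
      exact hdvd.mul_right _
    rcases h j with ⟨_, _, H0⟩ | ⟨_, _, Hn⟩
    · exact H0 (hdc 0 (by omega))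
    · exact Hn (hdc n le_rfl)
  have htrans : ∀ (j : Fin k) (M i : ℕ), i ≤ n → ((p j : ℕ) : ℤ)^M ∣ a i →
      ((p j : ℕ) : ℤ)^M ∣ f0.coeff i := by
    intro j M i hi hdvd
    rw [hcd i hi] at hdvd
    have hprime : Prime ((p j : ℕ) : ℤ) := Nat.prime_iff_prime_int.mp (hp j)
    exact hprime.pow_dvd_of_dvd_mul_left M (hpc j) hdvd
  have hback : ∀ (M i : ℕ) (j : Fin k), i ≤ n → ((p j : ℕ) : ℤ)^M ∣ f0.coeff i →
      ((p j : ℕ) : ℤ)^M ∣ a i := by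
    intro M i j hi hdvd
    rw [hcd i hi]
    exact hdvd.mul_left c
  -- irreducibility of the primitive part over ℤ
  have hirr0 : Irreducible f0 := by
    constructor
    · intro hunit
      have := natDegree_eq_zero_of_isUnit hunit
      rw [hf0def, natDegree_primPart, hfn] at this
      omega
    · intro g h' hgh'
      have hf0ne : f0 ≠ 0 := f.primPart_ne_zero
      have hg0' : g ≠ 0 := fun hz => hf0ne (by rw [hgh', hz, zero_mul])
      have hh0' : h' ≠ 0 := fun hz => hf0ne (by rw [hgh', hz, mul_zero])
      have hghn : (g * h').natDegree = n := by rw [← hgh', hf0def, natDegree_primPart, hfn]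
      have hkeyj : ∀ j, n ∣ g.natDegree * m j := by
        intro j
        rcases h j with ⟨Hi, Hn, H0⟩ | ⟨Hi, H0, Hn⟩
        · apply core (p j) (hp j) (m j) n hn g h' hghn
          · intro i h1 h2
            rw [← hgh']
            exact htrans j _ i h2 (Hi i h1 h2)
          · rw [← hgh']
            intro hd
            exact Hn (hback _ n j le_rfl hd)
          · rw [← hgh']
            intro hd
            exact H0 (by simpa using hback 1 0 j (by omega) (by simpa using hd))
        · apply core' (p j) (hp j) (m j) n hn g h' hghn
          · rw [← hgh']
            intro hz
            exact ha0 (by rw [hcd 0 (by omega), hz, mul_zero])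
          · intro i hilt
            rw [← hgh']
            exact htrans j _ i (by omega) (Hi i hilt)
          · rw [← hgh']
            intro hd
            exact H0 (hback _ 0 j (by omega) hd)
          · rw [← hgh']
            intro hd
            exact Hn (by simpa using hback 1 n j le_rfl (by simpa using hd))
      set d := g.natDegree with hddef
      have hdvd2 : ∀ j : Fin k, n ∣ d * Nat.gcd (m j) n := by
        intro j
        rw [← Nat.gcd_mul_left]
        exact Nat.dvd_gcd (hkeyj j) (dvd_mul_left n d)
      have hgmul : (Finset.univ.gcd fun j : Fin k => d * Nat.gcd (m j) n) = d := by
        rw [Finset.gcd_mul_left, hgcd]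
        simp
      have hdn : n ∣ d := by
        rw [← hgmul]
        exact Finset.dvd_gcd fun j _ => hdvd2 j
      have hsum : d + h'.natDegree = n := by rw [← natDegree_mul hg0' hh0', hghn]
      rcases Nat.eq_zero_or_pos d with hdz | hdp
      · left
        have hgC : g = C (g.coeff 0) := eq_C_of_natDegree_eq_zero hdz
        have : IsUnit (g.coeff 0) := by
          apply f.isPrimitive_primPart (g.coeff 0)
          exact ⟨h', by rw [← hf0def, hgh']; congr 1⟩
        rw [hgC]
        exact isUnit_C.mpr this
      · right
        have hdn' : d = n := le_antisymm (by omega) (Nat.le_of_dvd hdp hdn)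
        have hez : h'.natDegree = 0 := by omega
        have hhC : h' = C (h'.coeff 0) := eq_C_of_natDegree_eq_zero hez
        have : IsUnit (h'.coeff 0) := by
          apply f.isPrimitive_primPart (h'.coeff 0)
          exact ⟨g, by rw [← hf0def, hgh', mul_comm]; congr 1⟩
        rw [hhC]
        exact isUnit_C.mpr this
  have hirrQ : Irreducible (f0.map (Int.castRingHom ℚ)) := by
    rw [← algebraMap_int_eq]
    exact (f.isPrimitive_primPart.irreducible_iff_irreducible_map_fraction_map (K := ℚ)).mp hirr0
  have hmap : f.map (Int.castRingHom ℚ) = f0.map (Int.castRingHom ℚ) * C ((c : ℚ)) := by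
    conv_lhs => rw [hfactor]
    rw [Polynomial.map_mul, map_C, mul_comm]
    norm_num
  have hu : IsUnit (C ((c : ℚ))) := isUnit_C.mpr (isUnit_iff_ne_zero.mpr (Int.cast_ne_zero.mpr hc0))
  rw [hmap]
  exact (associated_mul_unit_left _ _ hu).irreducible_iff.mpr hirrQ
end

section
/- Let f(X) = a_0 + a_1 X + ... + a_n X^n ∈ Z[X] with a_0 a_n ≠ 0. Suppose there exist two distinct primes p and q, a positive integer k, and an index j ∈ {1, ..., n-1} which is not a multiple of n/gcd(k,n), such that: (i) p divides a_i for all i ≠ j, p does not divide a_j, p^2 does not divide a_0, and p^2 does not divide a_n; (ii) q does not divide a_0, q^k divides a_i for i = 1, ..., n, and q^{k+1} does not divide a_n. Then f is irreducible over Q. -/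
open Polynomial Finset

set_option maxHeartbeats 1000000

lemma exists_argmin (s : Finset ℕ) (hs : s.Nonempty) (w : ℕ → ℤ) :
    ∃ i ∈ s, (∀ a ∈ s, w i ≤ w a) ∧ ∀ a ∈ s, a < i → w i < w a := by
  classical
  set T := s.filter (fun i => ∀ a ∈ s, w i ≤ w a) with hT
  have hne : T.Nonempty := by
    obtain ⟨b, hb, hbmin⟩ := s.exists_min_image w hs
    exact ⟨b, Finset.mem_filter.2 ⟨hb, hbmin⟩⟩
  obtain ⟨hi, hmin⟩ := Finset.mem_filter.1 (T.min'_mem hne)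
  refine ⟨T.min' hne, hi, hmin, ?_⟩
  intro a ha hlt
  rcases lt_or_eq_of_le (hmin a ha) with h | h
  · exact h
  · exfalso
    have haT : a ∈ T := Finset.mem_filter.2 ⟨ha, fun b hb => h ▸ hmin b hb⟩
    exact absurd (T.min'_le a haT) (by omega)

lemma q_side (q : ℕ) (hq : q.Prime) (k n : ℕ) (hn : 0 < n)
    (g h : Polynomial ℤ) (hg : g ≠ 0) (hh : h ≠ 0)
    (hdeg : g.natDegree + h.natDegree = n)
    (h0 : ¬ (q:ℤ) ∣ (g*h).coeff 0)
    (hmid : ∀ i, 1 ≤ i → i ≤ n → (q:ℤ)^k ∣ (g*h).coeff i)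
    (htop : ¬ (q:ℤ)^(k+1) ∣ (g*h).coeff n) :
    n ∣ g.natDegree * k := by
  haveI := Fact.mk hq
  set v : ℤ → ℕ := fun x => padicValInt q x with hv
  have hvmul : ∀ x y : ℤ, x ≠ 0 → y ≠ 0 → v (x * y) = v x + v y := by
    intro x y hx hy
    exact padicValInt.mul hx hy
  have hvd : ∀ x : ℤ, x ≠ 0 → ∀ t : ℕ, ((q:ℤ)^t ∣ x ↔ t ≤ v x) := by
    intro x hx t
    rw [padicValInt_dvd_iff]
    simp [hx, hv]
  have hmul0 : (g*h).coeff 0 = g.coeff 0 * h.coeff 0 := Polynomial.mul_coeff_zero g h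
  have hg0 : ¬ (q:ℤ) ∣ g.coeff 0 := fun hd => h0 (hmul0 ▸ hd.mul_right _)
  have hh0 : ¬ (q:ℤ) ∣ h.coeff 0 := fun hd => h0 (hmul0 ▸ hd.mul_left _)
  have hg0' : g.coeff 0 ≠ 0 := fun e => hg0 (e ▸ dvd_zero _)
  have hh0' : h.coeff 0 ≠ 0 := fun e => hh0 (e ▸ dvd_zero _)
  have hsupg : 0 ∈ g.support := Polynomial.mem_support_iff.2 hg0'
  have hsuph : 0 ∈ h.support := Polynomial.mem_support_iff.2 hh0'
  set wg : ℕ → ℤ := fun i => (n:ℤ) * v (g.coeff i) - i * k with hwg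
  set wh : ℕ → ℤ := fun i => (n:ℤ) * v (h.coeff i) - i * k with hwh
  obtain ⟨i₀, hi₀s, hi₀min, hi₀str⟩ := exists_argmin g.support ⟨0, hsupg⟩ wg
  obtain ⟨j₀, hj₀s, hj₀min, hj₀str⟩ := exists_argmin h.support ⟨0, hsuph⟩ wh
  have hgi₀ : g.coeff i₀ ≠ 0 := Polynomial.mem_support_iff.1 hi₀s
  have hhj₀ : h.coeff j₀ ≠ 0 := Polynomial.mem_support_iff.1 hj₀s
  set c : ℕ := v (g.coeff i₀) + v (h.coeff j₀) with hc
  set m : ℕ := i₀ + j₀ with hm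
  -- all off-diagonal terms divisible by q^(c+1)
  have hA : ∀ u ∈ Finset.HasAntidiagonal.antidiagonal m, u ≠ (i₀, j₀) →
      (q:ℤ)^(c+1) ∣ g.coeff u.1 * h.coeff u.2 := by
    rintro ⟨u, v'⟩ huv hne
    have hsum : u + v' = m := Finset.HasAntidiagonal.mem_antidiagonal.1 huv
    by_cases hgu : g.coeff u = 0
    · simp [hgu]
    by_cases hhv : h.coeff v' = 0
    · simp [hhv]
    have hus : u ∈ g.support := Polynomial.mem_support_iff.2 hgu
    have hvs : v' ∈ h.support := Polynomial.mem_support_iff.2 hhv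
    have hcase : u < i₀ ∨ v' < j₀ := by
      by_contra hcon
      push_neg at hcon
      have h1 : u = i₀ := by omega
      have h2 : v' = j₀ := by omega
      exact hne (by simp [h1, h2])
    have hkey : (n:ℤ) * c + 1 ≤ (n:ℤ) * ((v (g.coeff u) : ℤ) + (v (h.coeff v') : ℤ)) := by
      have hsum' : (u:ℤ) * k + (v':ℤ) * k = (i₀:ℤ) * k + (j₀:ℤ) * k := by
        have : ((u:ℤ) + (v':ℤ)) = ((i₀:ℤ) + (j₀:ℤ)) := by exact_mod_cast congrArg Nat.cast hsum
        linear_combination (k:ℤ) * this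
      rcases hcase with hlt | hlt
      · have h1 : wg i₀ + 1 ≤ wg u := hi₀str u hus hlt
        have h2 : wh j₀ ≤ wh v' := hj₀min v' hvs
        simp only [hwg, hwh] at h1 h2
        have hcc : (c:ℤ) = (v (g.coeff i₀) : ℤ) + (v (h.coeff j₀) : ℤ) := by
          rw [hc]; push_cast; ring
        rw [hcc, mul_add, mul_add]
        linarith
      · have h1 : wh j₀ + 1 ≤ wh v' := hj₀str v' hvs hlt
        have h2 : wg i₀ ≤ wg u := hi₀min u hus
        simp only [hwg, hwh] at h1 h2
        have hcc : (c:ℤ) = (v (g.coeff i₀) : ℤ) + (v (h.coeff j₀) : ℤ) := by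
          rw [hc]; push_cast; ring
        rw [hcc, mul_add, mul_add]
        linarith
    have hcV : (c:ℤ) < (v (g.coeff u) : ℤ) + (v (h.coeff v') : ℤ) := by
      by_contra hcon
      push_neg at hcon
      have hmle : (n:ℤ) * ((v (g.coeff u) : ℤ) + (v (h.coeff v') : ℤ)) ≤ (n:ℤ) * c :=
        mul_le_mul_of_nonneg_left hcon (by positivity)
      linarith
    have hle : c + 1 ≤ v (g.coeff u * h.coeff v') := by
      rw [hvmul _ _ hgu hhv]
      exact_mod_cast hcV
    exact (hvd _ (mul_ne_zero hgu hhv) _).2 hle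
  have hdiagmem : (i₀, j₀) ∈ Finset.HasAntidiagonal.antidiagonal m := Finset.HasAntidiagonal.mem_antidiagonal.2 rfl
  have hrest : (q:ℤ)^(c+1) ∣ ∑ x ∈ (Finset.HasAntidiagonal.antidiagonal m).erase (i₀,j₀),
      g.coeff x.1 * h.coeff x.2 := by
    refine Finset.dvd_sum ?_
    intro x hx
    exact hA x (Finset.mem_erase.1 hx).2 (Finset.mem_erase.1 hx).1
  have hsplit : (g*h).coeff m = g.coeff i₀ * h.coeff j₀ +
      ∑ x ∈ (Finset.HasAntidiagonal.antidiagonal m).erase (i₀,j₀), g.coeff x.1 * h.coeff x.2 := by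
    rw [Polynomial.coeff_mul, ← Finset.add_sum_erase _ _ hdiagmem]
  have hdiagndvd : ¬ (q:ℤ)^(c+1) ∣ g.coeff i₀ * h.coeff j₀ := by
    rw [hvd _ (mul_ne_zero hgi₀ hhj₀), hvmul _ _ hgi₀ hhj₀, hc]
    omega
  have hnotdvdm : ¬ (q:ℤ)^(c+1) ∣ (g*h).coeff m := by
    intro hd
    apply hdiagndvd
    have h1 := dvd_sub hd hrest
    rwa [hsplit, add_sub_cancel_right] at h1
  have hmn : m ≤ n := by
    have h1 : i₀ ≤ g.natDegree := Polynomial.le_natDegree_of_ne_zero hgi₀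
    have h2 : j₀ ≤ h.natDegree := Polynomial.le_natDegree_of_ne_zero hhj₀
    omega
  have hnc : m * k ≤ n * c := by
    rcases Nat.eq_zero_or_pos m with hm0 | hm0
    · simp [hm0]
    · have hkc : k ≤ c := by
        by_contra hcon
        push_neg at hcon
        exact hnotdvdm (dvd_trans (pow_dvd_pow _ (by omega)) (hmid m hm0 hmn))
      calc m * k ≤ n * k := Nat.mul_le_mul_right _ hmn
        _ ≤ n * c := Nat.mul_le_mul_left _ hkc
  have hwg0 : wg 0 = 0 := by
    have : v (g.coeff 0) = 0 := padicValInt.eq_zero_of_not_dvd hg0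
    simp [hwg, this]
  have hwh0 : wh 0 = 0 := by
    have : v (h.coeff 0) = 0 := padicValInt.eq_zero_of_not_dvd hh0
    simp [hwh, this]
  have hsle : wg i₀ ≤ 0 := hwg0 ▸ hi₀min 0 hsupg
  have htle : wh j₀ ≤ 0 := hwh0 ▸ hj₀min 0 hsuph
  have hsum0 : 0 ≤ wg i₀ + wh j₀ := by
    have heq : wg i₀ + wh j₀ = (n:ℤ) * (c:ℕ) - (m:ℕ) * (k:ℕ) := by
      simp only [hwg, hwh, hc, hm]
      push_cast
      ring
    rw [heq]
    have : ((m * k : ℕ) : ℤ) ≤ ((n * c : ℕ) : ℤ) := by exact_mod_cast hnc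
    push_cast at this
    linarith
  have hseq : wg i₀ = 0 := by linarith
  have hteq : wh j₀ = 0 := by linarith
  -- now at the top degree
  have hgd : g.coeff g.natDegree ≠ 0 := by
    rw [← Polynomial.leadingCoeff]
    exact Polynomial.leadingCoeff_ne_zero.2 hg
  have hhd : h.coeff h.natDegree ≠ 0 := by
    rw [← Polynomial.leadingCoeff]
    exact Polynomial.leadingCoeff_ne_zero.2 hh
  have e1 : (g.natDegree : ℤ) * k ≤ (n:ℤ) * v (g.coeff g.natDegree) := by
    have := hi₀min g.natDegree (Polynomial.mem_support_iff.2 hgd)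
    rw [hseq] at this
    simp only [hwg] at this
    linarith
  have e2 : (h.natDegree : ℤ) * k ≤ (n:ℤ) * v (h.coeff h.natDegree) := by
    have := hj₀min h.natDegree (Polynomial.mem_support_iff.2 hhd)
    rw [hteq] at this
    simp only [hwh] at this
    linarith
  have htopc : (g*h).coeff n = g.coeff g.natDegree * h.coeff h.natDegree := by
    rw [← hdeg]
    exact Polynomial.coeff_mul_degree_add_degree g h
  have htopne : (g*h).coeff n ≠ 0 := fun e => htop (e ▸ dvd_zero _)
  have hvk : v ((g*h).coeff n) = k := by
    have h1 : k ≤ v ((g*h).coeff n) := (hvd _ htopne k).1 (hmid n hn le_rfl)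
    have h2 : ¬ (k+1 ≤ v ((g*h).coeff n)) := fun hcon => htop ((hvd _ htopne _).2 hcon)
    omega
  have hvsum : v (g.coeff g.natDegree) + v (h.coeff h.natDegree) = k := by
    rw [← hvk, htopc, hvmul _ _ hgd hhd]
  have hnk : (n:ℤ) * v (g.coeff g.natDegree) + (n:ℤ) * v (h.coeff h.natDegree) = (n:ℤ) * k := by
    rw [← mul_add]
    congr 1
    exact_mod_cast hvsum
  have hfin : (n:ℤ) * v (g.coeff g.natDegree) = (g.natDegree : ℤ) * k := by
    have hdeg' : ((g.natDegree : ℤ) + (h.natDegree : ℤ)) = (n:ℤ) := by exact_mod_cast hdeg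
    have hexp : (g.natDegree : ℤ) * k + (h.natDegree : ℤ) * k = (n:ℤ) * k := by
      rw [← add_mul, hdeg']
    linarith
  refine ⟨v (g.coeff g.natDegree), ?_⟩
  have : (g.natDegree * k : ℤ) = (n * v (g.coeff g.natDegree) : ℤ) := by push_cast; linarith [hfin]
  exact_mod_cast this


lemma p_side (p : ℕ) (hp : p.Prime) (n j : ℕ)
    (g h : Polynomial ℤ) (hd1 : 1 ≤ g.natDegree) (he1 : 1 ≤ h.natDegree)
    (hdeg : g.natDegree + h.natDegree = n)
    (hp1 : ∀ i, i ≠ j → (p:ℤ) ∣ (g*h).coeff i)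
    (hp2 : ¬ (p:ℤ) ∣ (g*h).coeff j)
    (hp3 : ¬ (p:ℤ)^2 ∣ (g*h).coeff 0)
    (hp4 : ¬ (p:ℤ)^2 ∣ (g*h).coeff n) :
    g.natDegree = j ∨ h.natDegree = j := by
  haveI := Fact.mk hp
  have hcast : ∀ x : ℤ, ((x : ZMod p) = 0) ↔ (p:ℤ) ∣ x := fun x =>
    ZMod.intCast_zmod_eq_zero_iff_dvd x p
  set u : ZMod p := (((g*h).coeff j : ℤ) : ZMod p) with hu
  have hu0 : u ≠ 0 := fun e => hp2 ((hcast _).1 e)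
  have hφF : (g*h).map (Int.castRingHom (ZMod p)) = C u * X ^ j := by
    ext i
    rw [Polynomial.coeff_map]
    simp only [Polynomial.coeff_C_mul, Polynomial.coeff_X_pow, Int.coe_castRingHom]
    by_cases hij : i = j
    · subst hij; simp [hu]
    · rw [if_neg hij, mul_zero]
      exact (hcast _).2 (hp1 i hij)
  have hmulφ : g.map (Int.castRingHom (ZMod p)) * h.map (Int.castRingHom (ZMod p))
      = C u * X ^ j := by
    rw [← Polynomial.map_mul, hφF]
  have hdvd : g.map (Int.castRingHom (ZMod p)) ∣ (X : (ZMod p)[X]) ^ j := by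
    refine ⟨C u⁻¹ * h.map (Int.castRingHom (ZMod p)), ?_⟩
    have hX : C u⁻¹ * (g.map (Int.castRingHom (ZMod p)) * h.map (Int.castRingHom (ZMod p)))
        = X ^ j := by
      rw [hmulφ, ← mul_assoc, ← Polynomial.C_mul, inv_mul_cancel₀ hu0, Polynomial.C_1, one_mul]
    rw [← hX]; ring
  obtain ⟨s, hsj, hs⟩ := (dvd_prime_pow Polynomial.prime_X j).1 hdvd
  obtain ⟨ug, hug⟩ := hs
  have hginv : g.map (Int.castRingHom (ZMod p)) = X ^ s * (↑ug⁻¹ : (ZMod p)[X]) := by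
    rw [← hug, mul_assoc]
    simp
  obtain ⟨r, hrU, hCr⟩ := Polynomial.isUnit_iff.1 (ug⁻¹ : ((ZMod p)[X])ˣ).isUnit
  have hr0 : r ≠ 0 := hrU.ne_zero
  have hgform : g.map (Int.castRingHom (ZMod p)) = C r * X ^ s := by
    rw [hginv, ← hCr]; ring
  -- same for h
  have hdvdh : h.map (Int.castRingHom (ZMod p)) ∣ (X : (ZMod p)[X]) ^ j := by
    refine ⟨C u⁻¹ * g.map (Int.castRingHom (ZMod p)), ?_⟩
    have hX : C u⁻¹ * (g.map (Int.castRingHom (ZMod p)) * h.map (Int.castRingHom (ZMod p)))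
        = X ^ j := by
      rw [hmulφ, ← mul_assoc, ← Polynomial.C_mul, inv_mul_cancel₀ hu0, Polynomial.C_1, one_mul]
    rw [← hX]; ring
  obtain ⟨t, htj, ht⟩ := (dvd_prime_pow Polynomial.prime_X j).1 hdvdh
  obtain ⟨uh, huh⟩ := ht
  have hhinv : h.map (Int.castRingHom (ZMod p)) = X ^ t * (↑uh⁻¹ : (ZMod p)[X]) := by
    rw [← huh, mul_assoc]
    simp
  obtain ⟨r', hrU', hCr'⟩ := Polynomial.isUnit_iff.1 (uh⁻¹ : ((ZMod p)[X])ˣ).isUnit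
  have hr0' : r' ≠ 0 := hrU'.ne_zero
  have hhform : h.map (Int.castRingHom (ZMod p)) = C r' * X ^ t := by
    rw [hhinv, ← hCr']; ring
  -- s + t = j
  have hst : s + t = j := by
    have h1 : (C r * X ^ s) * (C r' * X ^ t) = C u * X ^ j := by
      rw [← hgform, ← hhform, hmulφ]
    have h2 : C (r * r') * X ^ (s + t) = C u * X ^ j := by
      rw [← h1, Polynomial.C_mul, pow_add]; ring
    have h3 := congrArg Polynomial.natDegree h2
    rwa [Polynomial.natDegree_C_mul_X_pow _ _ (mul_ne_zero hr0 hr0'),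
      Polynomial.natDegree_C_mul_X_pow _ _ hu0] at h3
  -- coefficient dvd characterizations
  have hgc : ∀ i, ((p:ℤ) ∣ g.coeff i) ↔ i ≠ s := by
    intro i
    rw [← hcast]
    have : ((g.coeff i : ℤ) : ZMod p) = (g.map (Int.castRingHom (ZMod p))).coeff i := by
      rw [Polynomial.coeff_map, Int.coe_castRingHom]
    rw [this, hgform, Polynomial.coeff_C_mul, Polynomial.coeff_X_pow]
    constructor
    · intro hz his
      rw [if_pos his, mul_one] at hz
      exact hr0 hz
    · intro his
      rw [if_neg his, mul_zero]
  have hhc : ∀ i, ((p:ℤ) ∣ h.coeff i) ↔ i ≠ t := by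
    intro i
    rw [← hcast]
    have : ((h.coeff i : ℤ) : ZMod p) = (h.map (Int.castRingHom (ZMod p))).coeff i := by
      rw [Polynomial.coeff_map, Int.coe_castRingHom]
    rw [this, hhform, Polynomial.coeff_C_mul, Polynomial.coeff_X_pow]
    constructor
    · intro hz his
      rw [if_pos his, mul_one] at hz
      exact hr0' hz
    · intro his
      rw [if_neg his, mul_zero]
  -- constant coefficient: s = 0 ∨ t = 0
  have hc0 : s = 0 ∨ t = 0 := by
    by_contra hcon
    push_neg at hcon
    apply hp3
    rw [Polynomial.mul_coeff_zero, pow_two]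
    exact mul_dvd_mul ((hgc 0).2 (Ne.symm (by omega))) ((hhc 0).2 (Ne.symm (by omega)))
  -- top coefficient: g.natDegree = s ∨ h.natDegree = t
  have htopc : (g*h).coeff n = g.coeff g.natDegree * h.coeff h.natDegree := by
    rw [← hdeg]
    exact Polynomial.coeff_mul_degree_add_degree g h
  have hcn : g.natDegree = s ∨ h.natDegree = t := by
    by_contra hcon
    push_neg at hcon
    apply hp4
    rw [htopc, pow_two]
    exact mul_dvd_mul ((hgc _).2 hcon.1) ((hhc _).2 hcon.2)
  rcases hc0 with hs0 | ht0
  · rcases hcn with hds | het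
    · omega
    · right; omega
  · rcases hcn with hds | het
    · left; omega
    · omega


theorem corollary_1_5 (n : ℕ) (hn : 2 ≤ n) (a : ℕ → ℤ)
    (ha0 : a 0 ≠ 0) (han : a n ≠ 0)
    (p q : ℕ) (hp : p.Prime) (hq : q.Prime) (hpq : p ≠ q)
    (k : ℕ) (hk : 0 < k)
    (j : ℕ) (hj1 : 1 ≤ j) (hj2 : j ≤ n - 1)
    (hjmult : ¬ (n / Nat.gcd k n) ∣ j)
    (hp1 : ∀ i ≤ n, i ≠ j → (p : ℤ) ∣ a i)
    (hp2 : ¬ (p : ℤ) ∣ a j)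
    (hp3 : ¬ (p : ℤ)^2 ∣ a 0)
    (hp4 : ¬ (p : ℤ)^2 ∣ a n)
    (hq1 : ¬ (q : ℤ) ∣ a 0)
    (hq2 : ∀ i, 1 ≤ i → i ≤ n → (q : ℤ)^k ∣ a i)
    (hq3 : ¬ (q : ℤ)^(k+1) ∣ a n) :
    Irreducible ((∑ i ∈ range (n+1), C (a i) * X ^ i).map (Int.castRingHom ℚ)) := by
  have hj' : j < n := by omega
  set F : Polynomial ℤ := ∑ i ∈ range (n+1), C (a i) * X ^ i with hF
  have hFc : ∀ m, F.coeff m = if m ≤ n then a m else 0 := by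
    intro m
    rw [hF, Polynomial.finset_sum_coeff]
    simp only [Polynomial.coeff_C_mul, Polynomial.coeff_X_pow, mul_ite, mul_one, mul_zero]
    rw [Finset.sum_ite_eq (range (n+1)) m a]
    simp [Nat.lt_succ_iff]
  have hFn : F.coeff n = a n := by rw [hFc]; simp
  have hFne : F ≠ 0 := fun e => han (by rw [← hFn, e, Polynomial.coeff_zero])
  have hFdeg : F.natDegree = n := by
    apply le_antisymm
    · refine Polynomial.natDegree_le_iff_coeff_eq_zero.2 (fun N hN => ?_)
      rw [hFc, if_neg (by omega)]
    · exact Polynomial.le_natDegree_of_ne_zero (by rw [hFn]; exact han)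
  set c : ℤ := F.content with hc
  set P : Polynomial ℤ := F.primPart with hP
  have hFP : F = C c * P := F.eq_C_content_mul_primPart
  have hPdeg : P.natDegree = n := by rw [hP, Polynomial.natDegree_primPart, hFdeg]
  have hcoeffEq : ∀ m, F.coeff m = c * P.coeff m := by
    intro m
    conv_lhs => rw [hFP]
    rw [Polynomial.coeff_C_mul]
  have hc0 : c ≠ 0 := fun e => hFne (Polynomial.content_eq_zero_iff.1 e)
  have hFj : F.coeff j = a j := by rw [hFc, if_pos (by omega)]
  have hF0 : F.coeff 0 = a 0 := by rw [hFc]; simp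
  have hpc : ¬ (p:ℤ) ∣ c := fun hd => hp2 (hFj ▸ hd.trans (Polynomial.content_dvd_coeff j))
  have hqc : ¬ (q:ℤ) ∣ c := fun hd => hq1 (hF0 ▸ hd.trans (Polynomial.content_dvd_coeff 0))
  have hpZ : Prime (p:ℤ) := Nat.prime_iff_prime_int.1 hp
  -- coefficient facts for P
  have hPhigh : ∀ i, n < i → P.coeff i = 0 := fun i hi =>
    Polynomial.coeff_eq_zero_of_natDegree_lt (by omega)
  have Pp1 : ∀ i, i ≠ j → (p:ℤ) ∣ P.coeff i := by
    intro i hij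
    rcases le_or_gt i n with hin | hin
    · have : (p:ℤ) ∣ c * P.coeff i := by
        rw [← hcoeffEq, hFc, if_pos hin]
        exact hp1 i hin hij
      exact (hpZ.dvd_mul.1 this).resolve_left hpc
    · rw [hPhigh i hin]; exact dvd_zero _
  have Pp2 : ¬ (p:ℤ) ∣ P.coeff j := by
    intro hd
    exact hp2 (by rw [← hFj, hcoeffEq]; exact hd.mul_left c)
  have Pp3 : ¬ (p:ℤ)^2 ∣ P.coeff 0 := by
    intro hd
    exact hp3 (by rw [← hF0, hcoeffEq]; exact hd.mul_left c)
  have hFncoeff : F.coeff n = c * P.coeff n := hcoeffEq n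
  have Pp4 : ¬ (p:ℤ)^2 ∣ P.coeff n := by
    intro hd
    exact hp4 (by rw [← hFn, hFncoeff]; exact hd.mul_left c)
  have Pq1 : ¬ (q:ℤ) ∣ P.coeff 0 := by
    intro hd
    exact hq1 (by rw [← hF0, hcoeffEq]; exact hd.mul_left c)
  have hqtransfer : ∀ x : ℤ, (q:ℤ)^k ∣ c * x → (q:ℤ)^k ∣ x := by
    intro x hd
    rcases eq_or_ne x 0 with rfl | hx
    · simp
    haveI := Fact.mk hq
    have h1 : k ≤ padicValInt q (c * x) :=
      ((padicValInt_dvd_iff k (c*x)).1 hd).resolve_left (mul_ne_zero hc0 hx)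
    rw [padicValInt.mul hc0 hx, padicValInt.eq_zero_of_not_dvd hqc, zero_add] at h1
    exact (padicValInt_dvd_iff k x).2 (Or.inr h1)
  have Pq2 : ∀ i, 1 ≤ i → i ≤ n → (q:ℤ)^k ∣ P.coeff i := by
    intro i h1 h2
    apply hqtransfer
    rw [← hcoeffEq, hFc, if_pos h2]
    exact hq2 i h1 h2
  have Pq3 : ¬ (q:ℤ)^(k+1) ∣ P.coeff n := by
    intro hd
    exact hq3 (by rw [← hFn, hFncoeff]; exact hd.mul_left c)
  -- irreducibility of P over ℤ
  have hPprim : P.IsPrimitive := F.isPrimitive_primPart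
  have hPne : P ≠ 0 := F.primPart_ne_zero
  have hPirr : Irreducible P := by
    constructor
    · intro hun
      have := Polynomial.natDegree_eq_zero_of_isUnit hun
      omega
    · intro g h hgh
      by_contra hcon
      push_neg at hcon
      obtain ⟨hgu, hhu⟩ := hcon
      have hgne : g ≠ 0 := fun e => hPne (by rw [hgh, e, zero_mul])
      have hhne : h ≠ 0 := fun e => hPne (by rw [hgh, e, mul_zero])
      have hgd1 : 1 ≤ g.natDegree := by
        rcases Nat.eq_zero_or_pos g.natDegree with h0 | h1
        · exfalso
          have hgC : g = C (g.coeff 0) := Polynomial.eq_C_of_natDegree_eq_zero h0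
          apply hgu
          rw [hgC]
          refine Polynomial.isUnit_C.2 (hPprim (g.coeff 0) ?_)
          exact ⟨h, hgh.trans (congrArg (· * h) hgC)⟩
        · exact h1
      have hhd1 : 1 ≤ h.natDegree := by
        rcases Nat.eq_zero_or_pos h.natDegree with h0 | h1
        · exfalso
          have hhC : h = C (h.coeff 0) := Polynomial.eq_C_of_natDegree_eq_zero h0
          apply hhu
          rw [hhC]
          refine Polynomial.isUnit_C.2 (hPprim (h.coeff 0) ?_)
          exact ⟨g, hgh.trans ((congrArg (g * ·) hhC).trans (mul_comm _ _))⟩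
        · exact h1
      have hdeg' : g.natDegree + h.natDegree = n := by
        rw [← Polynomial.natDegree_mul hgne hhne, ← hgh, hPdeg]
      have hj_or : g.natDegree = j ∨ h.natDegree = j := by
        apply p_side p hp n j g h hgd1 hhd1 hdeg'
        · intro i hij; rw [← hgh]; exact Pp1 i hij
        · rw [← hgh]; exact Pp2
        · rw [← hgh]; exact Pp3
        · rw [← hgh]; exact Pp4
      have hnd1 : n ∣ g.natDegree * k := by
        apply q_side q hq k n (by omega) g h hgne hhne hdeg'
        · rw [← hgh]; exact Pq1
        · intro i h1 h2; rw [← hgh]; exact Pq2 i h1 h2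
        · rw [← hgh]; exact Pq3
      have hnd2 : n ∣ h.natDegree * k := by
        apply q_side q hq k n (by omega) h g hhne hgne (by omega)
        · rw [mul_comm h g, ← hgh]; exact Pq1
        · intro i h1 h2; rw [mul_comm h g, ← hgh]; exact Pq2 i h1 h2
        · rw [mul_comm h g, ← hgh]; exact Pq3
      set G : ℕ := Nat.gcd k n with hG
      have hGpos : 0 < G := by
        rcases Nat.eq_zero_or_pos G with h0 | h1
        · exact absurd (Nat.eq_zero_of_gcd_eq_zero_left h0) (by omega)
        · exact h1
      have hnG : n / G * G = n := Nat.div_mul_cancel (Nat.gcd_dvd_right k n)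
      have hkG : k / G * G = k := Nat.div_mul_cancel (Nat.gcd_dvd_left k n)
      have hco : Nat.Coprime (n / G) (k / G) := (Nat.coprime_div_gcd_div_gcd hGpos).symm
      have key : ∀ d : ℕ, n ∣ d * k → n / G ∣ d := by
        intro d hd
        have h1 : n / G * G ∣ d * (k / G) * G := by
          rw [hnG, mul_assoc, hkG]
          exact hd
        have h2 : n / G ∣ d * (k / G) := (Nat.mul_dvd_mul_iff_right hGpos).1 h1
        exact hco.dvd_of_dvd_mul_right h2
      rcases hj_or with hdj | hej
      · exact hjmult (hdj ▸ key _ hnd1)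
      · exact hjmult (hej ▸ key _ hnd2)
  -- conclude over ℚ
  have hmap : F.map (Int.castRingHom ℚ) = C (c:ℚ) * P.map (Int.castRingHom ℚ) := by
    conv_lhs => rw [hFP]
    rw [Polynomial.map_mul, Polynomial.map_C, Int.coe_castRingHom]
  have hPirrQ : Irreducible (P.map (Int.castRingHom ℚ)) :=
    (Polynomial.IsPrimitive.Int.irreducible_iff_irreducible_map_cast hPprim).1 hPirr
  have hcu : IsUnit (C (c:ℚ) : Polynomial ℚ) :=
    Polynomial.isUnit_C.2 (isUnit_iff_ne_zero.2 (by exact_mod_cast hc0))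
  have hassoc : Associated (P.map (Int.castRingHom ℚ)) (C (c:ℚ) * P.map (Int.castRingHom ℚ)) :=
    ⟨hcu.unit, by rw [mul_comm, hcu.unit_spec]⟩
  rw [hmap]
  exact hassoc.irreducible hPirrQ
end

section
/- Let f(X) = a_0 + a_1 X + ... + a_n X^n ∈ Z[X] with a_0 a_n ≠ 0. Suppose there exist two distinct primes p and q and a positive integer k such that: (i) p does not divide a_1, p divides a_i for all i > 1, and p^2 does not divide a_n; (ii) q does not divide a_0, q^k divides a_i for all i > 0, q^{k+1} does not divide a_n, and n does not divide k. Then f is irreducible over Q. -/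
open Polynomial Finset

-- q-adic valuation argument: no "rational root" (s/t) relation can hold
lemma key_val (n k : ℕ) (hn : 2 ≤ n) (hk : 0 < k) (q : ℕ) (hq : q.Prime)
    (b : ℕ → ℤ) (s t : ℤ) (ht : t ≠ 0)
    (hqs : ¬ (q:ℤ) ∣ s) (hqb0 : ¬ (q:ℤ) ∣ b 0)
    (hqk : ∀ i, 0 < i → i ≤ n → (q:ℤ)^k ∣ b i)
    (hq3 : ¬ (q:ℤ)^(k+1) ∣ b n)
    (hnk : ¬ n ∣ k)
    (hS : ∑ i ∈ range (n+1), b i * s^i * t^(n-i) = 0) : False := by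
  have hqz : Prime (q:ℤ) := Int.prime_iff_natAbs_prime.mpr (by simpa)
  set β := t.natAbs.factorization q with hβ
  have htn : t.natAbs ≠ 0 := by simpa using ht
  have ht1 : (q:ℤ)^β ∣ t := by
    have h := Nat.ordProj_dvd t.natAbs q
    have : ((q^β : ℕ) : ℤ) ∣ t := Int.natCast_dvd.mpr h
    simpa using this
  obtain ⟨t', ht'⟩ := ht1
  have hqt' : ¬ (q:ℤ) ∣ t' := by
    intro h
    have h2 : (q:ℤ)^(β+1) ∣ t := by
      rw [ht', pow_succ]
      exact mul_dvd_mul_left _ h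
    have h3 : (q^(β+1) : ℕ) ∣ t.natAbs := Int.natCast_dvd.mp (by exact_mod_cast h2)
    exact Nat.pow_succ_factorization_not_dvd htn hq h3
  have htpow : ∀ m : ℕ, t ^ m = (q:ℤ)^(m*β) * t'^m := by
    intro m; rw [ht', mul_pow, ← pow_mul, mul_comm β m]
  rcases lt_trichotomy (n*β) k with h1 | h2 | h3
  · -- n*β < k : contradiction with q ∤ b 0, q ∤ t'
    have hterm : ∀ i ∈ range n, (q:ℤ)^(n*β+1) ∣ b (i+1) * s^(i+1) * t^(n-(i+1)) := by
      intro i hi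
      have hin : i < n := Finset.mem_range.mp hi
      have h4 : (q:ℤ)^(n*β+1) ∣ b (i+1) :=
        (pow_dvd_pow _ h1).trans (hqk (i+1) (Nat.succ_pos i) (by omega))
      exact (h4.mul_right _).mul_right _
    have hsplit := Finset.sum_range_succ' (fun i => b i * s^i * t^(n-i)) n
    rw [hS] at hsplit
    have h0 : b 0 * s^0 * t^(n-0) = -∑ i ∈ range n, b (i+1) * s^(i+1) * t^(n-(i+1)) := by
      linarith [hsplit]
    have hdvd : (q:ℤ)^(n*β+1) ∣ b 0 * s^0 * t^(n-0) := by
      rw [h0]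
      exact dvd_neg.mpr (Finset.dvd_sum hterm)
    simp only [pow_zero, mul_one, Nat.sub_zero] at hdvd
    rw [htpow n] at hdvd
    have hre : b 0 * ((q:ℤ)^(n*β) * t'^n) = (q:ℤ)^(n*β) * (b 0 * t'^n) := by ring
    rw [hre, pow_succ'] at hdvd
    have hdvd2 : (q:ℤ) ∣ b 0 * t'^n := by
      have hne : ((q:ℤ)^(n*β)) ≠ 0 := pow_ne_zero _ hqz.ne_zero
      rw [mul_comm (q:ℤ) ((q:ℤ)^(n*β))] at hdvd
      exact (mul_dvd_mul_iff_left hne).mp hdvd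
    rcases hqz.2.2 _ _ hdvd2 with h | h
    · exact hqb0 h
    · exact hqt' (hqz.dvd_of_dvd_pow h)
  · exact hnk ⟨β, h2.symm⟩
  · -- k < n*β
    have hβ1 : 1 ≤ β := by
      rcases Nat.eq_zero_or_pos β with h0 | h0
      · rw [h0, Nat.mul_zero] at h3; omega
      · exact h0
    have hterm : ∀ i ∈ range n, (q:ℤ)^(k+1) ∣ b i * s^i * t^(n-i) := by
      intro i hi
      have hin : i < n := Finset.mem_range.mp hi
      rcases Nat.eq_zero_or_pos i with rfl | hi0
      · have h4 : (q:ℤ)^(k+1) ∣ t^n := by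
          rw [htpow n]
          exact ((pow_dvd_pow (q:ℤ) (by omega : k+1 ≤ n*β)).mul_right _)
        simp only [pow_zero, mul_one, Nat.sub_zero]
        exact h4.mul_left (b 0)
      · have h4 : (q:ℤ)^k ∣ b i := hqk i hi0 (le_of_lt hin)
        have h5 : (q:ℤ)^β ∣ t^(n-i) := by
          rw [htpow (n-i)]
          exact ((pow_dvd_pow (q:ℤ) (Nat.le_mul_of_pos_left β (by omega))).mul_right _)
        have h6 : (q:ℤ)^(k+β) ∣ b i * t^(n-i) := by
          rw [pow_add]; exact mul_dvd_mul h4 h5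
        have h7 : (q:ℤ)^(k+1) ∣ b i * t^(n-i) := (pow_dvd_pow _ (by omega)).trans h6
        have hre : b i * s^i * t^(n-i) = (b i * t^(n-i)) * s^i := by ring
        rw [hre]; exact h7.mul_right _
    have hsplit := Finset.sum_range_succ (fun i => b i * s^i * t^(n-i)) n
    rw [hS] at hsplit
    have h0 : b n * s^n * t^(n-n) = -∑ i ∈ range n, b i * s^i * t^(n-i) := by
      linarith [hsplit]
    have hdvd : (q:ℤ)^(k+1) ∣ b n * s^n * t^(n-n) := by
      rw [h0]; exact dvd_neg.mpr (Finset.dvd_sum hterm)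
    simp only [Nat.sub_self, pow_zero, mul_one] at hdvd
    have hns : ¬ (q:ℤ) ∣ s^n := fun h => hqs (hqz.dvd_of_dvd_pow h)
    exact hq3 (hqz.pow_dvd_of_dvd_mul_right (k+1) hns hdvd)


lemma aux_linear (n : ℕ) (hn : 2 ≤ n) (p q k : ℕ) (hp : p.Prime) (hq : q.Prime)
    (hk : 0 < k) (hnk : ¬ n ∣ k)
    (g u v : ℤ[X]) (hgdeg : g.natDegree = n) (hguv : g = u * v)
    (hgprim : g.IsPrimitive)
    (hvlead : ¬ (p:ℤ) ∣ v.leadingCoeff)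
    (hvunit : ¬ IsUnit v)
    (hb1 : ¬ (p:ℤ) ∣ g.coeff 1)
    (hbi : ∀ i, 1 < i → (p:ℤ) ∣ g.coeff i)
    (hqb0 : ¬ (q:ℤ) ∣ g.coeff 0)
    (hqk : ∀ i, 0 < i → i ≤ n → (q:ℤ)^k ∣ g.coeff i)
    (hqbn : ¬ (q:ℤ)^(k+1) ∣ g.coeff n) : False := by
  haveI : Fact p.Prime := ⟨hp⟩
  set φ : ℤ →+* ZMod p := Int.castRingHom (ZMod p) with hφ
  have hc1 : (g.map φ).coeff 1 ≠ 0 := by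
    rw [coeff_map]
    simpa [φ, ZMod.intCast_zmod_eq_zero_iff_dvd] using hb1
  have hgbar0 : g.map φ ≠ 0 := fun h => hc1 (by rw [h]; simp)
  have hdegbar : (g.map φ).natDegree = 1 := by
    have hle : (g.map φ).natDegree ≤ 1 := by
      rw [natDegree_le_iff_coeff_eq_zero]
      intro m hm
      rw [coeff_map]
      simpa [φ, ZMod.intCast_zmod_eq_zero_iff_dvd] using hbi m hm
    have hge : 1 ≤ (g.map φ).natDegree := le_natDegree_of_ne_zero hc1
    omega
  have hmul : g.map φ = u.map φ * v.map φ := by rw [hguv, Polynomial.map_mul]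
  have hu0 : u.map φ ≠ 0 := fun h => hgbar0 (by rw [hmul, h, zero_mul])
  have hv0 : v.map φ ≠ 0 := fun h => hgbar0 (by rw [hmul, h, mul_zero])
  have hsumdeg : (u.map φ).natDegree + (v.map φ).natDegree = 1 := by
    rw [← natDegree_mul hu0 hv0, ← hmul, hdegbar]
  have hvmap : (v.map φ).natDegree = v.natDegree := by
    apply natDegree_map_of_leadingCoeff_ne_zero
    simpa [φ, ZMod.intCast_zmod_eq_zero_iff_dvd] using hvlead
  have hvdeg1 : v.natDegree ≤ 1 := by omega
  have hvdeg0 : v.natDegree ≠ 0 := by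
    intro h0
    have hvC : v = C (v.coeff 0) := eq_C_of_natDegree_eq_zero h0
    have : IsUnit (v.coeff 0) := hgprim (v.coeff 0) ⟨u, by rw [hguv, ← hvC, mul_comm]⟩
    exact hvunit (hvC ▸ isUnit_C.mpr this)
  have hvdeg : v.natDegree = 1 := by omega
  set v1 := v.coeff 1 with hv1def
  set v0 := v.coeff 0 with hv0def
  have hlead : v.leadingCoeff = v1 := by rw [leadingCoeff, hvdeg]
  have hv1ne : v1 ≠ 0 := fun h => hvlead (by rw [hlead, h]; exact dvd_zero _)
  have hv1Q : (v1 : ℚ) ≠ 0 := Int.cast_ne_zero.mpr hv1ne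
  have hqv0 : ¬ (q:ℤ) ∣ v0 := by
    intro h
    apply hqb0
    have : g.coeff 0 = u.coeff 0 * v.coeff 0 := by rw [hguv, mul_coeff_zero]
    rw [this]
    exact h.mul_left _
  set r : ℚ := -(v0 : ℚ) / (v1 : ℚ) with hr
  have hveq : v = C v1 * X + C v0 := eq_X_add_C_of_natDegree_le_one (le_of_eq hvdeg)
  have hevalv : (v.map (Int.castRingHom ℚ)).eval r = 0 := by
    rw [hveq]
    simp only [Polynomial.map_add, Polynomial.map_mul, Polynomial.map_C, Polynomial.map_X,
      eval_add, eval_mul, eval_C, eval_X, eq_intCast, Polynomial.map_intCast, eval_intCast]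
    rw [hr]
    field_simp
    ring
  have heval0 : (g.map (Int.castRingHom ℚ)).eval r = 0 := by
    rw [hguv, Polynomial.map_mul, eval_mul, hevalv, mul_zero]
  have hsum : ∑ i ∈ range (n+1), (g.coeff i : ℚ) * r^i = 0 := by
    have hd : (g.map (Int.castRingHom ℚ)).natDegree < n+1 :=
      lt_of_le_of_lt natDegree_map_le (by rw [hgdeg]; omega)
    have heq := eval_eq_sum_range' hd r
    rw [heval0] at heq
    have h2 : ∑ i ∈ range (n+1), (g.map (Int.castRingHom ℚ)).coeff i * r^i
        = ∑ i ∈ range (n+1), (g.coeff i : ℚ) * r^i :=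
      Finset.sum_congr rfl (fun i _ => by rw [coeff_map, eq_intCast])
    rw [← h2, ← heq]
  -- multiply through by v1^n
  have hSQ : ∑ i ∈ range (n+1), (g.coeff i : ℚ) * (-(v0:ℚ))^i * (v1:ℚ)^(n-i) = 0 := by
    have hterm : ∀ i ∈ range (n+1),
        (g.coeff i : ℚ) * (-(v0:ℚ))^i * (v1:ℚ)^(n-i)
          = ((g.coeff i : ℚ) * r^i) * (v1:ℚ)^n := by
      intro i hi
      have hin : i ≤ n := by simpa [Nat.lt_succ_iff] using Finset.mem_range.mp hi
      have hpow : (v1:ℚ)^n = (v1:ℚ)^i * (v1:ℚ)^(n-i) := by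
        rw [← pow_add]; congr 1; omega
      rw [hr, hpow, div_pow]
      field_simp
    rw [Finset.sum_congr rfl hterm, ← Finset.sum_mul, hsum, zero_mul]
  have hSZ : ∑ i ∈ range (n+1), g.coeff i * (-v0)^i * v1^(n-i) = 0 := by
    have hcast : ((∑ i ∈ range (n+1), g.coeff i * (-v0)^i * v1^(n-i) : ℤ) : ℚ) = 0 := by
      push_cast
      exact hSQ
    exact_mod_cast hcast
  exact key_val n k hn hk q hq g.coeff (-v0) v1 hv1ne
    (by rwa [dvd_neg]) hqb0 hqk hqbn hnk hSZ
theorem corollary_1_8 (n : ℕ) (hn : 2 ≤ n) (a : ℕ → ℤ)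
    (ha0 : a 0 ≠ 0) (han : a n ≠ 0)
    (p q : ℕ) (hp : p.Prime) (hq : q.Prime) (hpq : p ≠ q)
    (k : ℕ) (hk : 0 < k)
    (hp1 : ¬ (p : ℤ) ∣ a 1)
    (hp2 : ∀ i, 1 < i → i ≤ n → (p : ℤ) ∣ a i)
    (hp3 : ¬ (p : ℤ)^2 ∣ a n)
    (hq1 : ¬ (q : ℤ) ∣ a 0)
    (hq2 : ∀ i, 0 < i → i ≤ n → (q : ℤ)^k ∣ a i)
    (hq3 : ¬ (q : ℤ)^(k+1) ∣ a n)
    (hnk : ¬ n ∣ k) :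
    Irreducible ((∑ i ∈ range (n+1), C (a i) * X ^ i).map (Int.castRingHom ℚ)) := by
  have hpz : Prime (p:ℤ) := Int.prime_iff_natAbs_prime.mpr (by simpa)
  have hqz : Prime (q:ℤ) := Int.prime_iff_natAbs_prime.mpr (by simpa)
  set f : ℤ[X] := ∑ i ∈ range (n+1), C (a i) * X ^ i with hf
  have hcoeff : ∀ j, f.coeff j = if j < n+1 then a j else 0 := by
    intro j
    rw [hf, finset_sum_coeff]
    simp only [coeff_C_mul, coeff_X_pow, mul_ite, mul_one, mul_zero]
    rw [Finset.sum_ite_eq (range (n+1)) j a]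
    simp [Finset.mem_range]
  have hfn : f.coeff n = a n := by rw [hcoeff]; simp
  have hfdeg : f.natDegree = n := by
    apply le_antisymm
    · rw [natDegree_le_iff_coeff_eq_zero]
      intro m hm
      rw [hcoeff]
      simp [Nat.lt_succ_iff]; omega
    · exact le_natDegree_of_ne_zero (hfn ▸ han)
  have hf0 : f ≠ 0 := fun h => han (by rw [← hfn, h]; simp)
  set c := f.content with hc
  set g := f.primPart with hg
  have heq : f = C c * g := f.eq_C_content_mul_primPart
  have hc0 : c ≠ 0 := fun h => hf0 (content_eq_zero_iff.mp h)
  have hgc : ∀ i, i ≤ n → a i = c * g.coeff i := by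
    intro i hi
    have h1 : f.coeff i = a i := by rw [hcoeff]; simp [Nat.lt_succ_iff, hi]
    rw [← h1]
    conv_lhs => rw [heq]
    rw [coeff_C_mul]
  have hgdeg : g.natDegree = n := by
    rw [heq, natDegree_C_mul hc0] at hfdeg; exact hfdeg
  have hpc : ¬ (p:ℤ) ∣ c := fun h => hp1 (by rw [hgc 1 (by omega)]; exact h.mul_right _)
  have hqc : ¬ (q:ℤ) ∣ c := fun h => hq1 (by rw [hgc 0 (by omega)]; exact h.mul_right _)
  have hb1 : ¬ (p:ℤ) ∣ g.coeff 1 := fun h => hp1 (by rw [hgc 1 (by omega)]; exact h.mul_left _)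
  have hbi : ∀ i, 1 < i → (p:ℤ) ∣ g.coeff i := by
    intro i hi
    rcases le_or_gt i n with h | h
    · have := hp2 i hi h
      rw [hgc i h] at this
      exact (hpz.2.2 _ _ this).resolve_left hpc
    · rw [coeff_eq_zero_of_natDegree_lt (hgdeg ▸ h)]
      exact dvd_zero _
  have hqb0 : ¬ (q:ℤ) ∣ g.coeff 0 := fun h => hq1 (by rw [hgc 0 (by omega)]; exact h.mul_left _)
  have hqkg : ∀ i, 0 < i → i ≤ n → (q:ℤ)^k ∣ g.coeff i := by
    intro i h0 h1
    have := hq2 i h0 h1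
    rw [hgc i h1] at this
    exact hqz.pow_dvd_of_dvd_mul_left k hqc this
  have hq3g : ¬ (q:ℤ)^(k+1) ∣ g.coeff n := fun h =>
    hq3 (by rw [hgc n le_rfl]; exact h.mul_left _)
  have hp3g : ¬ (p:ℤ)^2 ∣ g.coeff n := fun h =>
    hp3 (by rw [hgc n le_rfl]; exact h.mul_left _)
  have hpbn : (p:ℤ) ∣ g.coeff n := hbi n (by omega)
  -- irreducibility of g over ℤ
  have hgirr : Irreducible g := by
    constructor
    · exact not_isUnit_of_natDegree_pos g (by omega)
    · intro u v huv
      by_contra hcon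
      push_neg at hcon
      obtain ⟨hu, hv⟩ := hcon
      have hglead : g.leadingCoeff = g.coeff n := by rw [leadingCoeff, hgdeg]
      have hlead : u.leadingCoeff * v.leadingCoeff = g.coeff n := by
        rw [← leadingCoeff_mul, ← huv, hglead]
      have hpor := hpz.2.2 u.leadingCoeff v.leadingCoeff (hlead ▸ hpbn)
      have hprim : g.IsPrimitive := f.isPrimitive_primPart
      rcases hpor with hpu | hpv
      · have hnv : ¬ (p:ℤ) ∣ v.leadingCoeff := fun h2 => hp3g (by
          rw [← hlead, sq]
          exact mul_dvd_mul hpu h2)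
        exact aux_linear n hn p q k hp hq hk hnk g u v hgdeg huv hprim hnv hv hb1 hbi
          hqb0 hqkg hq3g
      · have hnu : ¬ (p:ℤ) ∣ u.leadingCoeff := fun h2 => hp3g (by
          rw [← hlead, sq]
          exact mul_dvd_mul h2 hpv)
        exact aux_linear n hn p q k hp hq hk hnk g v u hgdeg (by rw [huv, mul_comm]) hprim hnu hu
          hb1 hbi hqb0 hqkg hq3g
  have hirrmapg : Irreducible (g.map (Int.castRingHom ℚ)) :=
    (Polynomial.IsPrimitive.Int.irreducible_iff_irreducible_map_cast
      (f.isPrimitive_primPart)).mp hgirr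
  have hmapeq : f.map (Int.castRingHom ℚ) = C ((c:ℚ)) * g.map (Int.castRingHom ℚ) := by
    conv_lhs => rw [heq]
    rw [Polynomial.map_mul, Polynomial.map_C]
    norm_num
  have hcu : IsUnit (C ((c:ℚ)) : ℚ[X]) :=
    isUnit_C.mpr (isUnit_iff_ne_zero.mpr (Int.cast_ne_zero.mpr hc0))
  have hassoc : Associated (g.map (Int.castRingHom ℚ)) (f.map (Int.castRingHom ℚ)) := by
    rw [hmapeq]
    exact (associated_unit_mul_left _ _ hcu).symm
  exact hassoc.irreducible hirrmapg
end

section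
/- Let f(X) = a_0 + a_1 X + ... + a_n X^n ∈ Z[X] with a_0 a_n ≠ 0. Suppose there exist two distinct primes p and q and a positive integer k such that: (i) p divides a_i for all i < n-1, p does not divide a_{n-1}, and p^2 does not divide a_0; (ii) q does not divide a_0, q^k divides a_i for all i > 0, q^{k+1} does not divide a_n, and n does not divide k. Then f is irreducible over Q. -/
open Polynomial Finset

private lemma int_prime_cast {q : ℕ} (hq : q.Prime) : Prime (q : ℤ) := by
  rw [Int.prime_iff_natAbs_prime]; simpa using hq

/-- A polynomial of degree `n` whose coefficients satisfy the `q`-adic condition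
(ii) has no linear factor over `ℤ`. -/
private lemma aux_linear_s6 (n : ℕ) (hn : 2 ≤ n) (q : ℕ) (hq : q.Prime)
    (k : ℕ) (hk : 0 < k) (hnk : ¬ n ∣ k) (g u : Polynomial ℤ)
    (hdeg : g.natDegree = n) (hu : u ∣ g) (hu1 : u.natDegree = 1)
    (hq1 : ¬ (q:ℤ) ∣ g.coeff 0)
    (hq2 : ∀ i, 0 < i → i ≤ n → (q:ℤ)^k ∣ g.coeff i)
    (hq3 : ¬ (q:ℤ)^(k+1) ∣ g.coeff n) : False := by
  have hqZ : Prime (q : ℤ) := int_prime_cast hq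
  obtain ⟨w, hw⟩ := hu
  set d : ℤ := u.coeff 1 with hd_def
  set e : ℤ := u.coeff 0 with he_def
  have hune : u ≠ 0 := by
    intro h; rw [h] at hu1; simp at hu1
  have hd : d ≠ 0 := by
    have := Polynomial.leadingCoeff_ne_zero.mpr hune
    rwa [Polynomial.leadingCoeff, hu1] at this
  have hqe : ¬ (q:ℤ) ∣ e := by
    intro h
    apply hq1
    rw [hw, Polynomial.mul_coeff_zero]
    exact h.mul_right _
  -- the rational root
  have hdq : (d : ℚ) ≠ 0 := Int.cast_ne_zero.mpr hd
  have hx0 : Polynomial.eval₂ (Int.castRingHom ℚ) ((-e : ℚ)/(d:ℚ)) u = 0 := by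
    rw [Polynomial.eval₂_eq_sum_range, hu1]
    simp only [Finset.sum_range_succ, Finset.sum_range_zero, pow_zero, pow_one,
      eq_intCast, zero_add, mul_one, ← he_def, ← hd_def]
    field_simp
    ring
  have heval : Polynomial.eval₂ (Int.castRingHom ℚ) ((-e : ℚ)/(d:ℚ)) g = 0 := by
    rw [hw, Polynomial.eval₂_mul, hx0, zero_mul]
  have hsum : ∑ i ∈ range (n+1), (g.coeff i : ℚ) * ((-e:ℚ)/d) ^ i = 0 := by
    rw [Polynomial.eval₂_eq_sum_range, hdeg] at heval
    simpa using heval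
  have key : ∑ i ∈ range (n+1), g.coeff i * (-e)^i * d^(n-i) = 0 := by
    have h2 : ((∑ i ∈ range (n+1), g.coeff i * (-e)^i * d^(n-i) : ℤ) : ℚ) = 0 := by
      push_cast
      calc ∑ i ∈ range (n+1), (g.coeff i:ℚ) * (-e:ℚ)^i * (d:ℚ)^(n-i)
          = ∑ i ∈ range (n+1), ((g.coeff i:ℚ) * ((-e:ℚ)/d)^i) * (d:ℚ)^n := by
            refine Finset.sum_congr rfl fun i hi => ?_
            rw [Finset.mem_range, Nat.lt_succ_iff] at hi
            have hdn : (d:ℚ)^n = d^i * d^(n-i) := by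
              rw [← pow_add, Nat.add_sub_cancel' hi]
            rw [hdn, div_pow]
            have hdi : (d:ℚ)^i ≠ 0 := pow_ne_zero _ hdq
            field_simp
        _ = 0 := by rw [← Finset.sum_mul, hsum, zero_mul]
    exact_mod_cast h2
  set S : ℕ → ℤ := fun i => g.coeff i * (-e)^i * d^(n-i) with hS_def
  -- q-adic valuation of d
  have hfin : FiniteMultiplicity (q:ℤ) d :=
    Int.finiteMultiplicity_iff.mpr ⟨by simpa using hq.ne_one, hd⟩
  obtain ⟨d', hdd, hqd'⟩ := hfin.exists_eq_pow_mul_and_not_dvd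
  set t : ℕ := multiplicity (q:ℤ) d with ht_def
  have hS0div : (q:ℤ)^(n*t) ∣ S 0 := by
    have : S 0 = (q:ℤ)^(n*t) * (g.coeff 0 * d'^n) := by
      simp only [hS_def, pow_zero, mul_one, Nat.sub_zero, hdd]
      rw [mul_pow, ← pow_mul]
      ring
    rw [this]
    exact Dvd.intro _ rfl
  have hS0not : ¬ (q:ℤ)^(n*t+1) ∣ S 0 := by
    intro hdvd
    have h1 : S 0 = (q:ℤ)^(n*t) * (g.coeff 0 * d'^n) := by
      simp only [hS_def, pow_zero, mul_one, Nat.sub_zero, hdd]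
      rw [mul_pow, ← pow_mul]
      ring
    rw [h1, pow_succ] at hdvd
    have h2 : (q:ℤ) ∣ g.coeff 0 * d'^n :=
      (mul_dvd_mul_iff_left (pow_ne_zero (n*t) hqZ.ne_zero)).mp hdvd
    rcases hqZ.dvd_mul.mp h2 with h | h
    · exact hq1 h
    · exact hqd' (hqZ.dvd_of_dvd_pow h)
  have hmid : ∀ i, 0 < i → i < n → (q:ℤ)^(k+t) ∣ S i := by
    intro i hi0 hin
    have h1 : (q:ℤ)^k ∣ g.coeff i * (-e)^i := (hq2 i hi0 hin.le).mul_right _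
    have h2 : (q:ℤ)^t ∣ d^(n-i) :=
      (Dvd.intro _ hdd.symm).trans (dvd_pow_self d (Nat.sub_ne_zero_of_lt hin))
    rw [pow_add]
    exact mul_dvd_mul h1 h2
  have hSndiv : (q:ℤ)^k ∣ S n := by
    have : S n = g.coeff n * (-e)^n * 1 := by simp [hS_def]
    rw [this, mul_one]
    exact (hq2 n (by omega) le_rfl).mul_right _
  have hSnnot : ¬ (q:ℤ)^(k+1) ∣ S n := by
    intro hdvd
    have h1 : S n = g.coeff n * (-e)^n := by simp [hS_def]
    rw [h1] at hdvd
    have h2 : ¬ (q:ℤ) ∣ (-e)^n := by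
      intro h
      exact hqe (Int.dvd_neg.mp (hqZ.dvd_of_dvd_pow h))
    exact hq3 (hqZ.pow_dvd_of_dvd_mul_right _ h2 hdvd)
  rcases lt_trichotomy (n*t) k with hlt | heq | hgt
  · -- n*t < k : contradiction at S 0
    have hdvd : (q:ℤ)^(n*t+1) ∣ ∑ i ∈ range n, S (i+1) := by
      refine Finset.dvd_sum fun i hi => ?_
      rw [Finset.mem_range] at hi
      by_cases h : i + 1 = n
      · rw [h]
        exact (pow_dvd_pow _ (by omega)).trans hSndiv
      · exact (pow_dvd_pow _ (by omega : n*t+1 ≤ k+t)).trans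
          (hmid (i+1) (by omega) (by omega))
    have hS0 : S 0 = -(∑ i ∈ range n, S (i+1)) := by
      have := Finset.sum_range_succ' S n
      rw [key] at this
      linarith [this]
    rw [hS0] at hS0not
    exact hS0not ((dvd_neg).mpr hdvd)
  · exact hnk ⟨t, heq.symm⟩
  · -- k < n*t : contradiction at S n
    have ht1 : 1 ≤ t := by
      rcases Nat.eq_zero_or_pos t with h | h
      · rw [h, Nat.mul_zero] at hgt; omega
      · exact h
    have hdvd : (q:ℤ)^(k+1) ∣ ∑ i ∈ range n, S i := by
      refine Finset.dvd_sum fun i hi => ?_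
      rw [Finset.mem_range] at hi
      rcases Nat.eq_zero_or_pos i with h | h
      · rw [h]
        exact (pow_dvd_pow _ (by omega)).trans hS0div
      · exact (pow_dvd_pow _ (by omega : k+1 ≤ k+t)).trans (hmid i h hi)
    have hSn : S n = -(∑ i ∈ range n, S i) := by
      have := Finset.sum_range_succ S n
      rw [key] at this
      linarith [this]
    rw [hSn] at hSnnot
    exact hSnnot ((dvd_neg).mpr hdvd)

/-- The mod-`p` argument: if the low coefficients of `g = u * v` vanish mod `p`
but the constant coefficient of `u` does not, then `v` has large degree. -/
private lemma aux_modp (n p : ℕ) (hp : p.Prime) (g u v : Polynomial ℤ)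
    (hg : g = u * v)
    (h1 : ∀ i < n - 1, (p:ℤ) ∣ g.coeff i)
    (h2 : ¬ (p:ℤ) ∣ g.coeff (n-1))
    (hu0 : ¬ (p:ℤ) ∣ u.coeff 0) :
    n - 1 ≤ v.natDegree := by
  haveI := Fact.mk hp
  set φ := Int.castRingHom (ZMod p) with hφ
  have hX : (X : (ZMod p)[X])^(n-1) ∣ g.map φ := by
    rw [Polynomial.X_pow_dvd_iff]
    intro i hi
    rw [Polynomial.coeff_map]
    have : ((g.coeff i : ℤ) : ZMod p) = 0 :=
      (ZMod.intCast_zmod_eq_zero_iff_dvd _ _).mpr (h1 i hi)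
    simpa [hφ] using this
  have hV : v.map φ ≠ 0 := by
    intro h0
    apply h2
    have hc : (g.map φ).coeff (n-1) = 0 := by
      rw [hg, Polynomial.map_mul, h0, mul_zero, Polynomial.coeff_zero]
    rw [Polynomial.coeff_map] at hc
    have : ((g.coeff (n-1) : ℤ) : ZMod p) = 0 := by simpa [hφ] using hc
    exact (ZMod.intCast_zmod_eq_zero_iff_dvd _ _).mp this
  have hXU : ¬ (X : (ZMod p)[X]) ∣ u.map φ := by
    rw [Polynomial.X_dvd_iff, Polynomial.coeff_map]
    intro hc
    have : ((u.coeff 0 : ℤ) : ZMod p) = 0 := by simpa [hφ] using hc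
    exact hu0 ((ZMod.intCast_zmod_eq_zero_iff_dvd _ _).mp this)
  have hXV : (X : (ZMod p)[X])^(n-1) ∣ v.map φ := by
    refine Polynomial.prime_X.pow_dvd_of_dvd_mul_left _ hXU ?_
    rwa [← Polynomial.map_mul, ← hg]
  calc n - 1 = ((X : (ZMod p)[X])^(n-1)).natDegree := (Polynomial.natDegree_X_pow _).symm
    _ ≤ (v.map φ).natDegree := Polynomial.natDegree_le_of_dvd hXV hV
    _ ≤ v.natDegree := Polynomial.natDegree_map_le

theorem corollary_1_11 (n : ℕ) (hn : 2 ≤ n) (a : ℕ → ℤ)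
    (ha0 : a 0 ≠ 0) (han : a n ≠ 0)
    (p q : ℕ) (hp : p.Prime) (hq : q.Prime) (hpq : p ≠ q)
    (k : ℕ) (hk : 0 < k)
    (hp1 : ∀ i < n - 1, (p : ℤ) ∣ a i)
    (hp2 : ¬ (p : ℤ) ∣ a (n - 1))
    (hp3 : ¬ (p : ℤ)^2 ∣ a 0)
    (hq1 : ¬ (q : ℤ) ∣ a 0)
    (hq2 : ∀ i, 0 < i → i ≤ n → (q : ℤ)^k ∣ a i)
    (hq3 : ¬ (q : ℤ)^(k+1) ∣ a n)
    (hnk : ¬ n ∣ k) :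
    Irreducible ((∑ i ∈ range (n+1), C (a i) * X ^ i).map (Int.castRingHom ℚ)) := by
  have hpZ : Prime (p : ℤ) := int_prime_cast hp
  have hqZ : Prime (q : ℤ) := int_prime_cast hq
  set f : Polynomial ℤ := ∑ i ∈ range (n+1), C (a i) * X ^ i with hf_def
  have hcoeff : ∀ j, j ≤ n → f.coeff j = a j := by
    intro j hj
    rw [hf_def, Polynomial.finset_sum_coeff]
    simp only [Polynomial.coeff_C_mul, Polynomial.coeff_X_pow, mul_ite, mul_one, mul_zero]
    rw [Finset.sum_ite_eq (range (n+1)) j a]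
    simp [Nat.lt_succ_iff, hj]
  have hcoeff_top : ∀ j, n < j → f.coeff j = 0 := by
    intro j hj
    rw [hf_def, Polynomial.finset_sum_coeff]
    simp only [Polynomial.coeff_C_mul, Polynomial.coeff_X_pow, mul_ite, mul_one, mul_zero]
    rw [Finset.sum_ite_eq (range (n+1)) j a]
    simp [Nat.lt_succ_iff, Nat.not_le.mpr hj]
  have hf0 : f ≠ 0 := by
    intro h
    apply han
    rw [← hcoeff n le_rfl, h, Polynomial.coeff_zero]
  have hfdeg : f.natDegree = n := by
    apply le_antisymm
    · rw [Polynomial.natDegree_le_iff_coeff_eq_zero]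
      intro j hj
      exact hcoeff_top j hj
    · apply Polynomial.le_natDegree_of_ne_zero
      rw [hcoeff n le_rfl]
      exact han
  -- pass to the primitive part
  set c : ℤ := f.content with hc_def
  set g : Polynomial ℤ := f.primPart with hg_def
  have hfcg : f = C c * g := f.eq_C_content_mul_primPart
  have hgprim : g.IsPrimitive := f.isPrimitive_primPart
  have hgdeg : g.natDegree = n := by rw [hg_def, Polynomial.natDegree_primPart, hfdeg]
  have hg0 : g ≠ 0 := f.primPart_ne_zero
  have hacb : ∀ i, i ≤ n → a i = c * g.coeff i := by
    intro i hi
    rw [← hcoeff i hi, hfcg, Polynomial.coeff_C_mul]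
  -- p and q do not divide c
  have hpc : ¬ (p:ℤ) ∣ c := by
    intro h
    exact hp2 ((hacb (n-1) (by omega)).symm ▸ h.mul_right _)
  have hqc : ¬ (q:ℤ) ∣ c := by
    intro h
    exact hq1 ((hacb 0 (by omega)).symm ▸ h.mul_right _)
  -- transfer hypotheses to g
  have hb_p1 : ∀ i < n - 1, (p:ℤ) ∣ g.coeff i := by
    intro i hi
    have := hp1 i hi
    rw [hacb i (by omega)] at this
    exact (hpZ.dvd_mul.mp this).resolve_left hpc
  have hb_p2 : ¬ (p:ℤ) ∣ g.coeff (n-1) := by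
    intro h
    exact hp2 ((hacb (n-1) (by omega)).symm ▸ h.mul_left _)
  have hb_p3 : ¬ (p:ℤ)^2 ∣ g.coeff 0 := by
    intro h
    exact hp3 ((hacb 0 (by omega)).symm ▸ h.mul_left _)
  have hb_q1 : ¬ (q:ℤ) ∣ g.coeff 0 := by
    intro h
    exact hq1 ((hacb 0 (by omega)).symm ▸ h.mul_left _)
  have hb_q2 : ∀ i, 0 < i → i ≤ n → (q:ℤ)^k ∣ g.coeff i := by
    intro i hi0 hin
    have h1 := hq2 i hi0 hin
    rw [hacb i hin] at h1
    exact hqZ.pow_dvd_of_dvd_mul_left _ hqc h1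
  have hb_q3 : ¬ (q:ℤ)^(k+1) ∣ g.coeff n := by
    intro h
    exact hq3 ((hacb n le_rfl).symm ▸ h.mul_left _)
  -- g is irreducible over ℤ
  have hgirr : Irreducible g := by
    constructor
    · intro hunit
      have := Polynomial.natDegree_eq_zero_of_isUnit hunit
      omega
    · intro u v huv
      by_contra hcon
      push_neg at hcon
      obtain ⟨hnu, hnv⟩ := hcon
      have hconst : ∀ w z : Polynomial ℤ, g = w * z → w.natDegree = 0 → IsUnit w := by
        intro w z hwz h
        obtain ⟨x, hx⟩ := Polynomial.natDegree_eq_zero.mp h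
        rw [← hx]
        refine Polynomial.isUnit_C.mpr (hgprim x ⟨z, ?_⟩)
        rw [hx]
        exact hwz
      have main : ∀ w z : Polynomial ℤ, g = w * z → ¬ (p:ℤ) ∣ w.coeff 0 →
          w.natDegree ≠ 0 → False := by
        intro w z hwz hw0 hwdeg
        have hwne : w ≠ 0 := by rintro rfl; rw [zero_mul] at hwz; exact hg0 hwz
        have hzne : z ≠ 0 := by rintro rfl; rw [mul_zero] at hwz; exact hg0 hwz
        have hzdeg : n - 1 ≤ z.natDegree := aux_modp n p hp g w z hwz hb_p1 hb_p2 hw0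
        have hsum : w.natDegree + z.natDegree = n := by
          rw [← hgdeg, hwz, Polynomial.natDegree_mul hwne hzne]
        have hw1 : w.natDegree = 1 := by omega
        exact aux_linear_s6 n hn q hq k hk hnk g w hgdeg ⟨z, hwz⟩ hw1 hb_q1 hb_q2 hb_q3
      have hdu : u.natDegree ≠ 0 := fun h => hnu (hconst u v huv h)
      have hdv : v.natDegree ≠ 0 := fun h => hnv (hconst v u (by rw [huv, mul_comm]) h)
      have hp0 : ¬ ((p:ℤ) ∣ u.coeff 0 ∧ (p:ℤ) ∣ v.coeff 0) := by
        rintro ⟨h1, h2⟩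
        apply hb_p3
        rw [huv, Polynomial.mul_coeff_zero, pow_two]
        exact mul_dvd_mul h1 h2
      by_cases hcase : (p:ℤ) ∣ u.coeff 0
      · have hv0' : ¬ (p:ℤ) ∣ v.coeff 0 := fun h => hp0 ⟨hcase, h⟩
        exact main v u (by rw [huv, mul_comm]) hv0' hdv
      · exact main u v huv hcase hdu
  -- transfer irreducibility along the unit C c
  have hmap : Irreducible (g.map (Int.castRingHom ℚ)) :=
    (Polynomial.IsPrimitive.Int.irreducible_iff_irreducible_map_cast hgprim).mp hgirr
  have hcne : (c : ℚ) ≠ 0 := by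
    rw [Int.cast_ne_zero, hc_def]
    exact fun h => hf0 (Polynomial.content_eq_zero_iff.mp h)
  have heq : f.map (Int.castRingHom ℚ) =
      Polynomial.C (c:ℚ) * g.map (Int.castRingHom ℚ) := by
    conv_lhs => rw [hfcg]
    rw [Polynomial.map_mul, Polynomial.map_C]
    norm_num
  have hunit : IsUnit (Polynomial.C (c:ℚ)) :=
    Polynomial.isUnit_C.mpr (isUnit_iff_ne_zero.mpr hcne)
  have hassoc : Associated (g.map (Int.castRingHom ℚ))
      (Polynomial.C (c:ℚ) * g.map (Int.castRingHom ℚ)) :=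
    ⟨hunit.unit, by rw [mul_comm, hunit.unit_spec]⟩
  rw [heq]
  exact hassoc.irreducible hmap
end

section
/- Let f(X) = a_0 + a_1 X + ... + a_n X^n ∈ Z[X] with a_0 a_n ≠ 0. Suppose there exist two distinct primes p and q, a positive integer k, and an index j with j < n/gcd(k,n), such that: (i) p does not divide a_i for all i ≤ j, p divides a_i for all i > j, and p^2 does not divide a_n; (ii) q does not divide a_0, q^k divides a_i for all i > 0, and q^{k+1} does not divide a_n. Then f is irreducible over Q. -/
open Polynomial Finset

lemma exists_min_attain {s : Finset ℕ} (hs : s.Nonempty) (v : ℕ → ℤ) :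
    ∃ i ∈ s, v i = s.inf' hs v ∧ ∀ b ∈ s, b < i → s.inf' hs v < v b := by
  classical
  set A := s.filter (fun i => v i = s.inf' hs v) with hA
  have hAne : A.Nonempty := by
    obtain ⟨i, hi, hv⟩ := Finset.exists_mem_eq_inf' hs v
    exact ⟨i, Finset.mem_filter.2 ⟨hi, hv.symm⟩⟩
  have hmem := Finset.mem_filter.1 (A.min'_mem hAne)
  refine ⟨A.min' hAne, hmem.1, hmem.2, ?_⟩
  intro b hb hlt
  rcases (Finset.inf'_le v hb).lt_or_eq with h | h
  · exact h
  · exact absurd (A.min'_le b (Finset.mem_filter.2 ⟨hb, h.symm⟩)) (by omega)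

lemma pow_dvd_iff_le_val {P : ℕ} (hP : P.Prime) {x : ℤ} (hx : x ≠ 0) {t : ℕ} :
    (P:ℤ)^t ∣ x ↔ t ≤ padicValInt P x := by
  haveI : Fact P.Prime := ⟨hP⟩
  rw [padicValInt_dvd_iff]; simp [hx]

lemma core_s7 {P : ℕ} (hP : P.Prime) {M : ℕ} (hM : 0 < M) (T : ℤ)
    {g h : ℤ[X]} (hgne : g.support.Nonempty) (hhne : h.support.Nonempty) :
    ∃ c, (g*h).coeff c ≠ 0 ∧
      (M : ℤ) * padicValInt P ((g*h).coeff c) + T * c ≤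
        (g.support.inf' hgne fun i => (M:ℤ) * padicValInt P (g.coeff i) + T*i) +
        (h.support.inf' hhne fun i => (M:ℤ) * padicValInt P (h.coeff i) + T*i) := by
  classical
  haveI : Fact P.Prime := ⟨hP⟩
  set vg : ℕ → ℤ := fun i => (M:ℤ) * padicValInt P (g.coeff i) + T*i with hvg
  set vh : ℕ → ℤ := fun i => (M:ℤ) * padicValInt P (h.coeff i) + T*i with hvh
  set Sg := g.support.inf' hgne vg with hSg
  set Sh := h.support.inf' hhne vh with hSh
  obtain ⟨ig, higs, higv, higmin⟩ := exists_min_attain hgne vg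
  obtain ⟨ih, hihs, hihv, hihmin⟩ := exists_min_attain hhne vh
  set c := ig + ih with hc
  have hgig : g.coeff ig ≠ 0 := mem_support_iff.1 higs
  have hhih : h.coeff ih ≠ 0 := mem_support_iff.1 hihs
  set w := padicValInt P (g.coeff ig) + padicValInt P (h.coeff ih) with hw
  have hmain_ne : g.coeff ig * h.coeff ih ≠ 0 := mul_ne_zero hgig hhih
  have hmainval : padicValInt P (g.coeff ig * h.coeff ih) = w := padicValInt.mul hgig hhih
  have hmain_ndvd : ¬ (P:ℤ)^(w+1) ∣ g.coeff ig * h.coeff ih := by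
    rw [pow_dvd_iff_le_val hP hmain_ne, hmainval]; omega
  have hSgSh : Sg + Sh = (M:ℤ)*w + T*c := by
    rw [hSg, hSh, ← higv, ← hihv]; simp only [hvg, hvh, hw, hc]; push_cast; ring
  have hrest : ∀ x ∈ (Finset.HasAntidiagonal.antidiagonal c).erase (ig, ih),
      (P:ℤ)^(w+1) ∣ g.coeff x.1 * h.coeff x.2 := by
    rintro ⟨b1, b2⟩ hx
    rw [Finset.mem_erase, Finset.HasAntidiagonal.mem_antidiagonal] at hx
    by_cases hga : g.coeff b1 = 0
    · simp [hga]
    by_cases hhb : h.coeff b2 = 0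
    · simp [hhb]
    have has : b1 ∈ g.support := mem_support_iff.2 hga
    have hbs : b2 ∈ h.support := mem_support_iff.2 hhb
    have hstrict : Sg + Sh + 1 ≤ vg b1 + vh b2 := by
      rcases lt_trichotomy b1 ig with hlt | heq | hgt
      · have h1 : Sg < vg b1 := higmin b1 has hlt
        have h2 : Sh ≤ vh b2 := Finset.inf'_le vh hbs
        omega
      · exfalso; apply hx.1; simp only [heq, Prod.mk.injEq, true_and]; omega
      · have hb2 : b2 < ih := by omega
        have h1 : Sg ≤ vg b1 := Finset.inf'_le vg has
        have h2 : Sh < vh b2 := hihmin b2 hbs hb2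
        omega
    have hsum : vg b1 + vh b2 = (M:ℤ) * (padicValInt P (g.coeff b1) + padicValInt P (h.coeff b2)) + T*c := by
      simp only [hvg, hvh]; rw [← hx.2]; push_cast; ring
    have hval : w + 1 ≤ padicValInt P (g.coeff b1) + padicValInt P (h.coeff b2) := by
      rw [hsum] at hstrict
      rw [hSgSh] at hstrict
      have : (M:ℤ) * w < (M:ℤ) * (padicValInt P (g.coeff b1) + padicValInt P (h.coeff b2)) := by
        omega
      have := lt_of_mul_lt_mul_left this (by positivity)
      exact_mod_cast this
    calc (P:ℤ)^(w+1) ∣ (P:ℤ)^(padicValInt P (g.coeff b1) + padicValInt P (h.coeff b2)) :=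
          pow_dvd_pow _ hval
      _ ∣ g.coeff b1 * h.coeff b2 := by
          rw [pow_add]; exact mul_dvd_mul (padicValInt_dvd _) (padicValInt_dvd _)
  have hdvd_rest : (P:ℤ)^(w+1) ∣ ∑ x ∈ (Finset.HasAntidiagonal.antidiagonal c).erase (ig, ih),
      g.coeff x.1 * h.coeff x.2 := Finset.dvd_sum hrest
  have hcoeff : (g*h).coeff c = g.coeff ig * h.coeff ih +
      ∑ x ∈ (Finset.HasAntidiagonal.antidiagonal c).erase (ig, ih), g.coeff x.1 * h.coeff x.2 := by
    rw [coeff_mul]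
    exact (Finset.add_sum_erase (Finset.HasAntidiagonal.antidiagonal c)
      (fun x : ℕ × ℕ => g.coeff x.1 * h.coeff x.2) (a := (ig, ih)) (Finset.HasAntidiagonal.mem_antidiagonal.2 hc.symm)).symm
  have hnd : ¬ (P:ℤ)^(w+1) ∣ (g*h).coeff c := by
    rw [hcoeff]; intro hd
    exact hmain_ndvd (by simpa using dvd_sub hd hdvd_rest)
  have hne : (g*h).coeff c ≠ 0 := by
    rintro h0; exact hnd (h0 ▸ dvd_zero _)
  have hle : padicValInt P ((g*h).coeff c) ≤ w := by
    by_contra hlt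
    exact hnd ((pow_dvd_iff_le_val hP hne).2 (by omega))
  refine ⟨c, hne, ?_⟩
  rw [hSgSh]
  have : (M:ℤ) * padicValInt P ((g*h).coeff c) ≤ (M:ℤ) * w := by
    apply mul_le_mul_of_nonneg_left _ (by positivity)
    exact_mod_cast hle
  omega

lemma fcoeff (n : ℕ) (a : ℕ → ℤ) (i : ℕ) :
    (∑ i ∈ range (n+1), C (a i) * X ^ i).coeff i = if i ≤ n then a i else 0 := by
  rw [finset_sum_coeff]
  simp only [coeff_C_mul, coeff_X_pow, mul_ite, mul_one, mul_zero]
  rw [Finset.sum_ite_eq (range (n+1)) i a]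
  simp [Nat.lt_succ_iff]

lemma fdeg (n : ℕ) (a : ℕ → ℤ) (han : a n ≠ 0) :
    (∑ i ∈ range (n+1), C (a i) * X ^ i).natDegree = n := by
  apply le_antisymm
  · apply Polynomial.natDegree_le_iff_coeff_eq_zero.2
    intro m hm; rw [fcoeff]; simp [Nat.not_le.2 hm]
  · exact le_natDegree_of_ne_zero (by rw [fcoeff]; simpa using han)

example (g : ℤ[X]) (hg : g ≠ 0) : g.natDegree ∈ g.support := natDegree_mem_support_of_nonzero hg

lemma claimA (n k : ℕ) (hn : 1 ≤ n) (hk : 0 < k) (a : ℕ → ℤ)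
    (ha0 : a 0 ≠ 0) (han : a n ≠ 0) (q : ℕ) (hq : q.Prime)
    (hq1 : ¬ (q : ℤ) ∣ a 0) (hq2 : ∀ i, 0 < i → i ≤ n → (q : ℤ)^k ∣ a i)
    (hq3 : ¬ (q : ℤ)^(k+1) ∣ a n)
    (g h : ℤ[X]) (hgh : (∑ i ∈ range (n+1), C (a i) * X ^ i) = g * h) :
    n ∣ k * g.natDegree := by
  classical
  haveI : Fact q.Prime := ⟨hq⟩
  set f := (∑ i ∈ range (n+1), C (a i) * X ^ i) with hf
  have hfc : ∀ i, f.coeff i = if i ≤ n then a i else 0 := fcoeff n a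
  have hfn : f.natDegree = n := fdeg n a han
  have hfne : f ≠ 0 := fun h0 => han (by simpa [h0, Nat.le_refl] using (hfc n).symm)
  have hgne : g ≠ 0 := fun h0 => hfne (by rw [hgh, h0, zero_mul])
  have hhne : h ≠ 0 := fun h0 => hfne (by rw [hgh, h0, mul_zero])
  set r := g.natDegree with hr
  set s := h.natDegree with hs
  have hrs : r + s = n := by rw [hr, hs, ← natDegree_mul hgne hhne, ← hgh, hfn]
  have h00 : g.coeff 0 * h.coeff 0 = a 0 := by
    rw [← Polynomial.mul_coeff_zero, ← hgh, hfc 0]; simp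
  have hlead : g.coeff r * h.coeff s = a n := by
    have : (g * h).leadingCoeff = g.leadingCoeff * h.leadingCoeff := leadingCoeff_mul g h
    rw [← hgh] at this
    rw [leadingCoeff, leadingCoeff, leadingCoeff, hfn, hfc n, if_pos le_rfl] at this
    exact this.symm
  have hg0 : g.coeff 0 ≠ 0 := fun h0 => ha0 (by rw [← h00, h0, zero_mul])
  have hh0 : h.coeff 0 ≠ 0 := fun h0 => ha0 (by rw [← h00, h0, mul_zero])
  have hgr : g.coeff r ≠ 0 := fun h0 => han (by rw [← hlead, h0, zero_mul])
  have hhs : h.coeff s ≠ 0 := fun h0 => han (by rw [← hlead, h0, mul_zero])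
  have hgsup : g.support.Nonempty := Polynomial.support_nonempty.2 hgne
  have hhsup : h.support.Nonempty := Polynomial.support_nonempty.2 hhne
  -- valuations
  have hva0 : padicValInt q (a 0) = 0 := padicValInt.eq_zero_of_not_dvd hq1
  have hvg0 : padicValInt q (g.coeff 0) = 0 ∧ padicValInt q (h.coeff 0) = 0 := by
    have := padicValInt.mul (p := q) hg0 hh0
    rw [h00, hva0] at this; omega
  have hvan : padicValInt q (a n) = k := by
    have h1 : k ≤ padicValInt q (a n) :=
      (pow_dvd_iff_le_val hq han).1 (hq2 n hn le_rfl)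
    have h2 : ¬ (k + 1 ≤ padicValInt q (a n)) := fun hc =>
      hq3 ((pow_dvd_iff_le_val hq han).2 hc)
    omega
  set vg : ℕ → ℤ := fun i => (n:ℤ) * padicValInt q (g.coeff i) + (-(k:ℤ))*i with hvgdef
  set vh : ℕ → ℤ := fun i => (n:ℤ) * padicValInt q (h.coeff i) + (-(k:ℤ))*i with hvhdef
  set Sg := g.support.inf' hgsup vg with hSg
  set Sh := h.support.inf' hhsup vh with hSh
  have hSgle : Sg ≤ 0 :=
    le_trans (Finset.inf'_le vg (mem_support_iff.2 hg0)) (by simp [hvgdef, hvg0.1])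
  have hShle : Sh ≤ 0 :=
    le_trans (Finset.inf'_le vh (mem_support_iff.2 hh0)) (by simp [hvhdef, hvg0.2])
  obtain ⟨c, hcne, hcle⟩ := core_s7 hq (M := n) hn (-(k:ℤ)) hgsup hhsup
  rw [← hgh] at hcne hcle
  have hcn : c ≤ n := by
    by_contra hc
    exact hcne (by rw [hfc c, if_neg hc])
  have hfcc : f.coeff c = a c := by rw [hfc c, if_pos hcn]
  have hlow : (0:ℤ) ≤ (n:ℤ) * padicValInt q (f.coeff c) + (-(k:ℤ))*c := by
    rcases Nat.eq_zero_or_pos c with hc0 | hcpos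
    · subst hc0
      simp only [Nat.cast_zero, mul_zero, neg_mul, neg_zero, add_zero]
      positivity
    · have hac : a c ≠ 0 := hfcc ▸ hcne
      have h1 : k ≤ padicValInt q (a c) :=
        (pow_dvd_iff_le_val hq hac).1 (hq2 c hcpos hcn)
      rw [hfcc]
      have h1' : (k:ℤ) ≤ padicValInt q (a c) := by exact_mod_cast h1
      have h2' : (c:ℤ) ≤ n := by exact_mod_cast hcn
      have h3 : (0:ℤ) ≤ k := by positivity
      nlinarith [mul_nonneg (show (0:ℤ) ≤ (n:ℤ) by positivity) (show (0:ℤ) ≤ (padicValInt q (a c):ℤ) - k by linarith),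
        mul_nonneg h3 (show (0:ℤ) ≤ (n:ℤ) - c by linarith)]
  have hsum0 : Sg + Sh = 0 := le_antisymm (by omega) (le_trans hlow hcle)
  -- equality at the top
  have hvgr : Sg ≤ (n:ℤ) * padicValInt q (g.coeff r) + (-(k:ℤ))*r :=
    Finset.inf'_le vg (natDegree_mem_support_of_nonzero hgne)
  have hvhs : Sh ≤ (n:ℤ) * padicValInt q (h.coeff s) + (-(k:ℤ))*s :=
    Finset.inf'_le vh (natDegree_mem_support_of_nonzero hhne)
  have hsumval : padicValInt q (g.coeff r) + padicValInt q (h.coeff s) = k := by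
    rw [← hvan, ← hlead, padicValInt.mul hgr hhs]
  have htop : (n:ℤ) * padicValInt q (g.coeff r) = (k:ℤ) * r := by
    have hA : ((padicValInt q (g.coeff r) : ℤ) + padicValInt q (h.coeff s)) = (k:ℤ) := by
      exact_mod_cast hsumval
    have hB : ((r:ℤ) + s) = (n:ℤ) := by exact_mod_cast hrs
    have e1 : (n:ℤ) * padicValInt q (g.coeff r) + (n:ℤ) * padicValInt q (h.coeff s)
        = (k:ℤ)*r + (k:ℤ)*s := by
      rw [← mul_add, ← mul_add, hA, hB]; ring
    linarith [hvgr, hvhs, hSgle, hShle, hsum0, e1]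
  have : n * padicValInt q (g.coeff r) = k * r := by exact_mod_cast htop
  exact ⟨_, this.symm⟩

lemma claimB (n j : ℕ) (hjn : j < n) (a : ℕ → ℤ)
    (ha0 : a 0 ≠ 0) (han : a n ≠ 0) (p : ℕ) (hp : p.Prime)
    (hp1 : ∀ i ≤ j, ¬ (p : ℤ) ∣ a i) (hp2 : ∀ i, j < i → i ≤ n → (p : ℤ) ∣ a i)
    (g h : ℤ[X]) (hgh : (∑ i ∈ range (n+1), C (a i) * X ^ i) = g * h)
    (hleadh : padicValInt p (h.coeff h.natDegree) = 0) :
    h.natDegree ≤ j := by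
  classical
  haveI : Fact p.Prime := ⟨hp⟩
  set m := n - j with hm
  have hm1 : 1 ≤ m := by omega
  set f := (∑ i ∈ range (n+1), C (a i) * X ^ i) with hf
  have hfc : ∀ i, f.coeff i = if i ≤ n then a i else 0 := fcoeff n a
  have hfn : f.natDegree = n := fdeg n a han
  have hfne : f ≠ 0 := fun h0 => han (by simpa [h0, Nat.le_refl] using (hfc n).symm)
  have hgne : g ≠ 0 := fun h0 => hfne (by rw [hgh, h0, zero_mul])
  have hhne : h ≠ 0 := fun h0 => hfne (by rw [hgh, h0, mul_zero])
  set r := g.natDegree with hr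
  set s := h.natDegree with hs
  have hrs : r + s = n := by rw [hr, hs, ← natDegree_mul hgne hhne, ← hgh, hfn]
  have h00 : g.coeff 0 * h.coeff 0 = a 0 := by
    rw [← Polynomial.mul_coeff_zero, ← hgh, hfc 0]; simp
  have hg0 : g.coeff 0 ≠ 0 := fun h0 => ha0 (by rw [← h00, h0, zero_mul])
  have hh0 : h.coeff 0 ≠ 0 := fun h0 => ha0 (by rw [← h00, h0, mul_zero])
  have hgsup : g.support.Nonempty := Polynomial.support_nonempty.2 hgne
  have hhsup : h.support.Nonempty := Polynomial.support_nonempty.2 hhne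
  have hva0 : padicValInt p (a 0) = 0 :=
    padicValInt.eq_zero_of_not_dvd (hp1 0 (Nat.zero_le j))
  have hvg0 : padicValInt p (g.coeff 0) = 0 ∧ padicValInt p (h.coeff 0) = 0 := by
    have := padicValInt.mul (p := p) hg0 hh0
    rw [h00, hva0] at this; omega
  set vg : ℕ → ℤ := fun i => (m:ℤ) * padicValInt p (g.coeff i) + (-1:ℤ)*i with hvgdef
  set vh : ℕ → ℤ := fun i => (m:ℤ) * padicValInt p (h.coeff i) + (-1:ℤ)*i with hvhdef
  set Sg := g.support.inf' hgsup vg with hSg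
  set Sh := h.support.inf' hhsup vh with hSh
  have hSgle : Sg ≤ 0 :=
    le_trans (Finset.inf'_le vg (mem_support_iff.2 hg0)) (by simp [hvgdef, hvg0.1])
  have hShle : Sh ≤ -(s:ℤ) := by
    have h1 : Sh ≤ vh s := Finset.inf'_le vh
      (by rw [hs]; exact natDegree_mem_support_of_nonzero hhne)
    have h2 : vh s = -(s:ℤ) := by simp [hvhdef, hleadh]
    rw [h2] at h1; exact h1
  obtain ⟨c, hcne, hcle⟩ := core_s7 hp (M := m) hm1 (-1:ℤ) hgsup hhsup
  rw [← hgh] at hcne hcle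
  have hcn : c ≤ n := by
    by_contra hc
    exact hcne (by rw [hfc c, if_neg hc])
  have hfcc : f.coeff c = a c := by rw [hfc c, if_pos hcn]
  have hlow : -(j:ℤ) ≤ (m:ℤ) * padicValInt p (f.coeff c) + (-1:ℤ)*c := by
    rw [hfcc]
    have hac : a c ≠ 0 := hfcc ▸ hcne
    rcases le_or_gt c j with hcj | hcj
    · have h1 : (0:ℤ) ≤ (m:ℤ) * padicValInt p (a c) := by positivity
      have h2 : (c:ℤ) ≤ j := by exact_mod_cast hcj
      linarith
    · have h1 : 1 ≤ padicValInt p (a c) := by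
        have := (pow_dvd_iff_le_val hp hac (t := 1)).1 (by simpa using hp2 c hcj hcn)
        omega
      have h1' : (1:ℤ) ≤ padicValInt p (a c) := by exact_mod_cast h1
      have h2' : (c:ℤ) ≤ n := by exact_mod_cast hcn
      have hmn : (m:ℤ) = (n:ℤ) - j := by
        have : m + j = n := by omega
        push_cast [← this]; ring
      nlinarith [mul_le_mul_of_nonneg_left h1' (show (0:ℤ) ≤ (m:ℤ) by positivity)]
  have : -(j:ℤ) ≤ Sg + Sh := le_trans hlow hcle
  have hsj : (s:ℤ) ≤ j := by linarith
  exact_mod_cast hsj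

lemma key (n : ℕ) (hn : 1 ≤ n) (a : ℕ → ℤ)
    (ha0 : a 0 ≠ 0) (han : a n ≠ 0)
    (p q : ℕ) (hp : p.Prime) (hq : q.Prime)
    (k : ℕ) (hk : 0 < k)
    (j : ℕ) (hj : j < n / Nat.gcd k n)
    (hp1 : ∀ i ≤ j, ¬ (p : ℤ) ∣ a i)
    (hp2 : ∀ i, j < i → i ≤ n → (p : ℤ) ∣ a i)
    (hp3 : ¬ (p : ℤ)^2 ∣ a n)
    (hq1 : ¬ (q : ℤ) ∣ a 0)
    (hq2 : ∀ i, 0 < i → i ≤ n → (q : ℤ)^k ∣ a i)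
    (hq3 : ¬ (q : ℤ)^(k+1) ∣ a n)
    (g h : ℤ[X]) (hgh : (∑ i ∈ range (n+1), C (a i) * X ^ i) = g * h)
    (hg1 : 1 ≤ g.natDegree) (hh1 : 1 ≤ h.natDegree) : False := by
  classical
  haveI : Fact p.Prime := ⟨hp⟩
  set G := Nat.gcd k n with hG
  have hGpos : 0 < G := Nat.gcd_pos_of_pos_right k hn
  set d := n / G with hd
  have hjn : j < n := lt_of_lt_of_le hj (Nat.div_le_self n G)
  have hdvd : ∀ t : ℕ, n ∣ k * t → d ∣ t := by
    intro t ht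
    have h1 : G * d = n := Nat.mul_div_cancel' (Nat.gcd_dvd_right k n)
    have h2 : G * (k / G) = k := Nat.mul_div_cancel' (Nat.gcd_dvd_left k n)
    have h3 : G * d ∣ G * ((k / G) * t) := by
      rw [h1, ← mul_assoc, h2]; exact ht
    have h4 : d ∣ (k / G) * t := (Nat.mul_dvd_mul_iff_left hGpos).1 h3
    have hcop : Nat.Coprime d (k / G) := (Nat.coprime_div_gcd_div_gcd hGpos).symm
    exact hcop.dvd_of_dvd_mul_left h4
  have hA1 : n ∣ k * g.natDegree := claimA n k hn hk a ha0 han q hq hq1 hq2 hq3 g h hgh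
  have hA2 : n ∣ k * h.natDegree := claimA n k hn hk a ha0 han q hq hq1 hq2 hq3 h g
    (by rw [hgh, mul_comm])
  have hd1 : d ≤ g.natDegree := Nat.le_of_dvd (by omega) (hdvd _ hA1)
  have hd2 : d ≤ h.natDegree := Nat.le_of_dvd (by omega) (hdvd _ hA2)
  -- p-side : valuation of a n is 1
  have hvan : padicValInt p (a n) = 1 := by
    have h1 : 1 ≤ padicValInt p (a n) := by
      have := (pow_dvd_iff_le_val hp han (t := 1)).1 (by simpa using hp2 n hjn le_rfl)
      omega
    have h2 : ¬ (2 ≤ padicValInt p (a n)) := fun hc =>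
      hp3 ((pow_dvd_iff_le_val hp han).2 hc)
    omega
  set f := (∑ i ∈ range (n+1), C (a i) * X ^ i) with hf
  have hfc : ∀ i, f.coeff i = if i ≤ n then a i else 0 := fcoeff n a
  have hfn : f.natDegree = n := fdeg n a han
  have hfne : f ≠ 0 := fun h0 => han (by simpa [h0, Nat.le_refl] using (hfc n).symm)
  have hgne : g ≠ 0 := fun h0 => hfne (by rw [hgh, h0, zero_mul])
  have hhne : h ≠ 0 := fun h0 => hfne (by rw [hgh, h0, mul_zero])
  have hlead : g.coeff g.natDegree * h.coeff h.natDegree = a n := by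
    have : (g * h).leadingCoeff = g.leadingCoeff * h.leadingCoeff := leadingCoeff_mul g h
    rw [← hgh] at this
    rw [leadingCoeff, leadingCoeff, leadingCoeff, hfn, hfc n, if_pos le_rfl] at this
    exact this.symm
  have hgr : g.coeff g.natDegree ≠ 0 := fun h0 => han (by rw [← hlead, h0, zero_mul])
  have hhs : h.coeff h.natDegree ≠ 0 := fun h0 => han (by rw [← hlead, h0, mul_zero])
  have hsum : padicValInt p (g.coeff g.natDegree) + padicValInt p (h.coeff h.natDegree) = 1 := by
    rw [← hvan, ← hlead, padicValInt.mul hgr hhs]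
  rcases Nat.eq_zero_or_pos (padicValInt p (h.coeff h.natDegree)) with h0 | hpos
  · have := claimB n j hjn a ha0 han p hp hp1 hp2 g h hgh h0
    omega
  · have h0 : padicValInt p (g.coeff g.natDegree) = 0 := by omega
    have := claimB n j hjn a ha0 han p hp hp1 hp2 h g (by rw [mul_comm h g, ← hgh, hf]) h0
    omega

theorem corollary_1_14 (n : ℕ) (hn : 1 ≤ n) (a : ℕ → ℤ)
    (ha0 : a 0 ≠ 0) (han : a n ≠ 0)
    (p q : ℕ) (hp : p.Prime) (hq : q.Prime) (hpq : p ≠ q)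
    (k : ℕ) (hk : 0 < k)
    (j : ℕ) (hj : j < n / Nat.gcd k n)
    (hp1 : ∀ i ≤ j, ¬ (p : ℤ) ∣ a i)
    (hp2 : ∀ i, j < i → i ≤ n → (p : ℤ) ∣ a i)
    (hp3 : ¬ (p : ℤ)^2 ∣ a n)
    (hq1 : ¬ (q : ℤ) ∣ a 0)
    (hq2 : ∀ i, 0 < i → i ≤ n → (q : ℤ)^k ∣ a i)
    (hq3 : ¬ (q : ℤ)^(k+1) ∣ a n) :
    Irreducible ((∑ i ∈ range (n+1), C (a i) * X ^ i).map (Int.castRingHom ℚ)) := by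
  classical
  set f := (∑ i ∈ range (n+1), C (a i) * X ^ i) with hf
  have hfc : ∀ i, f.coeff i = if i ≤ n then a i else 0 := fcoeff n a
  have hfn : f.natDegree = n := fdeg n a han
  have hfne : f ≠ 0 := fun h0 => han (by simpa [h0, Nat.le_refl] using (hfc n).symm)
  have hcont : f.content ≠ 0 := fun h0 => hfne (content_eq_zero_iff.1 h0)
  have hpp : f.primPart ≠ 0 := fun h0 => hfne (by
    conv_lhs => rw [f.eq_C_content_mul_primPart]
    rw [h0, mul_zero])
  have hppdeg : f.primPart.natDegree = n := by rw [f.natDegree_primPart, hfn]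
  have hirr : Irreducible f.primPart := by
    constructor
    · intro hu
      have := natDegree_eq_zero_of_isUnit hu
      omega
    · intro g h' heq
      by_contra hcon
      push_neg at hcon
      obtain ⟨hgu, hhu⟩ := hcon
      have hgne : g ≠ 0 := fun h0 => hpp (by rw [heq, h0, zero_mul])
      have hhne : h' ≠ 0 := fun h0 => hpp (by rw [heq, h0, mul_zero])
      have hcmul : g.content * h'.content = 1 := by
        rw [← content_mul, ← heq, content_primPart]
      have hdegpos : ∀ (u v : ℤ[X]), f.primPart = u * v → ¬ IsUnit u → 1 ≤ u.natDegree := by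
        intro u v huv huu
        by_contra hdeg
        have hdeg0 : u.natDegree = 0 := by omega
        have hcu : u.content * v.content = 1 := by
          rw [← content_mul, ← huv, content_primPart]
        have hcuu : IsUnit u.content := IsUnit.of_mul_eq_one _ hcu
        have hCu : u = C (u.coeff 0) := eq_C_of_natDegree_eq_zero hdeg0
        have hcC : u.content = normalize (u.coeff 0) := by rw [hCu, content_C]; simp
        have : IsUnit (u.coeff 0) := by
          have := (normalize_associated (u.coeff 0)).isUnit (hcC ▸ hcuu)
          exact this
        exact huu (hCu ▸ (isUnit_C.2 this))
      have hgdeg : 1 ≤ g.natDegree := hdegpos g h' heq hgu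
      have hhdeg : 1 ≤ h'.natDegree := hdegpos h' g (by rw [heq, mul_comm]) hhu
      have hfact : f = (C f.content * g) * h' := by
        conv_lhs => rw [f.eq_C_content_mul_primPart]
        rw [heq, mul_assoc]
      exact key n hn a ha0 han p q hp hq k hk j hj hp1 hp2 hp3 hq1 hq2 hq3
        (C f.content * g) h' (by rw [← hf]; exact hfact)
        (by rw [natDegree_C_mul hcont]; exact hgdeg) hhdeg
  have hirrQ : Irreducible (f.primPart.map (Int.castRingHom ℚ)) :=
    (Polynomial.IsPrimitive.Int.irreducible_iff_irreducible_map_cast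
      f.isPrimitive_primPart).1 hirr
  have hu : IsUnit (C ((f.content : ℚ))) :=
    Polynomial.isUnit_C.2 (isUnit_iff_ne_zero.2 (by exact_mod_cast hcont))
  have hmapeq : (f.map (Int.castRingHom ℚ)) =
      (f.primPart.map (Int.castRingHom ℚ)) * C ((f.content : ℚ)) := by
    conv_lhs => rw [f.eq_C_content_mul_primPart]
    rw [Polynomial.map_mul, Polynomial.map_C, mul_comm]
    norm_num
  have hassoc : Associated (f.primPart.map (Int.castRingHom ℚ)) (f.map (Int.castRingHom ℚ)) :=
    ⟨hu.unit, by rw [IsUnit.unit_spec]; exact hmapeq.symm⟩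
  exact hassoc.irreducible hirrQ
end

section
/- Let f(X) = a_0 + a_1 X + ... + a_n X^n ∈ Z[X] with a_0 a_n ≠ 0. Suppose there exist two distinct indices j_1, j_2 ∈ {1, ..., n-1} with j_1 + j_2 ≠ n, and two distinct primes p and q, such that: (i) p divides a_i for all i ≠ j_1, p does not divide a_{j_1}, p^2 does not divide a_0, p^2 does not divide a_n; (ii) q divides a_i for all i ≠ j_2, q does not divide a_{j_2}, q^2 does not divide a_0, q^2 does not divide a_n. Then f is irreducible over Q. -/
open Polynomial Finset

private lemma assoc_X_pow_facts {K : Type*} [Field K] (g : K[X]) (s : ℕ)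
    (h : Associated g (X ^ s)) : g.natDegree = s ∧ (g.coeff 0 ≠ 0 ↔ s = 0) := by
  obtain ⟨u, hu⟩ := h
  obtain ⟨c, hc, hcu⟩ := Polynomial.isUnit_iff.mp u.isUnit
  have hc0 : c ≠ 0 := hc.ne_zero
  rw [← hcu] at hu
  have hg : g = C c⁻¹ * X ^ s := by
    calc g = g * C c * C c⁻¹ := by
              rw [mul_assoc, ← C_mul, mul_inv_cancel₀ hc0, C_1, mul_one]
      _ = C c⁻¹ * X ^ s := by rw [hu, mul_comm]
  constructor
  · rw [hg, natDegree_C_mul (inv_ne_zero hc0), natDegree_X_pow]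
  · rw [hg]
    simp only [coeff_C_mul, coeff_X_pow]
    rcases eq_or_ne s 0 with rfl | hs
    · simp [hc0]
    · simp [hs, Ne.symm hs]

private lemma key_s9 (f g h : ℤ[X]) (n j : ℕ) (hn2 : 2 ≤ n) (hfn : f.natDegree = n)
    (hj : 1 ≤ j) (hjn : j ≤ n - 1) (hfgh : f = g * h)
    (p : ℕ) (pp : p.Prime)
    (h1 : ∀ i ≤ n, i ≠ j → (p : ℤ) ∣ f.coeff i)
    (h2 : ¬ (p : ℤ) ∣ f.coeff j)
    (h3 : ¬ (p : ℤ)^2 ∣ f.coeff 0) (h4 : ¬ (p : ℤ)^2 ∣ f.coeff n) :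
    g.natDegree = 0 ∨ g.natDegree = j ∨ g.natDegree = n - j ∨ g.natDegree = n := by
  haveI := Fact.mk pp
  set φ := Int.castRingHom (ZMod p) with hφ
  have hjltn : j < n := by omega
  have hfj : f.coeff j ≠ 0 := fun e => h2 (e ▸ dvd_zero _)
  have hf0 : f ≠ 0 := fun e => hfj (by simp [e])
  have hg0 : g ≠ 0 := fun e => hf0 (by simp [hfgh, e])
  have hh0 : h ≠ 0 := fun e => hf0 (by simp [hfgh, e])
  have hdeg : g.natDegree + h.natDegree = n := by
    rw [hfgh, natDegree_mul hg0 hh0] at hfn; exact hfn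
  have haj : ((f.coeff j : ZMod p)) ≠ 0 := by
    rwa [Ne, ZMod.intCast_zmod_eq_zero_iff_dvd]
  have hmap : f.map φ = C ((f.coeff j : ZMod p)) * X ^ j := by
    ext i
    simp only [coeff_map, coeff_C_mul, coeff_X_pow, mul_ite, mul_one, mul_zero]
    rcases eq_or_ne i j with rfl | hij
    · simp [hφ]
    · rw [if_neg hij]
      rcases le_or_gt i n with hin | hin
      · rw [hφ, eq_intCast, ZMod.intCast_zmod_eq_zero_iff_dvd]; exact h1 i hin hij
      · rw [coeff_eq_zero_of_natDegree_lt (hfn ▸ hin)]; simp [hφ]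
  have hCunit : IsUnit (C ((f.coeff j : ZMod p))) := isUnit_C.2 haj.isUnit
  have hmul : g.map φ * h.map φ = C ((f.coeff j : ZMod p)) * X ^ j := by
    rw [← Polynomial.map_mul, ← hfgh, hmap]
  have hgdvd : g.map φ ∣ X ^ j := by
    have : g.map φ ∣ C ((f.coeff j : ZMod p)) * X ^ j := ⟨h.map φ, hmul.symm⟩
    exact (hCunit.dvd_mul_left).mp this
  have hhdvd : h.map φ ∣ X ^ j := by
    have : h.map φ ∣ C ((f.coeff j : ZMod p)) * X ^ j :=
      ⟨g.map φ, by rw [← hmul]; ring⟩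
    exact (hCunit.dvd_mul_left).mp this
  obtain ⟨s, hsj, hgs⟩ := (dvd_prime_pow prime_X j).mp hgdvd
  obtain ⟨t, htj, hht⟩ := (dvd_prime_pow prime_X j).mp hhdvd
  obtain ⟨hgdeg, hgc0⟩ := assoc_X_pow_facts _ _ hgs
  obtain ⟨hhdeg, hhc0⟩ := assoc_X_pow_facts _ _ hht
  have hgm0 : g.map φ ≠ 0 := fun e => by
    rw [e, zero_mul] at hmul
    exact (mul_ne_zero (fun e' => haj (by simpa using congrArg (fun r => Polynomial.coeff r 0) e'))
      (pow_ne_zero j X_ne_zero)) hmul.symm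
  have hhm0 : h.map φ ≠ 0 := fun e => by
    rw [e, mul_zero] at hmul
    exact (mul_ne_zero (fun e' => haj (by simpa using congrArg (fun r => Polynomial.coeff r 0) e'))
      (pow_ne_zero j X_ne_zero)) hmul.symm
  have hst : s + t = j := by
    have := natDegree_mul hgm0 hhm0
    rw [hmul, natDegree_C_mul haj, natDegree_X_pow, hgdeg, hhdeg] at this
    omega
  -- constant coefficients
  have hc0 : f.coeff 0 = g.coeff 0 * h.coeff 0 := by rw [hfgh, mul_coeff_zero]
  have hpc0 : (p : ℤ) ∣ f.coeff 0 := h1 0 (by omega) (by omega)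
  -- leading coefficients
  have hlc : f.coeff n = g.leadingCoeff * h.leadingCoeff := by
    rw [← hfn, ← leadingCoeff, hfgh, leadingCoeff_mul]
  by_cases hpg : (p : ℤ) ∣ g.leadingCoeff
  · -- then p does not divide leading coeff of h
    have hph : ¬ (p : ℤ) ∣ h.leadingCoeff := fun hph => h4 (by
      rw [hlc, pow_two]; exact mul_dvd_mul hpg hph)
    have hhfull : (h.map φ).natDegree = h.natDegree := by
      refine le_antisymm natDegree_map_le (le_natDegree_of_ne_zero ?_)
      rw [coeff_map]
      rwa [Ne, hφ, eq_intCast, ZMod.intCast_zmod_eq_zero_iff_dvd]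
    have ht' : t = h.natDegree := by rw [← hhdeg, hhfull]
    by_cases hpg0 : (p : ℤ) ∣ g.coeff 0
    · have hph0 : ¬ (p : ℤ) ∣ h.coeff 0 := fun hd => h3 (by
        rw [hc0, pow_two]; exact mul_dvd_mul hpg0 hd)
      have : (h.map φ).coeff 0 ≠ 0 := by
        rw [coeff_map]
        rwa [Ne, hφ, eq_intCast, ZMod.intCast_zmod_eq_zero_iff_dvd]
      have ht0 : t = 0 := hhc0.mp this
      right; right; right; omega
    · have : (g.map φ).coeff 0 ≠ 0 := by
        rw [coeff_map]
        rwa [Ne, hφ, eq_intCast, ZMod.intCast_zmod_eq_zero_iff_dvd]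
      have hs0 : s = 0 := hgc0.mp this
      right; right; left; omega
  · have hgfull : (g.map φ).natDegree = g.natDegree := by
      refine le_antisymm natDegree_map_le (le_natDegree_of_ne_zero ?_)
      rw [coeff_map]
      rwa [Ne, hφ, eq_intCast, ZMod.intCast_zmod_eq_zero_iff_dvd]
    have hs' : s = g.natDegree := by rw [← hgdeg, hgfull]
    by_cases hph0 : (p : ℤ) ∣ h.coeff 0
    · have hpg0 : ¬ (p : ℤ) ∣ g.coeff 0 := fun hd => h3 (by
        rw [hc0, pow_two]; exact mul_dvd_mul hd hph0)
      have : (g.map φ).coeff 0 ≠ 0 := by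
        rw [coeff_map]
        rwa [Ne, hφ, eq_intCast, ZMod.intCast_zmod_eq_zero_iff_dvd]
      have hs0 : s = 0 := hgc0.mp this
      left; omega
    · have : (h.map φ).coeff 0 ≠ 0 := by
        rw [coeff_map]
        rwa [Ne, hφ, eq_intCast, ZMod.intCast_zmod_eq_zero_iff_dvd]
      have ht0 : t = 0 := hhc0.mp this
      right; left; omega

private lemma deg_cases {d n j₁ j₂ : ℕ} (hn2 : 2 ≤ n)
    (hj1 : 1 ≤ j₁) (hj1n : j₁ ≤ n - 1) (hj2 : 1 ≤ j₂) (hj2n : j₂ ≤ n - 1)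
    (hjne : j₁ ≠ j₂) (hjsum : j₁ + j₂ ≠ n)
    (k1 : d = 0 ∨ d = j₁ ∨ d = n - j₁ ∨ d = n)
    (k2 : d = 0 ∨ d = j₂ ∨ d = n - j₂ ∨ d = n) : d = 0 ∨ d = n := by omega

private lemma add_eq_cancel {a b n : ℕ} (h : a + b = n) (h' : a = n) : b = 0 := by omega

set_option maxHeartbeats 400000 in
theorem corollary_1_26 (n : ℕ) (hn : 1 ≤ n) (a : ℕ → ℤ)
    (ha0 : a 0 ≠ 0) (han : a n ≠ 0)
    (j₁ j₂ : ℕ) (hj1 : 1 ≤ j₁) (hj1n : j₁ ≤ n - 1) (hj2 : 1 ≤ j₂) (hj2n : j₂ ≤ n - 1)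
    (hjne : j₁ ≠ j₂) (hjsum : j₁ + j₂ ≠ n)
    (p q : ℕ) (hp : p.Prime) (hq : q.Prime) (hpq : p ≠ q)
    (hp1 : ∀ i ≤ n, i ≠ j₁ → (p : ℤ) ∣ a i)
    (hp2 : ¬ (p : ℤ) ∣ a j₁)
    (hp3 : ¬ (p : ℤ)^2 ∣ a 0) (hp4 : ¬ (p : ℤ)^2 ∣ a n)
    (hq1 : ∀ i ≤ n, i ≠ j₂ → (q : ℤ) ∣ a i)
    (hq2 : ¬ (q : ℤ) ∣ a j₂)
    (hq3 : ¬ (q : ℤ)^2 ∣ a 0) (hq4 : ¬ (q : ℤ)^2 ∣ a n) :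
    Irreducible ((∑ i ∈ range (n+1), C (a i) * X ^ i).map (Int.castRingHom ℚ)) := by
  have hn2 : 2 ≤ n := by omega
  set F : ℤ[X] := ∑ i ∈ range (n+1), C (a i) * X ^ i with hFdef
  have hco : ∀ k, F.coeff k = if k ≤ n then a k else 0 := by
    intro k
    rw [hFdef, finset_sum_coeff]
    simp only [coeff_C_mul, coeff_X_pow, mul_ite, mul_one, mul_zero]
    rw [Finset.sum_ite_eq (range (n+1)) k a]
    simp [Nat.lt_succ_iff]
  have hFn : F.natDegree = n := by
    refine le_antisymm ?_ (le_natDegree_of_ne_zero (by rw [hco]; simpa))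
    rw [natDegree_le_iff_coeff_eq_zero]
    intro i hi
    rw [hco, if_neg (by omega)]
  -- primitive part
  set c : ℤ := F.content with hc
  set P : ℤ[X] := F.primPart with hP
  have hF : F = C c * P := F.eq_C_content_mul_primPart
  have hcoP : ∀ k, F.coeff k = c * P.coeff k := by
    intro k
    conv_lhs => rw [hF]
    rw [coeff_C_mul]
  have hPn : P.natDegree = n := by rw [hP, natDegree_primPart, hFn]
  have hPprim : P.IsPrimitive := F.isPrimitive_primPart
  clear_value c P F
  clear hc hP hFdef
  have hpc : ¬ (p : ℤ) ∣ c := fun hd => hp2 (by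
    have := hcoP j₁
    rw [hco, if_pos (le_trans hj1n (Nat.sub_le n 1))] at this
    exact this ▸ hd.mul_right _)
  have hqc : ¬ (q : ℤ) ∣ c := fun hd => hq2 (by
    have := hcoP j₂
    rw [hco, if_pos (le_trans hj2n (Nat.sub_le n 1))] at this
    exact this ▸ hd.mul_right _)
  -- transfer coefficient conditions to P
  have hcoeffP : ∀ k ≤ n, c * P.coeff k = a k := by
    intro k hk
    have h1 := hcoP k
    rw [hco, if_pos hk] at h1
    exact h1.symm
  have hP1 : ∀ i ≤ n, i ≠ j₁ → (p : ℤ) ∣ P.coeff i := by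
    intro i hi hij
    have := hcoeffP i hi
    exact ((Int.Prime.dvd_mul' (by exact_mod_cast hp) (this ▸ hp1 i hi hij)).resolve_left hpc)
  have hP2 : ¬ (p : ℤ) ∣ P.coeff j₁ := fun hd => hp2 (by
    rw [← (hcoeffP j₁ (le_trans hj1n (Nat.sub_le n 1)))]; exact hd.mul_left _)
  have hP3 : ¬ (p : ℤ)^2 ∣ P.coeff 0 := fun hd => hp3 (by
    rw [← (hcoeffP 0 (Nat.zero_le n))]; exact hd.mul_left _)
  have hP4 : ¬ (p : ℤ)^2 ∣ P.coeff n := fun hd => hp4 (by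
    rw [← (hcoeffP n le_rfl)]; exact hd.mul_left _)
  have hQ1 : ∀ i ≤ n, i ≠ j₂ → (q : ℤ) ∣ P.coeff i := by
    intro i hi hij
    have := hcoeffP i hi
    exact ((Int.Prime.dvd_mul' (by exact_mod_cast hq) (this ▸ hq1 i hi hij)).resolve_left hqc)
  have hQ2 : ¬ (q : ℤ) ∣ P.coeff j₂ := fun hd => hq2 (by
    rw [← (hcoeffP j₂ (le_trans hj2n (Nat.sub_le n 1)))]; exact hd.mul_left _)
  have hQ3 : ¬ (q : ℤ)^2 ∣ P.coeff 0 := fun hd => hq3 (by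
    rw [← (hcoeffP 0 (Nat.zero_le n))]; exact hd.mul_left _)
  have hQ4 : ¬ (q : ℤ)^2 ∣ P.coeff n := fun hd => hq4 (by
    rw [← (hcoeffP n le_rfl)]; exact hd.mul_left _)
  -- P is irreducible over ℤ
  have hPj1 : P.coeff j₁ ≠ 0 := fun e => hP2 (e ▸ dvd_zero _)
  have hPne : P ≠ 0 := fun e => hPj1 (by simp [e])
  have hPirr : Irreducible P := by
    constructor
    · intro hu
      have h0 := natDegree_eq_zero_of_isUnit hu
      rw [hPn] at h0
      subst h0
      exact absurd hn2 (by decide)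
    · intro g h hgh
      have hg0 : g ≠ 0 := fun e => hPne (by simp [hgh, e])
      have hh0 : h ≠ 0 := fun e => hPne (by simp [hgh, e])
      have hdeg : g.natDegree + h.natDegree = n := by
        have := natDegree_mul hg0 hh0
        rw [← hgh, hPn] at this; exact this.symm
      have k1 := key_s9 P g h n j₁ hn2 hPn hj1 hj1n hgh p hp hP1 hP2 hP3 hP4
      have k2 := key_s9 P g h n j₂ hn2 hPn hj2 hj2n hgh q hq hQ1 hQ2 hQ3 hQ4
      have hdg : g.natDegree = 0 ∨ g.natDegree = n :=
        deg_cases hn2 hj1 hj1n hj2 hj2n hjne hjsum k1 k2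
      rcases hdg with hdg | hdg
      · left
        have hgC : g = C (g.coeff 0) := eq_C_of_natDegree_eq_zero hdg
        have : IsUnit (g.coeff 0) := hPprim (g.coeff 0) ⟨h, by rw [hgh, ← hgC]⟩
        rw [hgC]; exact isUnit_C.2 this
      · right
        have hhd : h.natDegree = 0 := add_eq_cancel hdeg hdg
        have hhC : h = C (h.coeff 0) := eq_C_of_natDegree_eq_zero hhd
        have : IsUnit (h.coeff 0) := hPprim (h.coeff 0) ⟨g, by rw [hgh, ← hhC, mul_comm]⟩
        rw [hhC]; exact isUnit_C.2 this
  -- transfer to ℚ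
  have hPmap : Irreducible (P.map (Int.castRingHom ℚ)) :=
    (Polynomial.IsPrimitive.Int.irreducible_iff_irreducible_map_cast hPprim).mp hPirr
  have hcne : c ≠ 0 := fun e => hpc (e ▸ dvd_zero _)
  have hcq : IsUnit (C ((c : ℚ))) := isUnit_C.2 (by exact_mod_cast isUnit_iff_ne_zero.2 (by exact_mod_cast hcne))
  have hassoc : Associated (P.map (Int.castRingHom ℚ)) (F.map (Int.castRingHom ℚ)) := by
    refine ⟨hcq.unit, ?_⟩
    rw [IsUnit.unit_spec]
    conv_rhs => rw [hF]
    rw [Polynomial.map_mul, map_C]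
    simp [mul_comm]
  exact hassoc.irreducible hPmap
end

section
/- Let f(X) = a_0 + a_1 X + ... + a_n X^n ∈ Z[X]. Suppose there exist three distinct indices j_1, j_2, j_3 ∈ {1, ..., n-1} and three distinct primes p, q, r such that for each pair (s, j) ∈ {(p, j_1), (q, j_2), (r, j_3)}: s divides a_i for all i ≠ j, s does not divide a_j, s^2 does not divide a_0, and s^2 does not divide a_n. Then f is irreducible over Q. -/
open Polynomial Finset

lemma key_lemma (p : ℕ) (hp : p.Prime) (f g h : Polynomial ℤ) (n j : ℕ)
    (hfn : f.natDegree = n) (hj0 : 0 < j) (hjn : j < n) (hfgh : f = g * h)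
    (h1 : ∀ i, i ≠ j → (p:ℤ) ∣ f.coeff i) (h2 : ¬(p:ℤ) ∣ f.coeff j)
    (h3 : ¬(p:ℤ)^2 ∣ f.coeff 0) (h4 : ¬(p:ℤ)^2 ∣ f.coeff n) :
    g.natDegree = 0 ∨ g.natDegree = j ∨ g.natDegree = n - j ∨ g.natDegree = n := by
  haveI : Fact p.Prime := ⟨hp⟩
  set φ := Int.castRingHom (ZMod p) with hφ
  have hcoeff : ∀ (u : Polynomial ℤ) (i : ℕ), (u.map φ).coeff i = 0 ↔ (p:ℤ) ∣ u.coeff i := by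
    intro u i
    rw [coeff_map]
    exact ZMod.intCast_zmod_eq_zero_iff_dvd _ _
  have hfj : (f.map φ).coeff j ≠ 0 := fun hc => h2 ((hcoeff f j).mp hc)
  have hf0 : f.map φ ≠ 0 := fun hc => hfj (by simp [hc])
  have hg0 : g.map φ ≠ 0 := by
    intro hc
    apply hf0
    rw [hfgh, Polynomial.map_mul, hc, zero_mul]
  have hh0 : h.map φ ≠ 0 := by
    intro hc
    apply hf0
    rw [hfgh, Polynomial.map_mul, hc, mul_zero]
  have hg0' : g ≠ 0 := fun hc => hg0 (by simp [hc])
  have hh0' : h ≠ 0 := fun hc => hh0 (by simp [hc])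
  have hdf : (f.map φ).natDegree = j := by
    apply le_antisymm
    · rw [natDegree_le_iff_coeff_eq_zero]
      intro m hm
      exact (hcoeff f m).mpr (h1 m (by omega))
    · exact le_natDegree_of_ne_zero hfj
  have htf : (f.map φ).natTrailingDegree = j := by
    apply le_antisymm
    · exact natTrailingDegree_le_of_ne_zero hfj
    · exact le_natTrailingDegree hf0 (fun m hm => (hcoeff f m).mpr (h1 m (by omega)))
  have hmap : f.map φ = g.map φ * h.map φ := by rw [hfgh, Polynomial.map_mul]
  have hds : (g.map φ).natDegree + (h.map φ).natDegree = j := by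
    rw [← hdf, hmap, natDegree_mul hg0 hh0]
  have hts : (g.map φ).natTrailingDegree + (h.map φ).natTrailingDegree = j := by
    rw [← htf, hmap, natTrailingDegree_mul hg0 hh0]
  have htg : (g.map φ).natTrailingDegree ≤ (g.map φ).natDegree := natTrailingDegree_le_natDegree _
  have hth : (h.map φ).natTrailingDegree ≤ (h.map φ).natDegree := natTrailingDegree_le_natDegree _
  have hdgh : g.natDegree + h.natDegree = n := by
    rw [← hfn, hfgh, natDegree_mul hg0' hh0']
  have hsg : (g.map φ).natDegree ≤ g.natDegree := natDegree_map_le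
  have hsh : (h.map φ).natDegree ≤ h.natDegree := natDegree_map_le
  have hA : (g.map φ).natTrailingDegree = 0 ∨ (h.map φ).natTrailingDegree = 0 := by
    by_contra hc
    push_neg at hc
    apply h3
    have h01 : (p:ℤ) ∣ g.coeff 0 :=
      (hcoeff g 0).mp (coeff_eq_zero_of_lt_natTrailingDegree (by omega))
    have h02 : (p:ℤ) ∣ h.coeff 0 :=
      (hcoeff h 0).mp (coeff_eq_zero_of_lt_natTrailingDegree (by omega))
    rw [hfgh, mul_coeff_zero, sq]
    exact mul_dvd_mul h01 h02
  have hB : ¬((g.map φ).natDegree < g.natDegree ∧ (h.map φ).natDegree < h.natDegree) := by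
    rintro ⟨hb1, hb2⟩
    apply h4
    have h01 : (p:ℤ) ∣ g.coeff g.natDegree :=
      (hcoeff g _).mp (coeff_eq_zero_of_natDegree_lt hb1)
    have h02 : (p:ℤ) ∣ h.coeff h.natDegree :=
      (hcoeff h _).mp (coeff_eq_zero_of_natDegree_lt hb2)
    rw [hfgh, ← hdgh, coeff_mul_degree_add_degree, sq]
    exact mul_dvd_mul h01 h02
  omega

set_option maxHeartbeats 1000000 in
theorem corollary_1_27 (n : ℕ) (hn : 1 ≤ n) (a : ℕ → ℤ)
    (j₁ j₂ j₃ : ℕ)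
    (hj1 : 1 ≤ j₁) (hj1n : j₁ ≤ n - 1) (hj2 : 1 ≤ j₂) (hj2n : j₂ ≤ n - 1)
    (hj3 : 1 ≤ j₃) (hj3n : j₃ ≤ n - 1)
    (h12 : j₁ ≠ j₂) (h13 : j₁ ≠ j₃) (h23 : j₂ ≠ j₃)
    (p q r : ℕ) (hp : p.Prime) (hq : q.Prime) (hr : r.Prime)
    (hpq : p ≠ q) (hpr : p ≠ r) (hqr : q ≠ r)
    (hp1 : ∀ i ≤ n, i ≠ j₁ → (p : ℤ) ∣ a i) (hp2 : ¬ (p : ℤ) ∣ a j₁)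
    (hp3 : ¬ (p : ℤ)^2 ∣ a 0) (hp4 : ¬ (p : ℤ)^2 ∣ a n)
    (hq1 : ∀ i ≤ n, i ≠ j₂ → (q : ℤ) ∣ a i) (hq2 : ¬ (q : ℤ) ∣ a j₂)
    (hq3 : ¬ (q : ℤ)^2 ∣ a 0) (hq4 : ¬ (q : ℤ)^2 ∣ a n)
    (hr1 : ∀ i ≤ n, i ≠ j₃ → (r : ℤ) ∣ a i) (hr2 : ¬ (r : ℤ) ∣ a j₃)
    (hr3 : ¬ (r : ℤ)^2 ∣ a 0) (hr4 : ¬ (r : ℤ)^2 ∣ a n) :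
    Irreducible ((∑ i ∈ range (n+1), C (a i) * X ^ i).map (Int.castRingHom ℚ)) := by
  obtain ⟨hn2, hj1n', hj2n', hj3n'⟩ : 2 ≤ n ∧ j₁ < n ∧ j₂ < n ∧ j₃ < n := by
    clear * - hn hj1 hj1n hj2 hj2n hj3 hj3n
    omega
  set F : Polynomial ℤ := ∑ i ∈ range (n+1), C (a i) * X ^ i with hF
  have hcF : ∀ k, F.coeff k = if k ≤ n then a k else 0 := by
    intro k
    rw [hF, finset_sum_coeff]
    simp only [coeff_C_mul, coeff_X_pow, mul_ite, mul_one, mul_zero]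
    rw [Finset.sum_ite_eq (range (n+1)) k a]
    simp [Nat.lt_succ_iff]
  have han : a n ≠ 0 := fun hc => hp4 (hc ▸ dvd_zero _)
  have hdF : F.natDegree = n := by
    apply le_antisymm
    · rw [natDegree_le_iff_coeff_eq_zero]
      intro m hm
      rw [hcF]
      rw [if_neg (Nat.not_le.mpr hm)]
    · apply le_natDegree_of_ne_zero
      rw [hcF]
      simpa using han
  have hF0 : F ≠ 0 := fun hc => han (by have h' := hcF n; rw [hc] at h'; simpa using h'.symm)
  set c : ℤ := F.content with hc
  set G : Polynomial ℤ := F.primPart with hG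
  have hFdecomp : F = C c * G := F.eq_C_content_mul_primPart
  have hcG : ∀ k, F.coeff k = c * G.coeff k := by
    intro k
    conv_lhs => rw [hFdecomp]
    rw [coeff_C_mul]
  have hdG : G.natDegree = n := by rw [hG, natDegree_primPart, hdF]
  have hG0 : G ≠ 0 := F.primPart_ne_zero
  -- transfer divisibility conditions to G
  have transfer : ∀ (s : ℕ) (j : ℕ), s.Prime → j < n →
      (∀ i ≤ n, i ≠ j → (s : ℤ) ∣ a i) → (¬ (s:ℤ) ∣ a j) → (¬ (s:ℤ)^2 ∣ a 0) → (¬ (s:ℤ)^2 ∣ a n) →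
      (∀ i, i ≠ j → (s:ℤ) ∣ G.coeff i) ∧ (¬ (s:ℤ) ∣ G.coeff j) ∧
      (¬ (s:ℤ)^2 ∣ G.coeff 0) ∧ (¬ (s:ℤ)^2 ∣ G.coeff n) := by
    intro s j hs hjn h1 h2 h3 h4
    have hsc : ¬ (s:ℤ) ∣ c := by
      intro hdvd
      exact h2 (by rw [show a j = F.coeff j by rw [hcF]; simp [hjn.le], hcG]; exact hdvd.mul_right _)
    have hprime : Prime (s : ℤ) := Nat.prime_iff_prime_int.mp hs
    refine ⟨?_, ?_, ?_, ?_⟩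
    · intro i hij
      by_cases hin : i ≤ n
      · have := h1 i hin hij
        rw [show a i = F.coeff i by rw [hcF]; simp [hin], hcG] at this
        exact (hprime.dvd_or_dvd this).resolve_left hsc
      · rw [coeff_eq_zero_of_natDegree_lt (by rw [hdG]; exact Nat.not_le.mp hin)]
        exact dvd_zero _
    · intro hdvd
      exact h2 (by rw [show a j = F.coeff j by rw [hcF]; simp [hjn.le], hcG]; exact hdvd.mul_left _)
    · intro hdvd
      exact h3 (by rw [show a 0 = F.coeff 0 by rw [hcF]; simp, hcG]; exact hdvd.mul_left _)
    · intro hdvd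
      exact h4 (by rw [show a n = F.coeff n by rw [hcF]; simp, hcG]; exact hdvd.mul_left _)
  -- irreducibility of G over ℤ
  have hGirr : Irreducible G := by
    constructor
    · intro hu
      have h0 := natDegree_eq_zero_of_isUnit hu
      rw [hdG] at h0
      clear * - h0 hn2
      omega
    · intro g h hgh
      have hg0 : g ≠ 0 := fun hc => hG0 (by rw [hgh, hc, zero_mul])
      have hh0 : h ≠ 0 := fun hc => hG0 (by rw [hgh, hc, mul_zero])
      have hsum : g.natDegree + h.natDegree = n := by
        rw [← hdG, hgh, natDegree_mul hg0 hh0]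
      obtain ⟨hp1', hp2', hp3', hp4'⟩ := transfer p j₁ hp hj1n' hp1 hp2 hp3 hp4
      obtain ⟨hq1', hq2', hq3', hq4'⟩ := transfer q j₂ hq hj2n' hq1 hq2 hq3 hq4
      obtain ⟨hr1', hr2', hr3', hr4'⟩ := transfer r j₃ hr hj3n' hr1 hr2 hr3 hr4
      have K1 := key_lemma p hp G g h n j₁ hdG (by clear * - hj1; omega) hj1n' hgh hp1' hp2' hp3' hp4'
      have K2 := key_lemma q hq G g h n j₂ hdG (by clear * - hj2; omega) hj2n' hgh hq1' hq2' hq3' hq4'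
      have K3 := key_lemma r hr G g h n j₃ hdG (by clear * - hj3; omega) hj3n' hgh hr1' hr2' hr3' hr4'
      have hdeg : g.natDegree = 0 ∨ h.natDegree = 0 := by
        clear * - K1 K2 K3 hsum hn2 hj1n' hj2n' hj3n' h12 h13 h23 hj1 hj2 hj3
        omega
      rcases hdeg with hd | hd
      · left
        obtain ⟨b, rfl⟩ := natDegree_eq_zero.mp hd
        exact isUnit_C.mpr (F.isPrimitive_primPart b ⟨h, hgh⟩)
      · right
        obtain ⟨b, rfl⟩ := natDegree_eq_zero.mp hd
        refine isUnit_C.mpr (F.isPrimitive_primPart b ⟨g, ?_⟩)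
        rw [mul_comm]
        exact hgh
    -- irreducibility over ℚ
  have hGQ : Irreducible (G.map (Int.castRingHom ℚ)) := by
    exact (Polynomial.IsPrimitive.Int.irreducible_iff_irreducible_map_cast
      (F.isPrimitive_primPart)).mp hGirr
  have hc0 : c ≠ 0 := fun hcc => hF0 (content_eq_zero_iff.mp hcc)
  have hmapF : F.map (Int.castRingHom ℚ) = G.map (Int.castRingHom ℚ) * C ((c : ℤ) : ℚ) := by
    conv_lhs => rw [hFdecomp]
    rw [Polynomial.map_mul, map_C, mul_comm]
    rfl
  have hassoc : Associated (G.map (Int.castRingHom ℚ)) (F.map (Int.castRingHom ℚ)) := by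
    refine ⟨(isUnit_C.mpr (IsUnit.mk0 ((c : ℤ) : ℚ) (Int.cast_ne_zero.mpr hc0))).unit, ?_⟩
    rw [IsUnit.unit_spec, ← hmapF]
  exact hassoc.irreducible hGQ
end

section
/- Let f(X) = a_0 + a_1 X + ... + a_n X^n ∈ Z[X] with a_0 a_n ≠ 0. Suppose there exists an index j ∈ {2, ..., n-2} and two distinct primes p and q such that: (i) p divides a_i for all i > 1, p does not divide a_1, and p^2 does not divide a_n; (ii) q divides a_i for all i ≠ j, q does not divide a_j, q^2 does not divide a_0, and q^2 does not divide a_n. Then f is irreducible over Q. -/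
open Polynomial Finset

/-- mod-q step: a degree-one factor is impossible. -/
lemma qstep_c130 {n j q : ℕ} (hq : q.Prime) {f g h : Polynomial ℤ}
    (hf : f = g * h) (hdeg : f.natDegree = n)
    (hj1 : 2 ≤ j) (hj2 : j + 2 ≤ n)
    (hq1 : ∀ i ≤ n, i ≠ j → (q : ℤ) ∣ f.coeff i)
    (hq2 : ¬ (q : ℤ) ∣ f.coeff j)
    (hq3 : ¬ (q : ℤ)^2 ∣ f.coeff 0) (hq4 : ¬ (q : ℤ)^2 ∣ f.coeff n)
    (hh1 : h.natDegree = 1) : False := by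
  haveI : Fact q.Prime := ⟨hq⟩
  set φ := Int.castRingHom (ZMod q) with hφ
  have hdvd : ∀ z : ℤ, (q : ℤ) ∣ z ↔ φ z = 0 := fun z => by
    rw [hφ]; exact (ZMod.intCast_zmod_eq_zero_iff_dvd z q).symm
  have hf0 : f ≠ 0 := fun h0 => hq2 (by rw [h0, coeff_zero]; exact dvd_zero _)
  have hg0 : g ≠ 0 := fun h0 => hf0 (by rw [hf, h0, zero_mul])
  have hh0 : h ≠ 0 := fun h0 => hf0 (by rw [hf, h0, mul_zero])
  have hsum : g.natDegree + h.natDegree = n := by rw [← hdeg, hf, natDegree_mul hg0 hh0]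
  have hgdeg : g.natDegree = n - 1 := by omega
  -- the image of f mod q is a monomial
  have hmap : f.map φ = C (φ (f.coeff j)) * X ^ j := by
    ext k
    simp only [coeff_map, coeff_C_mul, coeff_X_pow, mul_ite, mul_one, mul_zero]
    split_ifs with hk
    · rw [hk]
    · rcases le_or_gt k n with h1 | h1
      · exact (hdvd _).1 (hq1 k h1 hk)
      · rw [coeff_eq_zero_of_natDegree_lt (by omega : f.natDegree < k), map_zero]
  have hbarj : φ (f.coeff j) ≠ 0 := fun h0 => hq2 ((hdvd _).2 h0)
  -- map h divides X ^ j
  have hdvdC : h.map φ ∣ C (φ (f.coeff j)) * X ^ j := by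
    rw [← hmap, hf, Polynomial.map_mul]; exact Dvd.intro_left _ rfl
  have hdvdX : h.map φ ∣ X ^ j := by
    rcases hdvdC with ⟨w, hw⟩
    refine ⟨C (φ (f.coeff j))⁻¹ * w, ?_⟩
    have : C (φ (f.coeff j))⁻¹ * (C (φ (f.coeff j)) * X ^ j) = X ^ j := by
      rw [← mul_assoc, ← C_mul, inv_mul_cancel₀ hbarj, C_1, one_mul]
    rw [← this, hw]; ring
  obtain ⟨s, hs, hassoc⟩ := (dvd_prime_pow prime_X j).mp hdvdX
  obtain ⟨u, hu⟩ := hassoc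
  obtain ⟨c, hcu, hcC⟩ := Polynomial.isUnit_iff.mp u.isUnit
  have hc0 : c ≠ 0 := hcu.ne_zero
  have hkey : h.map φ * C c = X ^ s := by rw [hcC, hu]
  -- s ≤ 1
  have hmh0 : h.map φ ≠ 0 := by
    intro h0
    have : (X : (ZMod q)[X]) ^ s = 0 := by rw [← hkey, h0, zero_mul]
    exact pow_ne_zero s X_ne_zero this
  have hs1 : s ≤ 1 := by
    have h1 : ((X : (ZMod q)[X]) ^ s).natDegree = s := natDegree_X_pow s
    have h2 : (h.map φ * C c).natDegree ≤ 1 := by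
      refine le_trans (natDegree_mul_le) ?_
      have := natDegree_map_le (f := φ) (p := h)
      simp only [natDegree_C]
      omega
    rw [hkey, h1] at h2; exact h2
  have hcoeffkey : ∀ k, φ (h.coeff k) * c = ((X : (ZMod q)[X]) ^ s).coeff k := by
    intro k
    rw [← hkey, coeff_mul_C, coeff_map]
  interval_cases s
  · -- s = 0 : h is a unit mod q, so q divides leading coeffs of both g and h
    have hh1' : (q : ℤ) ∣ h.coeff 1 := by
      have := hcoeffkey 1
      rw [pow_zero, coeff_one] at this
      simp only [one_ne_zero, if_false] at this
      rcases mul_eq_zero.mp this with h' | h'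
      · exact (hdvd _).2 h'
      · exact absurd h' hc0
    have hgd : (q : ℤ) ∣ g.coeff (n - 1) := by
      -- map g = map f * C c
      have hmg : g.map φ = f.map φ * C c := by
        have : f.map φ = g.map φ * h.map φ := by rw [hf, Polynomial.map_mul]
        rw [this, mul_assoc, hkey, pow_zero, mul_one]
      have : φ (g.coeff (n - 1)) = 0 := by
        have h1 : (g.map φ).coeff (n-1) = (f.map φ * C c).coeff (n-1) := by rw [hmg]
        rw [coeff_map, coeff_mul_C, hmap, coeff_C_mul, coeff_X_pow] at h1
        have : n - 1 ≠ j := by omega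
        simp only [this, if_false, mul_zero, zero_mul] at h1
        exact h1
      exact (hdvd _).2 this
    apply hq4
    have hfn : f.coeff n = g.coeff (n - 1) * h.coeff 1 := by
      have h1 : f.coeff n = f.leadingCoeff := by rw [leadingCoeff, hdeg]
      rw [h1, hf, leadingCoeff_mul, leadingCoeff, leadingCoeff, hgdeg, hh1]
    rw [hfn, sq]
    exact mul_dvd_mul hgd hh1'
  · -- s = 1 : q ∣ h.coeff 0, q ∤ h.coeff 1
    have hh0' : (q : ℤ) ∣ h.coeff 0 := by
      have := hcoeffkey 0
      rw [pow_one, coeff_X_zero] at this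
      rcases mul_eq_zero.mp this with h' | h'
      · exact (hdvd _).2 h'
      · exact absurd h' hc0
    have hh1' : ¬ (q : ℤ) ∣ h.coeff 1 := by
      intro hd
      have := hcoeffkey 1
      rw [pow_one, coeff_X_one, (hdvd _).1 hd, zero_mul] at this
      exact one_ne_zero this.symm
    have hf1 : f.coeff 1 = g.coeff 0 * h.coeff 1 + g.coeff 1 * h.coeff 0 := by
      rw [hf, coeff_mul, Finset.Nat.sum_antidiagonal_eq_sum_range_succ_mk]
      simp [Finset.sum_range_succ]
    have hqf1 : (q : ℤ) ∣ f.coeff 1 := hq1 1 (by omega) (by omega)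
    have hg0' : (q : ℤ) ∣ g.coeff 0 := by
      have h1 : (q : ℤ) ∣ g.coeff 0 * h.coeff 1 := by
        have : g.coeff 0 * h.coeff 1 = f.coeff 1 - g.coeff 1 * h.coeff 0 := by
          rw [hf1]; ring
        rw [this]
        exact dvd_sub hqf1 (Dvd.dvd.mul_left hh0' _)
      rcases (Nat.prime_iff_prime_int.mp hq).dvd_mul.mp h1 with h' | h'
      · exact h'
      · exact absurd h' hh1'
    apply hq3
    rw [hf, mul_coeff_zero, sq]
    exact mul_dvd_mul hg0' hh0'

/-- mod-p step: one factor has degree at most 1. -/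
lemma pstep_c130 {n p : ℕ} (hp : p.Prime) {f g h : Polynomial ℤ}
    (hf : f = g * h) (hdeg : f.natDegree = n) (hn : 2 ≤ n)
    (hp1 : ∀ i, 1 < i → i ≤ n → (p : ℤ) ∣ f.coeff i)
    (hp2 : ¬ (p : ℤ) ∣ f.coeff 1)
    (hp3 : ¬ (p : ℤ)^2 ∣ f.coeff n) :
    g.natDegree ≤ 1 ∨ h.natDegree ≤ 1 := by
  haveI : Fact p.Prime := ⟨hp⟩
  set φ := Int.castRingHom (ZMod p) with hφ
  have hdvd : ∀ z : ℤ, (p : ℤ) ∣ z ↔ φ z = 0 := fun z => by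
    rw [hφ]; exact (ZMod.intCast_zmod_eq_zero_iff_dvd z p).symm
  have hf0 : f ≠ 0 := fun h0 => hp2 (by rw [h0, coeff_zero]; exact dvd_zero _)
  have hg0 : g ≠ 0 := fun h0 => hf0 (by rw [hf, h0, zero_mul])
  have hh0 : h ≠ 0 := fun h0 => hf0 (by rw [hf, h0, mul_zero])
  have hmf0 : f.map φ ≠ 0 := by
    intro h0
    apply hp2
    apply (hdvd _).2
    rw [← coeff_map, h0, coeff_zero]
  have hmfdeg : (f.map φ).natDegree ≤ 1 := by
    rw [natDegree_le_iff_coeff_eq_zero]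
    intro N hN
    rcases le_or_gt N n with h1 | h1
    · rw [coeff_map]
      exact (hdvd _).1 (hp1 N hN h1)
    · rw [coeff_map, coeff_eq_zero_of_natDegree_lt (by omega : f.natDegree < N), map_zero]
  -- p divides exactly one of the leading coefficients
  have hfn : f.coeff n = g.leadingCoeff * h.leadingCoeff := by
    have h1 : f.coeff n = f.leadingCoeff := by rw [leadingCoeff, hdeg]
    rw [h1, hf, leadingCoeff_mul]
  have hpd : (p : ℤ) ∣ g.leadingCoeff * h.leadingCoeff := by
    rw [← hfn]; exact hp1 n (by omega) le_rfl
  rcases (Nat.prime_iff_prime_int.mp hp).dvd_mul.mp hpd with hd | hd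
  · -- p ∣ lead g, so p ∤ lead h
    right
    have hnd : ¬ (p : ℤ) ∣ h.leadingCoeff := by
      intro hd2
      apply hp3
      rw [hfn, sq]
      exact mul_dvd_mul hd hd2
    have h1 : (h.map φ).natDegree = h.natDegree :=
      natDegree_map_of_leadingCoeff_ne_zero φ (fun h0 => hnd ((hdvd _).2 h0))
    have h2 : h.map φ ∣ f.map φ := by
      rw [hf, Polynomial.map_mul]; exact Dvd.intro_left _ rfl
    have := natDegree_le_of_dvd h2 hmf0
    omega
  · left
    have hnd : ¬ (p : ℤ) ∣ g.leadingCoeff := by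
      intro hd2
      apply hp3
      rw [hfn, sq]
      exact mul_dvd_mul hd2 hd
    have h1 : (g.map φ).natDegree = g.natDegree :=
      natDegree_map_of_leadingCoeff_ne_zero φ (fun h0 => hnd ((hdvd _).2 h0))
    have h2 : g.map φ ∣ f.map φ := by
      rw [hf, Polynomial.map_mul]; exact Dvd.intro _ rfl
    have := natDegree_le_of_dvd h2 hmf0
    omega

lemma key_c130 {n j p q : ℕ} (hn : 4 ≤ n) {f : Polynomial ℤ} (hdeg : f.natDegree = n)
    (hprim : f.IsPrimitive)
    (hj1 : 2 ≤ j) (hj2 : j + 2 ≤ n)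
    (hp : p.Prime) (hq : q.Prime)
    (hp1 : ∀ i, 1 < i → i ≤ n → (p : ℤ) ∣ f.coeff i)
    (hp2 : ¬ (p : ℤ) ∣ f.coeff 1)
    (hp3 : ¬ (p : ℤ)^2 ∣ f.coeff n)
    (hq1 : ∀ i ≤ n, i ≠ j → (q : ℤ) ∣ f.coeff i)
    (hq2 : ¬ (q : ℤ) ∣ f.coeff j)
    (hq3 : ¬ (q : ℤ)^2 ∣ f.coeff 0) (hq4 : ¬ (q : ℤ)^2 ∣ f.coeff n) :
    Irreducible f := by
  constructor
  · intro hu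
    have := natDegree_eq_zero_of_isUnit hu
    omega
  · intro g h hf
    have unit_of_le : ∀ g' h' : Polynomial ℤ, f = g' * h' → h'.natDegree ≤ 1 → IsUnit h' := by
      intro g' h' hf' hle
      rcases Nat.lt_or_ge h'.natDegree 1 with h1 | h1
      · have h0 : h'.natDegree = 0 := by omega
        have hC : h' = C (h'.coeff 0) := eq_C_of_natDegree_eq_zero h0
        have : IsUnit (h'.coeff 0) := by
          apply hprim
          exact ⟨g', by rw [hf', hC, mul_comm]; rw [coeff_C_zero]⟩
        rw [hC]
        exact isUnit_C.mpr this
      · have h1' : h'.natDegree = 1 := le_antisymm hle h1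
        exact absurd h1' (fun h1' =>
          qstep_c130 hq hf' hdeg hj1 hj2 hq1 hq2 hq3 hq4 h1')
    rcases pstep_c130 hp hf hdeg (by omega) hp1 hp2 hp3 with hg | hh
    · left
      exact unit_of_le h g (by rw [hf, mul_comm]) hg
    · right
      exact unit_of_le g h hf hh

theorem corollary_1_30 (n : ℕ) (hn : 4 ≤ n) (a : ℕ → ℤ)
    (ha0 : a 0 ≠ 0) (han : a n ≠ 0)
    (j : ℕ) (hj1 : 2 ≤ j) (hj2 : j ≤ n - 2)
    (p q : ℕ) (hp : p.Prime) (hq : q.Prime) (hpq : p ≠ q)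
    (hp1 : ∀ i, 1 < i → i ≤ n → (p : ℤ) ∣ a i)
    (hp2 : ¬ (p : ℤ) ∣ a 1)
    (hp3 : ¬ (p : ℤ)^2 ∣ a n)
    (hq1 : ∀ i ≤ n, i ≠ j → (q : ℤ) ∣ a i)
    (hq2 : ¬ (q : ℤ) ∣ a j)
    (hq3 : ¬ (q : ℤ)^2 ∣ a 0) (hq4 : ¬ (q : ℤ)^2 ∣ a n) :
    Irreducible ((∑ i ∈ range (n+1), C (a i) * X ^ i).map (Int.castRingHom ℚ)) := by
  set f : Polynomial ℤ := ∑ i ∈ range (n+1), C (a i) * X ^ i with hfdef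
  have hj2' : j + 2 ≤ n := by omega
  have hcoeff : ∀ k, f.coeff k = if k ≤ n then a k else 0 := by
    intro k
    rw [hfdef, finset_sum_coeff]
    simp only [coeff_C_mul, coeff_X_pow, mul_ite, mul_one, mul_zero]
    rw [Finset.sum_ite_eq]
    simp [Nat.lt_succ_iff]
  have hdeg : f.natDegree = n := by
    apply le_antisymm
    · rw [natDegree_le_iff_coeff_eq_zero]
      intro N hN
      rw [hcoeff]
      simp [Nat.not_le.mpr hN]
    · apply le_natDegree_of_ne_zero
      rw [hcoeff]
      simpa using han
  have hf0 : f ≠ 0 := by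
    intro h0
    apply han
    have := hcoeff n
    rw [h0, coeff_zero] at this
    simpa using this.symm
  set c : ℤ := f.content with hc
  set f₀ : Polynomial ℤ := f.primPart with hf₀
  have hcf : f = C c * f₀ := f.eq_C_content_mul_primPart
  have hc0 : c ≠ 0 := fun h0 => hf0 (content_eq_zero_iff.mp h0)
  have hb : ∀ k ≤ n, a k = c * f₀.coeff k := by
    intro k hk
    have h1 := hcoeff k
    rw [if_pos hk] at h1
    rw [← h1, hcf, coeff_C_mul]
  have hpZ := Nat.prime_iff_prime_int.mp hp
  have hqZ := Nat.prime_iff_prime_int.mp hq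
  have hpc : ¬ (p : ℤ) ∣ c := fun hd => hp2 (by rw [hb 1 (by omega)]; exact hd.mul_right _)
  have hqc : ¬ (q : ℤ) ∣ c := fun hd => hq2 (by rw [hb j (by omega)]; exact hd.mul_right _)
  have hdeg₀ : f₀.natDegree = n := by rw [hf₀, natDegree_primPart, hdeg]
  have irr₀ : Irreducible f₀ := by
    apply key_c130 hn hdeg₀ (isPrimitive_primPart f) hj1 hj2' hp hq
    · intro i h1 h2
      have := hp1 i h1 h2
      rw [hb i h2] at this
      exact (hpZ.dvd_mul.mp this).resolve_left hpc
    · intro hd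
      exact hp2 (by rw [hb 1 (by omega)]; exact hd.mul_left _)
    · intro hd
      exact hp3 (by rw [hb n le_rfl]; exact hd.mul_left _)
    · intro i h1 h2
      have := hq1 i h1 h2
      rw [hb i h1] at this
      exact (hqZ.dvd_mul.mp this).resolve_left hqc
    · intro hd
      exact hq2 (by rw [hb j (by omega)]; exact hd.mul_left _)
    · intro hd
      exact hq3 (by rw [hb 0 (by omega)]; exact hd.mul_left _)
    · intro hd
      exact hq4 (by rw [hb n le_rfl]; exact hd.mul_left _)
  have irrQ : Irreducible (f₀.map (Int.castRingHom ℚ)) := by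
    have := ((isPrimitive_primPart f).irreducible_iff_irreducible_map_fraction_map
      (K := ℚ)).mp irr₀
    rwa [algebraMap_int_eq] at this
  have hunit : IsUnit (C ((c : ℚ))) := isUnit_C.mpr
    (isUnit_iff_ne_zero.mpr (by exact_mod_cast hc0))
  have hassoc : Associated (f₀.map (Int.castRingHom ℚ)) (f.map (Int.castRingHom ℚ)) := by
    have hmap : f.map (Int.castRingHom ℚ) = f₀.map (Int.castRingHom ℚ) * C ((c : ℚ)) := by
      rw [hcf, Polynomial.map_mul, map_C, mul_comm]
      norm_num
    rw [hmap]
    exact (associated_mul_unit_left _ _ hunit).symm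
  exact hassoc.irreducible irrQ
end

section
/- Let f(X) = a_0 + a_1 X + ... + a_n X^n ∈ Z[X] with a_0 a_n ≠ 0. Suppose there exist two distinct primes p and q and two indices j_1, j_2 with j_1 < min(j_2, n − j_2), such that: (i) p does not divide a_i for all i ≤ j_1, p divides a_i for all i > j_1, and p^2 does not divide a_n; (ii) q divides a_i for all i ≠ j_2, q does not divide a_{j_2}, q^2 does not divide a_0, and q^2 does not divide a_n. Then f is irreducible over Q. -/
open Polynomial Finset

private lemma aux_q {qn j₂ : ℕ} (hq : qn.Prime) (g h : Polynomial ℤ)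
    (hd : 1 ≤ g.natDegree)
    (hlcg : ¬ (qn : ℤ) ∣ g.leadingCoeff)
    (h00 : ¬ (qn : ℤ)^2 ∣ (g * h).coeff 0)
    (c' : ZMod qn) (hc' : c' ≠ 0)
    (hmap : (g * h).map (Int.castRingHom (ZMod qn)) = C c' * X ^ j₂) :
    g.natDegree = j₂ := by
  haveI : Fact qn.Prime := ⟨hq⟩
  set G := g.map (Int.castRingHom (ZMod qn)) with hGdef
  set H := h.map (Int.castRingHom (ZMod qn)) with hHdef
  have hGH : G * H = C c' * X ^ j₂ := by rw [hGdef, hHdef, ← Polynomial.map_mul, hmap]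
  have hlc' : ((g.leadingCoeff : ℤ) : ZMod qn) ≠ 0 := by
    simpa [ZMod.intCast_zmod_eq_zero_iff_dvd] using hlcg
  have degG : G.natDegree = g.natDegree :=
    natDegree_map_of_leadingCoeff_ne_zero _ hlc'
  have hG0 : G ≠ 0 := by
    intro h0
    apply hlc'
    have : G.coeff g.natDegree = 0 := by rw [h0, coeff_zero]
    rwa [coeff_map] at this
  have hRHS0 : C c' * X ^ j₂ ≠ 0 :=
    mul_ne_zero (by simpa using hc') (pow_ne_zero _ X_ne_zero)
  have hH0 : H ≠ 0 := by
    intro h0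
    rw [h0, mul_zero] at hGH
    exact hRHS0 hGH.symm
  have hdegs : G.natDegree + H.natDegree = j₂ := by
    rw [← natDegree_mul hG0 hH0, hGH, natDegree_C_mul_X_pow j₂ c' hc']
  have htdegs : G.natTrailingDegree + H.natTrailingDegree = j₂ := by
    rw [← natTrailingDegree_mul hG0 hH0, hGH, C_mul_X_pow_eq_monomial,
      natTrailingDegree_monomial hc']
  have h1 := natTrailingDegree_le_natDegree G
  have h2 := natTrailingDegree_le_natDegree H
  have htG : G.natTrailingDegree = G.natDegree := by omega
  have htH : H.natTrailingDegree = H.natDegree := by omega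
  -- coeff 0 of G is zero
  have hcoeffG0 : G.coeff 0 = 0 :=
    coeff_eq_zero_of_lt_natTrailingDegree (by omega)
  have hqg0 : (qn : ℤ) ∣ g.coeff 0 := by
    rw [hGdef, coeff_map] at hcoeffG0
    exact (ZMod.intCast_zmod_eq_zero_iff_dvd _ _).mp hcoeffG0
  have hqh0 : ¬ (qn : ℤ) ∣ h.coeff 0 := by
    intro hdvd
    apply h00
    rw [mul_coeff_zero, sq]
    exact mul_dvd_mul hqg0 hdvd
  have hH00 : H.coeff 0 ≠ 0 := by
    rw [hHdef, coeff_map]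
    simpa [ZMod.intCast_zmod_eq_zero_iff_dvd] using hqh0
  have htH0 : H.natTrailingDegree = 0 := by
    by_contra h'
    exact hH00 (coeff_eq_zero_of_lt_natTrailingDegree (Nat.pos_of_ne_zero h'))
  omega

theorem corollary_1_34 (n : ℕ) (hn : 1 ≤ n) (a : ℕ → ℤ)
    (ha0 : a 0 ≠ 0) (han : a n ≠ 0)
    (p q : ℕ) (hp : p.Prime) (hq : q.Prime) (hpq : p ≠ q)
    (j₁ j₂ : ℕ) (hj : j₁ < min j₂ (n - j₂))
    (hp1 : ∀ i ≤ j₁, ¬ (p : ℤ) ∣ a i)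
    (hp2 : ∀ i, j₁ < i → i ≤ n → (p : ℤ) ∣ a i)
    (hp3 : ¬ (p : ℤ)^2 ∣ a n)
    (hq1 : ∀ i ≤ n, i ≠ j₂ → (q : ℤ) ∣ a i)
    (hq2 : ¬ (q : ℤ) ∣ a j₂)
    (hq3 : ¬ (q : ℤ)^2 ∣ a 0) (hq4 : ¬ (q : ℤ)^2 ∣ a n) :
    Irreducible ((∑ i ∈ range (n+1), C (a i) * X ^ i).map (Int.castRingHom ℚ)) := by
  haveI : Fact p.Prime := ⟨hp⟩
  haveI : Fact q.Prime := ⟨hq⟩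
  have hpZ : Prime (p : ℤ) := Nat.prime_iff_prime_int.mp hp
  have hqZ : Prime (q : ℤ) := Nat.prime_iff_prime_int.mp hq
  rw [lt_min_iff] at hj
  obtain ⟨hjA, hjB⟩ := hj
  have hj₂n : j₂ < n := by omega
  have hj₂1 : 1 ≤ j₂ := by omega
  set f : Polynomial ℤ := ∑ i ∈ range (n+1), C (a i) * X ^ i with hfdef
  have hcoeff : ∀ k, f.coeff k = if k ≤ n then a k else 0 := by
    intro k
    rw [hfdef, finset_sum_coeff]
    simp only [coeff_C_mul, coeff_X_pow, mul_ite, mul_one, mul_zero]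
    rw [Finset.sum_ite_eq (range (n+1)) k a]
    simp [Nat.lt_succ_iff]
  have hdegf : f.natDegree = n := by
    apply le_antisymm
    · rw [natDegree_le_iff_coeff_eq_zero]
      intro m hm
      rw [hcoeff]
      simp [Nat.not_le.mpr hm]
    · exact le_natDegree_of_ne_zero (by rw [hcoeff]; simpa using han)
  set c : ℤ := f.content with hcdef
  set P : Polynomial ℤ := f.primPart with hPdef
  have hfc : f = C c * P := f.eq_C_content_mul_primPart
  have hab : ∀ i ≤ n, a i = c * P.coeff i := by
    intro i hi
    have := hcoeff i
    rw [if_pos hi] at this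
    rw [← this, hfc, coeff_C_mul]
  have hpc : ¬ (p : ℤ) ∣ c := by
    intro hdvd
    exact hp1 0 (Nat.zero_le _) (by rw [hab 0 (Nat.zero_le _)]; exact hdvd.mul_right _)
  have hqc : ¬ (q : ℤ) ∣ c := by
    intro hdvd
    exact hq2 (by rw [hab j₂ hj₂n.le]; exact hdvd.mul_right _)
  have hpb : ∀ i ≤ n, ((p : ℤ) ∣ P.coeff i ↔ (p : ℤ) ∣ a i) := by
    intro i hi
    rw [hab i hi]
    constructor
    · exact fun hd => hd.mul_left _
    · intro hd
      rcases hpZ.dvd_mul.mp hd with h | h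
      · exact absurd h hpc
      · exact h
  have hqb : ∀ i ≤ n, ((q : ℤ) ∣ P.coeff i ↔ (q : ℤ) ∣ a i) := by
    intro i hi
    rw [hab i hi]
    constructor
    · exact fun hd => hd.mul_left _
    · intro hd
      rcases hqZ.dvd_mul.mp hd with h | h
      · exact absurd h hqc
      · exact h
  have hpbn : ¬ (p : ℤ)^2 ∣ P.coeff n := fun hd => hp3 (by rw [hab n le_rfl]; exact hd.mul_left _)
  have hqbn : ¬ (q : ℤ)^2 ∣ P.coeff n := fun hd => hq4 (by rw [hab n le_rfl]; exact hd.mul_left _)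
  have hqb0 : ¬ (q : ℤ)^2 ∣ P.coeff 0 := fun hd => hq3 (by rw [hab 0 (Nat.zero_le _)]; exact hd.mul_left _)
  have hbn : P.coeff n ≠ 0 := fun h0 => han (by rw [hab n le_rfl, h0, mul_zero])
  have hdegP : P.natDegree = n := by rw [hPdef, natDegree_primPart, hdegf]
  have hf0 : f ≠ 0 := by
    intro h0
    apply han
    have := hcoeff n
    rw [h0, coeff_zero, if_pos le_rfl] at this
    exact this.symm
  have hcne : (c : ℚ) ≠ 0 :=
    Int.cast_ne_zero.mpr (fun h0 => hf0 (content_eq_zero_iff.mp h0))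
  -- reduce to irreducibility of P over ℤ
  suffices hP : Irreducible P by
    have hPmap := (Polynomial.IsPrimitive.Int.irreducible_iff_irreducible_map_cast (f.isPrimitive_primPart)).mp hP
    have hu : IsUnit (C (c : ℚ)) := isUnit_C.mpr (isUnit_iff_ne_zero.mpr hcne)
    have hassoc : Associated (P.map (Int.castRingHom ℚ)) (f.map (Int.castRingHom ℚ)) := by
      refine ⟨hu.unit, ?_⟩
      rw [IsUnit.unit_spec, hfc, Polynomial.map_mul, map_C, mul_comm]
      norm_num
    exact hassoc.irreducible hPmap
  constructor
  · intro hu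
    have := natDegree_eq_zero_of_isUnit hu
    omega
  · intro g h hgh
    by_contra hcon
    push_neg at hcon
    obtain ⟨hgu, hhu⟩ := hcon
    have hg0 : g ≠ 0 := by
      intro h0; apply hbn; rw [hgh, h0, zero_mul, coeff_zero]
    have hh0 : h ≠ 0 := by
      intro h0; apply hbn; rw [hgh, h0, mul_zero, coeff_zero]
    have hsumdeg : g.natDegree + h.natDegree = n := by
      rw [← natDegree_mul hg0 hh0, ← hgh, hdegP]
    have hprim := f.isPrimitive_primPart
    -- each factor has positive degree
    have hdg : 1 ≤ g.natDegree := by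
      rcases Nat.eq_zero_or_pos g.natDegree with h0 | h0
      · exfalso
        apply hgu
        have hgC := eq_C_of_natDegree_eq_zero h0
        have : IsUnit (g.coeff 0) := hprim (g.coeff 0) ⟨h, by rw [← hgC, ← hPdef]; exact hgh⟩
        rw [hgC]; exact isUnit_C.mpr this
      · exact h0
    have hdh : 1 ≤ h.natDegree := by
      rcases Nat.eq_zero_or_pos h.natDegree with h0 | h0
      · exfalso
        apply hhu
        have hhC := eq_C_of_natDegree_eq_zero h0
        have : IsUnit (h.coeff 0) := hprim (h.coeff 0) ⟨g, by rw [← hhC, ← hPdef, hgh, mul_comm]⟩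
        rw [hhC]; exact isUnit_C.mpr this
      · exact h0
    -- leading coefficients
    have hlcmul : g.leadingCoeff * h.leadingCoeff = P.coeff n := by
      rw [← leadingCoeff_mul, ← hgh, leadingCoeff, hdegP]
    -- q-adic analysis: map to ZMod q
    have hFq : P.map (Int.castRingHom (ZMod q)) = C ((P.coeff j₂ : ZMod q)) * X ^ j₂ := by
      ext k
      rw [coeff_map]
      simp only [coeff_C_mul, coeff_X_pow, mul_ite, mul_one, mul_zero,
        Int.coe_castRingHom]
      by_cases hk : k = j₂
      · subst hk; simp
      · rw [if_neg hk]
        by_cases hkn : k ≤ n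
        · rw [ZMod.intCast_zmod_eq_zero_iff_dvd]
          exact (hqb k hkn).mpr (hq1 k hkn hk)
        · rw [coeff_eq_zero_of_natDegree_lt (by omega), Int.cast_zero]
    have hc' : ((P.coeff j₂ : ℤ) : ZMod q) ≠ 0 := by
      rw [Ne, ZMod.intCast_zmod_eq_zero_iff_dvd]
      exact fun hd => hq2 ((hqb j₂ hj₂n.le).mp hd)
    have hqlcn : (q : ℤ) ∣ P.coeff n := (hqb n le_rfl).mpr (hq1 n le_rfl (by omega))
    -- determine degree of g via q
    have hdgval : g.natDegree = j₂ ∨ g.natDegree = n - j₂ := by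
      by_cases hql : (q : ℤ) ∣ g.leadingCoeff
      · right
        have hqlh : ¬ (q : ℤ) ∣ h.leadingCoeff := by
          intro hd
          apply hqbn
          rw [← hlcmul, sq]
          exact mul_dvd_mul hql hd
        have := aux_q hq h g hdh hqlh
          (by rw [mul_comm h g, ← hgh]; exact hqb0)
          (P.coeff j₂ : ZMod q) hc' (by rw [mul_comm h g, ← hgh]; exact hFq)
        omega
      · left
        exact aux_q hq g h hdg hql (by rw [← hgh]; exact hqb0) (P.coeff j₂ : ZMod q) hc'
          (by rw [← hgh]; exact hFq)
    -- p-adic analysis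
    have hFpdeg : (P.map (Int.castRingHom (ZMod p))).natDegree = j₁ := by
      apply le_antisymm
      · rw [natDegree_le_iff_coeff_eq_zero]
        intro m hm
        rw [coeff_map, Int.coe_castRingHom]
        by_cases hmn : m ≤ n
        · rw [ZMod.intCast_zmod_eq_zero_iff_dvd]
          exact (hpb m hmn).mpr (hp2 m hm hmn)
        · rw [coeff_eq_zero_of_natDegree_lt (by omega)]
          simp
      · apply le_natDegree_of_ne_zero
        rw [coeff_map, Int.coe_castRingHom, Ne, ZMod.intCast_zmod_eq_zero_iff_dvd]
        exact fun hd => hp1 j₁ le_rfl ((hpb j₁ (by omega)).mp hd)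
    have hcoeffj₁ : ((P.coeff j₁ : ℤ) : ZMod p) ≠ 0 := by
      rw [Ne, ZMod.intCast_zmod_eq_zero_iff_dvd]
      exact fun hd => hp1 j₁ le_rfl ((hpb j₁ (by omega)).mp hd)
    have hFp0 : P.map (Int.castRingHom (ZMod p)) ≠ 0 := by
      intro h0
      apply hcoeffj₁
      have : (P.map (Int.castRingHom (ZMod p))).coeff j₁ = 0 := by rw [h0, coeff_zero]
      rwa [coeff_map, Int.coe_castRingHom] at this
    have hmulp : g.map (Int.castRingHom (ZMod p)) * h.map (Int.castRingHom (ZMod p))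
        = P.map (Int.castRingHom (ZMod p)) := by
      rw [← Polynomial.map_mul, ← hgh]
    have hgp0 : g.map (Int.castRingHom (ZMod p)) ≠ 0 := by
      intro h0; rw [h0, zero_mul] at hmulp; exact hFp0 hmulp.symm
    have hhp0 : h.map (Int.castRingHom (ZMod p)) ≠ 0 := by
      intro h0; rw [h0, mul_zero] at hmulp; exact hFp0 hmulp.symm
    have hsump : (g.map (Int.castRingHom (ZMod p))).natDegree
        + (h.map (Int.castRingHom (ZMod p))).natDegree = j₁ := by
      rw [← natDegree_mul hgp0 hhp0, hmulp, hFpdeg]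
    by_cases hplg : (p : ℤ) ∣ g.leadingCoeff
    · have hplh : ¬ (p : ℤ) ∣ h.leadingCoeff := by
        intro hd
        apply hpbn
        rw [← hlcmul, sq]
        exact mul_dvd_mul hplg hd
      have hdegh : (h.map (Int.castRingHom (ZMod p))).natDegree = h.natDegree := by
        apply natDegree_map_of_leadingCoeff_ne_zero
        rw [Int.coe_castRingHom, Ne, ZMod.intCast_zmod_eq_zero_iff_dvd]
        exact hplh
      omega
    · have hdegg : (g.map (Int.castRingHom (ZMod p))).natDegree = g.natDegree := by
        apply natDegree_map_of_leadingCoeff_ne_zero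
        rw [Int.coe_castRingHom, Ne, ZMod.intCast_zmod_eq_zero_iff_dvd]
        exact hplg
      omega
end
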